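/- arXiv:1204.1743 — 12 statements merged into one kernel-verified Lean document; each statement's English description precedes it below -/
import Mathlib

section
/- Let p be any prime number and let a, b ∈ ℚ_p be nonzero p-adic numbers. If the depressed cubic equation x³ + ax = b has a solution x with |x|_p = 1 (that is, a solution in the p-adic units ℤ_p^*), then one of the following three conditions holds: (i) |a|_p < |b|_p = 1; (ii) |b|_p < |a|_p = 1; (iii) |a|_p = |b|_p ≥ 1. -/
/-- `x0` is the first digit of the nonzero `p`-adic number `x`: the unique integer in
`{1, …, p-1}` congruent modulo `p` to the unit part `x* = x·|x|_p = x·p^{-v_p(x)}`. -/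
def isFirstDigit (p : ℕ) [Fact p.Prime] (x : ℚ_[p]) (x0 : ℤ) : Prop :=
  1 ≤ x0 ∧ x0 ≤ (p : ℤ) - 1 ∧ ‖x * (p : ℚ_[p]) ^ (-x.valuation) - (x0 : ℚ_[p])‖ < 1

theorem cubic_unit_solution_necessary (p : ℕ) [Fact p.Prime]
    (a b : ℚ_[p]) (ha : a ≠ 0) (hb : b ≠ 0)
    (x : ℚ_[p]) (hx : ‖x‖ = 1) (hsol : x ^ 3 + a * x = b) :
    (‖a‖ < ‖b‖ ∧ ‖b‖ = 1) ∨ (‖b‖ < ‖a‖ ∧ ‖a‖ = 1) ∨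
      (‖a‖ = ‖b‖ ∧ 1 ≤ ‖a‖) := by
  have hx3 : ‖x ^ 3‖ = 1 := by rw [norm_pow, hx, one_pow]
  have hax : ‖a * x‖ = ‖a‖ := by rw [norm_mul, hx, mul_one]
  rcases lt_trichotomy ‖a‖ 1 with h | h | h
  · -- |a| < 1 : |b| = 1
    left
    have hbn : ‖b‖ = 1 := by
      rw [← hsol]
      rw [Padic.add_eq_max_of_ne (by rw [hx3, hax]; exact h.ne')]
      rw [hx3, hax]; exact max_eq_left h.le
    exact ⟨hbn ▸ h, hbn⟩
  · -- |a| = 1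
    have hb1 : ‖b‖ ≤ 1 := by
      rw [← hsol]
      exact le_trans (Padic.nonarchimedean _ _) (by rw [hx3, hax, h]; simp)
    rcases lt_or_eq_of_le hb1 with h2 | h2
    · exact Or.inr (Or.inl ⟨h ▸ h2, h⟩)
    · exact Or.inr (Or.inr ⟨h.trans h2.symm, h.ge⟩)
  · -- |a| > 1 : |b| = |a|
    right; right
    have hbn : ‖b‖ = ‖a‖ := by
      rw [← hsol]
      rw [Padic.add_eq_max_of_ne (by rw [hx3, hax]; exact h.ne)]
      rw [hx3, hax]; exact max_eq_right h.le
    exact ⟨hbn.symm, h.le⟩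
end

section
/- Let p > 3 be a prime and let a, b ∈ ℚ_p be nonzero with |a|_p < |b|_p = 1. Then the equation x³ + ax = b has a solution x ∈ ℤ_p^* if and only if b_0^{(p−1)/gcd(3,p−1)} ≡ 1 (mod p), where b_0 is the first digit of b. -/
private lemma three_mul_div_gcd (p : ℕ) (hp : 3 < p) :
    3 * ((p - 1) / Nat.gcd 3 (p - 1)) = (p - 1) * (3 / Nat.gcd 3 (p - 1)) := by
  rw [← Nat.mul_div_assoc 3 (Nat.gcd_dvd_right 3 (p - 1)),
    ← Nat.mul_div_assoc (p - 1) (Nat.gcd_dvd_left 3 (p - 1)), Nat.mul_comm]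

private lemma pow_of_cube (p : ℕ) [Fact p.Prime] (hp : 3 < p) {u c : ZMod p}
    (hc : c ≠ 0) (h : c ^ 3 = u) : u ^ ((p - 1) / Nat.gcd 3 (p - 1)) = 1 := by
  rw [← h, ← pow_mul, three_mul_div_gcd p hp, pow_mul,
    ZMod.pow_card_sub_one_eq_one hc, one_pow]

private lemma cube_exists_of_pow (p : ℕ) [Fact p.Prime] (hp : 3 < p) {u : ZMod p}
    (hu : u ≠ 0) (h : u ^ ((p - 1) / Nat.gcd 3 (p - 1)) = 1) :
    ∃ c : ZMod p, c ^ 3 = u := by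
  have hcard : Fintype.card (ZMod p)ˣ = p - 1 := by
    rw [ZMod.card_units_eq_totient, Nat.totient_prime (Fact.out : p.Prime)]
  obtain ⟨g, hg⟩ := IsCyclic.exists_generator (α := (ZMod p)ˣ)
  have hog : orderOf g = p - 1 := by
    rw [orderOf_eq_card_of_forall_mem_zpowers hg, Nat.card_eq_fintype_card, hcard]
  set d := Nat.gcd 3 (p - 1) with hd
  set N := (p - 1) / d with hN
  have hdN : d * N = p - 1 := Nat.mul_div_cancel' (Nat.gcd_dvd_right 3 (p - 1))
  have hd0 : 0 < d := Nat.gcd_pos_of_pos_left _ (by norm_num)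
  have hN0 : (N : ℤ) ≠ 0 := by
    have : 0 < N :=
      Nat.div_pos (Nat.le_of_dvd (by omega) (Nat.gcd_dvd_right 3 (p - 1))) hd0
    exact_mod_cast this.ne'
  set U : (ZMod p)ˣ := Units.mk0 u hu with hU
  obtain ⟨k, hk'⟩ := hg U
  have hk : g ^ k = U := hk'
  have hUN : U ^ N = 1 := by
    ext
    push_cast [hU]
    exact h
  have hzpow : g ^ (k * (N : ℤ)) = 1 := by
    rw [zpow_mul, hk, zpow_natCast]
    exact hUN
  have hdvd : ((p - 1 : ℕ) : ℤ) ∣ k * N := by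
    rw [← hog]; exact orderOf_dvd_iff_zpow_eq_one.mpr hzpow
  obtain ⟨q, hq⟩ : (d : ℤ) ∣ k := by
    obtain ⟨q, hq⟩ := hdvd
    refine ⟨q, mul_right_cancel₀ hN0 ?_⟩
    rw [hq, ← hdN]
    push_cast
    ring
  set s := Nat.gcdA 3 (p - 1) with hs
  set t := Nat.gcdB 3 (p - 1) with ht
  have hbez : (d : ℤ) = 3 * s + (p - 1 : ℕ) * t := Nat.gcd_eq_gcd_ab 3 (p - 1)
  refine ⟨((g ^ (s * q) : (ZMod p)ˣ) : ZMod p), ?_⟩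
  have key : (g ^ (s * q)) ^ (3 : ℕ) = U := by
    rw [← zpow_natCast, ← zpow_mul]
    have h1 : g ^ (s * q * 3 - k) = 1 := by
      rw [← orderOf_dvd_iff_zpow_eq_one, hog]
      have : s * q * 3 - k = -(((p - 1 : ℕ) : ℤ) * (t * q)) := by
        rw [hq, hbez]; ring
      rw [this]
      exact (dvd_mul_right _ _).neg_right
    calc g ^ (s * q * 3) = g ^ (k + (s * q * 3 - k)) := by ring_nf
      _ = g ^ k * g ^ (s * q * 3 - k) := zpow_add g _ _
      _ = U := by rw [h1, hk, mul_one]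
  calc ((g ^ (s * q) : (ZMod p)ˣ) : ZMod p) ^ 3
      = (((g ^ (s * q)) ^ (3 : ℕ) : (ZMod p)ˣ) : ZMod p) := by push_cast; ring
    _ = u := by rw [key, hU, Units.val_mk0]

theorem cubic_unit_solvable_iff_of_lt (p : ℕ) [Fact p.Prime] (hp : 3 < p)
    (a b : ℚ_[p]) (ha : a ≠ 0) (hb : b ≠ 0)
    (hab : ‖a‖ < ‖b‖) (hb1 : ‖b‖ = 1)
    (b0 : ℤ) (hb0 : isFirstDigit p b b0) :
    (∃ x : ℚ_[p], ‖x‖ = 1 ∧ x ^ 3 + a * x = b) ↔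
      Int.ModEq (p : ℤ) (b0 ^ ((p - 1) / Nat.gcd 3 (p - 1))) 1 := by
  have hpP : p.Prime := Fact.out
  have ha1 : ‖a‖ < 1 := hb1 ▸ hab
  set A : ℤ_[p] := ⟨a, ha1.le⟩ with hA
  set B : ℤ_[p] := ⟨b, hb1.le⟩ with hB
  set N := (p - 1) / Nat.gcd 3 (p - 1) with hN
  -- valuation of b is 0
  have hval : b.valuation = 0 := by
    have h1 := Padic.norm_eq_zpow_neg_valuation hb
    rw [hb1] at h1
    have hp1 : (1 : ℝ) < (p : ℝ) := by exact_mod_cast hpP.one_lt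
    have h2 : (p : ℝ) ^ (-b.valuation) = (p : ℝ) ^ (0 : ℤ) := by
      rw [zpow_zero]; exact h1.symm
    have := (zpow_right_inj₀ (by linarith) (by linarith)).mp h2
    omega
  have hbfd : ‖b - (b0 : ℚ_[p])‖ < 1 := by
    have := hb0.2.2
    rwa [hval, neg_zero, zpow_zero, mul_one] at this
  -- reduction of B is b0
  have hBred : PadicInt.toZMod B = (b0 : ZMod p) := by
    have hlt : ‖B - (b0 : ℤ_[p])‖ < 1 := by
      rw [PadicInt.norm_def]
      push_cast [hB]
      exact hbfd
    have hker : PadicInt.toZMod (B - (b0 : ℤ_[p])) = 0 := by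
      rw [← RingHom.mem_ker, PadicInt.ker_toZMod, IsLocalRing.mem_maximalIdeal,
        PadicInt.mem_nonunits]
      exact hlt
    have h2 : PadicInt.toZMod B - PadicInt.toZMod ((b0 : ℤ) : ℤ_[p]) = 0 := by
      rw [← map_sub]; exact hker
    rw [map_intCast] at h2
    exact sub_eq_zero.mp h2
  have hAred : PadicInt.toZMod A = 0 := by
    rw [← RingHom.mem_ker, PadicInt.ker_toZMod, IsLocalRing.mem_maximalIdeal,
      PadicInt.mem_nonunits]
    rwa [PadicInt.norm_def]
  have hb0ne : (b0 : ZMod p) ≠ 0 := by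
    rw [Ne, ZMod.intCast_zmod_eq_zero_iff_dvd]
    intro hdvd
    have h1 := hb0.1
    have h2 := hb0.2.1
    have := Int.le_of_dvd (by omega) hdvd
    omega
  have key : Int.ModEq (p : ℤ) (b0 ^ N) 1 ↔ ((b0 : ZMod p)) ^ N = 1 := by
    rw [← ZMod.intCast_eq_intCast_iff]
    push_cast
    rfl
  rw [key]
  constructor
  · rintro ⟨x, hx1, hxe⟩
    set X : ℤ_[p] := ⟨x, hx1.le⟩ with hX
    have hXeq : X ^ 3 + A * X = B := by
      apply Subtype.ext
      push_cast [hX, hA, hB]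
      exact hxe
    have hred : (PadicInt.toZMod X) ^ 3 = (b0 : ZMod p) := by
      have := congrArg PadicInt.toZMod hXeq
      rw [map_add, map_mul, map_pow, hAred, hBred, zero_mul, add_zero] at this
      exact this
    have hXne : PadicInt.toZMod X ≠ 0 := by
      intro h0
      have : ‖X‖ < 1 := by
        have hmem : X ∈ IsLocalRing.maximalIdeal ℤ_[p] := by
          rw [← PadicInt.ker_toZMod]; exact RingHom.mem_ker.mpr h0
        rwa [IsLocalRing.mem_maximalIdeal, PadicInt.mem_nonunits] at hmem
      rw [PadicInt.norm_def] at this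
      rw [hX] at this
      simp only at this
      linarith [hx1 ▸ this]
    exact pow_of_cube p hp hXne hred
  · intro h
    obtain ⟨c, hc3⟩ := cube_exists_of_pow p hp hb0ne h
    have hcne : c ≠ 0 := by
      intro h0
      rw [h0] at hc3
      simp at hc3
      exact hb0ne hc3.symm
    set z₀ : ℤ_[p] := ((ZMod.val c : ℕ) : ℤ_[p]) with hz₀
    have hz₀red : PadicInt.toZMod z₀ = c := by
      rw [hz₀, map_natCast, ZMod.natCast_val, ZMod.cast_id]
    have hz₀norm : ‖z₀‖ = 1 := by
      rcases lt_or_eq_of_le (PadicInt.norm_le_one z₀) with hlt | heq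
      · exfalso
        apply hcne
        rw [← hz₀red, ← RingHom.mem_ker, PadicInt.ker_toZMod,
          IsLocalRing.mem_maximalIdeal, PadicInt.mem_nonunits]
        exact hlt
      · exact heq
    set F : Polynomial ℤ_[p] :=
      Polynomial.X ^ 3 + Polynomial.C A * Polynomial.X - Polynomial.C B with hF
    have hFeval : ∀ y : ℤ_[p], F.eval y = y ^ 3 + A * y - B := by
      intro y; simp [hF]
    have hFderiv : ∀ y : ℤ_[p], F.derivative.eval y = 3 * y ^ 2 + A := by
      intro y
      rw [hF]
      simp [Polynomial.derivative_pow]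
    have h3norm : ‖(3 : ℤ_[p])‖ = 1 := by
      have : ¬ ((p : ℤ) ∣ (3 : ℤ)) := by
        intro hdvd
        have := Int.le_of_dvd (by norm_num) hdvd
        omega
      have hlt := (PadicInt.norm_int_lt_one_iff_dvd (3 : ℤ)).not.mpr this
      have hle : ‖((3 : ℤ) : ℤ_[p])‖ ≤ 1 := PadicInt.norm_le_one _
      have : ‖((3 : ℤ) : ℤ_[p])‖ = 1 := le_antisymm hle (not_lt.mp hlt)
      simpa using this
    have hderivnorm : ‖F.derivative.eval z₀‖ = 1 := by
      rw [hFderiv]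
      have h1 : ‖3 * z₀ ^ 2‖ = 1 := by
        rw [norm_mul, h3norm, norm_pow, hz₀norm]; norm_num
      have hane : ‖A‖ ≠ ‖3 * z₀ ^ 2‖ := by
        rw [h1, PadicInt.norm_def]
        exact ne_of_lt ha1
      rw [PadicInt.norm_add_eq_max_of_ne (by rw [h1, PadicInt.norm_def]; exact (ne_of_lt ha1).symm)]
      rw [h1]
      have : ‖A‖ ≤ 1 := PadicInt.norm_le_one _
      rw [max_eq_left]
      rw [PadicInt.norm_def]
      exact ha1.le
    have hevalnorm : ‖F.eval z₀‖ < 1 := by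
      rw [hFeval]
      have hker : PadicInt.toZMod (z₀ ^ 3 + A * z₀ - B) = 0 := by
        rw [map_sub, map_add, map_mul, map_pow, hz₀red, hAred, hBred, zero_mul,
          add_zero, ← hc3, sub_self]
      have hmem : z₀ ^ 3 + A * z₀ - B ∈ IsLocalRing.maximalIdeal ℤ_[p] := by
        rw [← PadicInt.ker_toZMod]; exact RingHom.mem_ker.mpr hker
      rwa [IsLocalRing.mem_maximalIdeal, PadicInt.mem_nonunits] at hmem
    have hnorm : ‖F.eval z₀‖ < ‖F.derivative.eval z₀‖ ^ 2 := by
      rw [hderivnorm]; norm_num; exact hevalnorm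
    obtain ⟨z, hz1, hz2, _, _⟩ := hensels_lemma hnorm
    have hznorm : ‖z‖ = 1 := by
      have hd : ‖z - z₀‖ < 1 := hderivnorm ▸ hz2
      have : z = z₀ + (z - z₀) := by ring
      rw [this]
      rcases eq_or_ne (z - z₀) 0 with h0 | h0
      · rw [h0, add_zero]; exact hz₀norm
      · rw [PadicInt.norm_add_eq_max_of_ne (by rw [hz₀norm]; exact (ne_of_lt hd).symm),
          hz₀norm]
        exact max_eq_left hd.le
    refine ⟨(z : ℚ_[p]), by rw [← PadicInt.norm_def]; exact hznorm, ?_⟩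
    have heq : z ^ 3 + A * z = B := by
      have := hFeval z ▸ (show F.eval z = 0 from by rw [← Polynomial.coe_aeval_eq_eval]; exact hz1)
      linear_combination this
    have := congrArg (fun t : ℤ_[p] => (t : ℚ_[p])) heq
    push_cast [hA, hB] at this
    exact this
end

section
/- Let p > 3 be a prime and let a, b ∈ ℚ_p be nonzero with |b|_p < |a|_p = 1. Then the equation x³ + ax = b has a solution x ∈ ℤ_p^* if and only if (−a_0)^{(p−1)/2} ≡ 1 (mod p), where a_0 is the first digit of a. -/
private lemma padic_add_norm_eq {p : ℕ} [Fact p.Prime] (s t : ℤ_[p])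
    (h : ‖s‖ < ‖t‖) : ‖t + s‖ = ‖t‖ := by
  have h1 : ‖t + s‖ ≤ ‖t‖ := le_trans (PadicInt.nonarchimedean t s) (by simp [le_of_lt h])
  have h2 : ‖t‖ ≤ max ‖t + s‖ ‖s‖ := by
    have := PadicInt.nonarchimedean (t + s) (-s)
    simpa using this
  rcases max_cases ‖t + s‖ ‖s‖ with ⟨he, _⟩ | ⟨he, _⟩
  · rw [he] at h2; linarith
  · rw [he] at h2; linarith

set_option maxHeartbeats 1000000 in
theorem cubic_unit_solvable_iff_of_gt (p : ℕ) [Fact p.Prime] (hp : 3 < p)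
    (a b : ℚ_[p]) (ha : a ≠ 0) (hb : b ≠ 0)
    (hab : ‖b‖ < ‖a‖) (ha1 : ‖a‖ = 1)
    (a0 : ℤ) (ha0 : isFirstDigit p a a0) :
    (∃ x : ℚ_[p], ‖x‖ = 1 ∧ x ^ 3 + a * x = b) ↔
      Int.ModEq (p : ℤ) ((-a0) ^ ((p - 1) / 2)) 1 := by
  have hp' : p.Prime := Fact.out
  have hodd : p % 2 = 1 := Nat.odd_iff.mp (hp'.odd_of_ne_two (by omega))
  have hdiv2 : (p - 1) / 2 = p / 2 := by omega
  obtain ⟨h1, h2, h3⟩ := ha0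
  -- valuation of a is 0
  have hppos : (0:ℝ) < (p:ℝ) := by exact_mod_cast hp'.pos
  have hpne1 : (p:ℝ) ≠ 1 := by
    have : (1:ℝ) < (p:ℝ) := by exact_mod_cast hp'.one_lt
    linarith
  have hv : a.valuation = 0 := by
    have hn := Padic.norm_eq_zpow_neg_valuation ha
    rw [ha1] at hn
    have h0 : (p:ℝ) ^ (-a.valuation) = (p:ℝ) ^ (0:ℤ) := by
      rw [zpow_zero]; exact hn.symm
    have := zpow_right_injective₀ hppos hpne1 h0
    omega
  have ha3 : ‖a - (a0 : ℚ_[p])‖ < 1 := by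
    rwa [hv, neg_zero, zpow_zero, mul_one] at h3
  have hb1 : ‖b‖ < 1 := ha1 ▸ hab
  -- move into ℤ_[p]
  set A : ℤ_[p] := ⟨a, le_of_eq ha1⟩ with hA
  set B : ℤ_[p] := ⟨b, le_of_lt hb1⟩ with hB
  have hAa : (A : ℚ_[p]) = a := rfl
  have hBb : (B : ℚ_[p]) = b := rfl
  have hAnorm : ‖A - (a0 : ℤ_[p])‖ < 1 := by
    rw [← PadicInt.padic_norm_e_of_padicInt]
    push_cast
    exact ha3
  have hpa0 : ¬ ((p : ℤ) ∣ a0) := by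
    intro hd
    have := Int.le_of_dvd (by omega) hd
    omega
  have hna0ne : ((-a0 : ℤ) : ZMod p) ≠ 0 := by
    rw [Ne, ZMod.intCast_zmod_eq_zero_iff_dvd]
    simpa using hpa0
  constructor
  · -- solution exists → -a0 is a QR
    rintro ⟨x, hx1, hxe⟩
    have hfac : x ^ 3 + a * x = x * (x ^ 2 + a) := by ring
    have hx2a : ‖x ^ 2 + a‖ < 1 := by
      have : ‖x * (x ^ 2 + a)‖ = ‖b‖ := by rw [← hfac, hxe]
      rw [norm_mul, hx1, one_mul] at this
      rw [this]; exact hb1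
    have hkey : ‖x ^ 2 + (a0 : ℚ_[p])‖ < 1 := by
      have heq : x ^ 2 + (a0 : ℚ_[p]) = (x ^ 2 + a) + (-(a - a0)) := by ring
      rw [heq]
      calc ‖(x ^ 2 + a) + (-(a - a0))‖ ≤ max ‖x ^ 2 + a‖ ‖-(a - (a0:ℚ_[p]))‖ :=
            Padic.nonarchimedean _ _
        _ < 1 := max_lt hx2a (by rwa [norm_neg])
    set X : ℤ_[p] := ⟨x, le_of_eq hx1⟩ with hX
    have hXkey : ‖X ^ 2 + (a0 : ℤ_[p])‖ < 1 := by
      rw [← PadicInt.padic_norm_e_of_padicInt]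
      push_cast
      exact hkey
    have hker : PadicInt.toZMod (X ^ 2 + (a0 : ℤ_[p])) = 0 := by
      have : X ^ 2 + (a0 : ℤ_[p]) ∈ RingHom.ker (PadicInt.toZMod (p := p)) := by
        rw [PadicInt.ker_toZMod, PadicInt.maximalIdeal_eq_span_p, Ideal.mem_span_singleton,
          ← PadicInt.norm_lt_one_iff_dvd]
        exact hXkey
      exact this
    have hsq : IsSquare ((-a0 : ℤ) : ZMod p) := by
      refine ⟨PadicInt.toZMod X, ?_⟩
      have h0 : (PadicInt.toZMod X) ^ 2 + (a0 : ZMod p) = 0 := by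
        have := hker
        rw [map_add, map_pow, map_intCast] at this
        exact this
      push_cast
      linear_combination -h0
    have heuler := (ZMod.euler_criterion p hna0ne).mp hsq
    refine (ZMod.intCast_eq_intCast_iff _ _ _).mp ?_
    push_cast at heuler ⊢
    rw [hdiv2]
    exact heuler
  · -- -a0 is a QR → solution exists
    intro h
    have hA1 : ((-a0 : ℤ) : ZMod p) ^ (p / 2) = 1 := by
      have hc := (ZMod.intCast_eq_intCast_iff _ _ _).mpr h
      push_cast at hc ⊢
      rw [← hdiv2]
      exact hc
    obtain ⟨y, hy⟩ := (ZMod.euler_criterion p hna0ne).mpr hA1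
    have hyne : y ≠ 0 := by
      intro h0; rw [h0, mul_zero] at hy; exact hna0ne hy
    haveI : NeZero p := ⟨hp'.ne_zero⟩
    set Y : ℤ := (y.val : ℤ) with hY
    have hYcast : ((Y : ℤ) : ZMod p) = y := by
      simp [hY, ZMod.natCast_val, ZMod.cast_id]
    have hpY : ¬ ((p : ℤ) ∣ Y) := by
      rw [← ZMod.intCast_zmod_eq_zero_iff_dvd, hYcast]
      exact hyne
    have hdvd : (p : ℤ) ∣ (Y ^ 2 + a0) := by
      rw [← ZMod.intCast_zmod_eq_zero_iff_dvd]
      push_cast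
      rw [show ((Y : ZMod p) ^ 2) = y ^ 2 by rw [hYcast], sq, ← hy]
      push_cast
      ring
    set x₀ : ℤ_[p] := (Y : ℤ_[p]) with hx₀
    have hx₀norm : ‖x₀‖ = 1 := by
      refine le_antisymm (PadicInt.norm_le_one _) ?_
      by_contra hlt
      push_neg at hlt
      exact hpY ((PadicInt.norm_int_lt_one_iff_dvd Y).mp hlt)
    have hsum : ‖x₀ ^ 2 + A‖ < 1 := by
      have heq : x₀ ^ 2 + A = ((Y ^ 2 + a0 : ℤ) : ℤ_[p]) + (A - (a0 : ℤ_[p])) := by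
        push_cast; ring
      rw [heq]
      calc ‖((Y ^ 2 + a0 : ℤ) : ℤ_[p]) + (A - (a0 : ℤ_[p]))‖
          ≤ max ‖((Y ^ 2 + a0 : ℤ) : ℤ_[p])‖ ‖A - (a0 : ℤ_[p])‖ := PadicInt.nonarchimedean _ _
        _ < 1 := max_lt ((PadicInt.norm_int_lt_one_iff_dvd _).mpr hdvd) hAnorm
    have h2a0 : ‖((-2 * a0 : ℤ) : ℤ_[p])‖ = 1 := by
      refine le_antisymm (PadicInt.norm_le_one _) ?_
      by_contra hlt
      push_neg at hlt
      have hd0 := (PadicInt.norm_int_lt_one_iff_dvd _).mp hlt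
      have hdvd2 : (p:ℤ) ∣ 2 * a0 := by
        have h' : (p:ℤ) ∣ -(2 * a0) := by
          simpa [neg_mul] using hd0
        exact dvd_neg.mp h'
      rcases (Nat.prime_iff_prime_int.mp hp').dvd_mul.mp hdvd2 with hd | hd
      · have := Int.le_of_dvd (by norm_num) hd; omega
      · exact hpa0 hd
    have hderiv : ‖3 * x₀ ^ 2 + A‖ = 1 := by
      have heq : 3 * x₀ ^ 2 + A
          = ((-2 * a0 : ℤ) : ℤ_[p]) + (3 * ((Y ^ 2 + a0 : ℤ) : ℤ_[p]) + (A - (a0 : ℤ_[p]))) := by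
        push_cast; ring
      have hsmall : ‖3 * ((Y ^ 2 + a0 : ℤ) : ℤ_[p]) + (A - (a0 : ℤ_[p]))‖ < 1 := by
        calc ‖3 * ((Y ^ 2 + a0 : ℤ) : ℤ_[p]) + (A - (a0 : ℤ_[p]))‖
            ≤ max ‖3 * ((Y ^ 2 + a0 : ℤ) : ℤ_[p])‖ ‖A - (a0 : ℤ_[p])‖ :=
              PadicInt.nonarchimedean _ _
          _ ≤ max ‖((Y ^ 2 + a0 : ℤ) : ℤ_[p])‖ ‖A - (a0 : ℤ_[p])‖ := by
              apply max_le_max _ le_rfl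
              calc ‖(3 : ℤ_[p]) * ((Y ^ 2 + a0 : ℤ) : ℤ_[p])‖
                  = ‖(3 : ℤ_[p])‖ * ‖((Y ^ 2 + a0 : ℤ) : ℤ_[p])‖ := norm_mul _ _
                _ ≤ 1 * ‖((Y ^ 2 + a0 : ℤ) : ℤ_[p])‖ :=
                    mul_le_mul_of_nonneg_right (PadicInt.norm_le_one _) (norm_nonneg _)
                _ = _ := one_mul _
          _ < 1 := max_lt ((PadicInt.norm_int_lt_one_iff_dvd _).mpr hdvd) hAnorm
      rw [heq, padic_add_norm_eq _ _ (by rw [h2a0]; exact hsmall), h2a0]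
    -- Hensel's lemma
    have hFeval : ∀ z : ℤ_[p],
        (Polynomial.X ^ 3 + Polynomial.C A * Polynomial.X - Polynomial.C B).eval z
          = z ^ 3 + A * z - B := by
      intro z; simp
    have hFderiv : ∀ z : ℤ_[p],
        (Polynomial.derivative
          (Polynomial.X ^ 3 + Polynomial.C A * Polynomial.X - Polynomial.C B)).eval z
          = 3 * z ^ 2 + A := by
      intro z
      simp [Polynomial.derivative_X_pow]; norm_num
    have hnorm : ‖(Polynomial.X ^ 3 + Polynomial.C A * Polynomial.X
          - Polynomial.C B).eval x₀‖
        < ‖(Polynomial.derivative (Polynomial.X ^ 3 + Polynomial.C A * Polynomial.X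
          - Polynomial.C B)).eval x₀‖ ^ 2 := by
      rw [hFeval, hFderiv, hderiv, one_pow]
      have heq : x₀ ^ 3 + A * x₀ - B = x₀ * (x₀ ^ 2 + A) + (-B) := by ring
      rw [heq]
      calc ‖x₀ * (x₀ ^ 2 + A) + (-B)‖ ≤ max ‖x₀ * (x₀ ^ 2 + A)‖ ‖-B‖ :=
            PadicInt.nonarchimedean _ _
        _ < 1 := by
            apply max_lt
            · rw [norm_mul, hx₀norm, one_mul]; exact hsum
            · rw [norm_neg, ← PadicInt.padic_norm_e_of_padicInt, hBb]
              exact hb1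
    obtain ⟨z, hz0, hz1, _, _⟩ := hensels_lemma hnorm
    have hzn : ‖z‖ = 1 := by
      rw [Polynomial.coe_aeval_eq_eval, hFderiv, hderiv] at hz1
      have heq : z = x₀ + (z - x₀) := by ring
      rw [heq, padic_add_norm_eq _ _ (by rw [hx₀norm]; exact hz1)]
      exact hx₀norm
    refine ⟨(z : ℚ_[p]), by rw [PadicInt.padic_norm_e_of_padicInt]; exact hzn, ?_⟩
    rw [Polynomial.coe_aeval_eq_eval, hFeval] at hz0
    have hfin : ((z ^ 3 + A * z - B : ℤ_[p]) : ℚ_[p]) = 0 := by rw [hz0]; rfl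
    push_cast at hfin
    linear_combination hfin
end

section
/- Let p > 3 be a prime and let a, b ∈ ℚ_p be nonzero with |a|_p = |b|_p = 1. Then the equation x³ + ax = b has a solution x ∈ ℤ_p^* if and only if D_0·u_{p−2}² ≢ 9·a_0² (mod p), where a_0, b_0 are the first digits of a and b, D_0 = −4a_0³ − 27b_0², and (u_n) is the integer sequence defined by u_1 = 0, u_2 = −a_0, u_3 = b_0, and u_{n+3} = b_0·u_n − a_0·u_{n+1}. -/
/-- The sequence `u_1 = 0`, `u_2 = -a0`, `u_3 = b0`, `u_{n+3} = b0·u_n - a0·u_{n+1}`. -/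
def useq (a0 b0 : ℤ) : ℕ → ℤ
  | 0 => 0
  | 1 => 0
  | 2 => -a0
  | 3 => b0
  | n + 4 => b0 * useq a0 b0 (n + 1) - a0 * useq a0 b0 (n + 2)

def useqR {R : Type*} [CommRing R] (a b : R) : ℕ → R
  | 0 => 0
  | 1 => 0
  | 2 => -a
  | 3 => b
  | n + 4 => b * useqR a b (n + 1) - a * useqR a b (n + 2)

lemma useqR_map {R S : Type*} [CommRing R] [CommRing S] (g : R →+* S) (a b : R) :
    ∀ n, g (useqR a b n) = useqR (g a) (g b) n := by
  intro n
  induction n using useqR.induct with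
  | case1 => simp [useqR]
  | case2 => simp [useqR]
  | case3 => simp [useqR]
  | case4 => simp [useqR]
  | case5 n ih1 ih2 => simp only [useqR, map_sub, map_mul, ih1, ih2]

lemma useq_map {R : Type*} [CommRing R] (g : ℤ →+* R) (a0 b0 : ℤ) :
    ∀ n, g (useq a0 b0 n) = useqR (g a0) (g b0) n := by
  intro n
  induction n using useq.induct with
  | case1 => simp [useq, useqR]
  | case2 => simp [useq, useqR]
  | case3 => simp [useq, useqR]
  | case4 => simp [useq, useqR]
  | case5 n ih1 ih2 => simp only [useq, useqR, map_sub, map_mul, ih1, ih2]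


lemma fixed_point_frobenius {p : ℕ} [Fact p.Prime] {K : Type*} [Field K] [Algebra (ZMod p) K]
    (x : K) (hx : x ^ p = x) : ∃ r : ZMod p, algebraMap (ZMod p) K r = x := by
  classical
  by_contra hc
  push_neg at hc
  have hp1 : 1 < p := (Fact.out : p.Prime).one_lt
  have hg : (Polynomial.X ^ p - Polynomial.X : Polynomial K) ≠ 0 :=
    FiniteField.X_pow_card_sub_X_ne_zero K hp1
  have hx' : x ∉ Finset.univ.image (algebraMap (ZMod p) K) := by
    intro h
    obtain ⟨r, _, hr⟩ := Finset.mem_image.mp h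
    exact hc r hr
  have hsub : (insert x (Finset.univ.image (algebraMap (ZMod p) K))).val ⊆
      (Polynomial.X ^ p - Polynomial.X : Polynomial K).roots := by
    intro y hy
    rw [Finset.mem_val] at hy
    rw [Polynomial.mem_roots hg]
    have hroot : y ^ p = y := by
      rcases Finset.mem_insert.mp hy with h | h
      · rw [h]; exact hx
      · obtain ⟨r, _, rfl⟩ := Finset.mem_image.mp h
        rw [← map_pow, ZMod.pow_card]
    simp only [Polynomial.IsRoot, Polynomial.eval_sub, Polynomial.eval_pow, Polynomial.eval_X]
    rw [sub_eq_zero]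
    exact hroot
  have hcard := Polynomial.card_le_degree_of_subset_roots hsub
  rw [FiniteField.X_pow_card_sub_X_natDegree_eq K hp1] at hcard
  have hZc : (insert x (Finset.univ.image (algebraMap (ZMod p) K))).card = p + 1 := by
    rw [Finset.card_insert_of_notMem hx',
      Finset.card_image_of_injective _ (algebraMap (ZMod p) K).injective]
    simp [ZMod.card]
  omega

lemma pow_p_root {K : Type*} [Field K] {p : ℕ} [Fact p.Prime] [CharP K p]
    (A B x : K) (hA : A ^ p = A) (hB : B ^ p = B) (hx : x ^ 3 + A * x - B = 0) :
    (x ^ p) ^ 3 + A * (x ^ p) - B = 0 := by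
  have h : (x ^ 3 + A * x - B) ^ p = 0 := by
    rw [hx]; exact zero_pow (Fact.out : p.Prime).ne_zero
  rw [sub_pow_char, add_pow_char, mul_pow, hA, hB, pow_right_comm] at h
  exact h

set_option maxHeartbeats 2000000 in
lemma ff_main {p : ℕ} [Fact p.Prime] (hp : 3 < p) (a b : ZMod p) (ha : a ≠ 0) (hb : b ≠ 0) :
    ((∃ r : ZMod p, r ^ 3 + a * r = b ∧ 3 * r ^ 2 + a ≠ 0) ∧
      (-4 * a ^ 3 - 27 * b ^ 2) * (useqR a b (p - 2)) ^ 2 ≠ 9 * a ^ 2) ∨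
    ((¬ ∃ r : ZMod p, r ^ 3 + a * r = b) ∧
      (-4 * a ^ 3 - 27 * b ^ 2) * (useqR a b (p - 2)) ^ 2 = 9 * a ^ 2) := by
  classical
  set K := AlgebraicClosure (ZMod p) with hK
  haveI : CharP K p := charP_of_injective_algebraMap (algebraMap (ZMod p) K).injective p
  have hprime : p.Prime := Fact.out
  have hp0 : p ≠ 0 := hprime.ne_zero
  have hodd : Odd p := hprime.odd_of_ne_two (by omega)
  set i : ZMod p →+* K := algebraMap (ZMod p) K with hi_def
  have hi : Function.Injective i := i.injective
  have hfix : ∀ c : ZMod p, (i c) ^ p = i c := fun c => by rw [← map_pow, ZMod.pow_card]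
  -- numerals
  have h2K : (2 : K) ≠ 0 := by
    rw [show (2 : K) = ((2 : ℕ) : K) by norm_num, Ne, CharP.cast_eq_zero_iff K p 2]
    intro h; have := Nat.le_of_dvd (by norm_num) h; omega
  have h3K : (3 : K) ≠ 0 := by
    rw [show (3 : K) = ((3 : ℕ) : K) by norm_num, Ne, CharP.cast_eq_zero_iff K p 3]
    intro h; have := Nat.le_of_dvd (by norm_num) h; omega
  have h9K : (9 : K) ≠ 0 := by
    rw [show (9 : K) = 3 ^ 2 by norm_num]; exact pow_ne_zero _ h3K
  have h9F : (9 : ZMod p) ≠ 0 := by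
    rw [show (9 : ZMod p) = ((9 : ℕ) : ZMod p) by norm_num, Ne,
      CharP.cast_eq_zero_iff (ZMod p) p 9]
    intro h
    rcases (Nat.Prime.dvd_mul hprime).mp (show p ∣ 3 * 3 by norm_num; exact h) with h' | h' <;>
      · have := Nat.le_of_dvd (by norm_num) h'; omega
  obtain ⟨A, hAdef⟩ : ∃ t : K, i a = t := ⟨_, rfl⟩
  obtain ⟨B, hBdef⟩ : ∃ t : K, i b = t := ⟨_, rfl⟩
  have hAne : A ≠ 0 := fun h => ha (hi (by rw [hAdef, h, map_zero]))
  have hBne : B ≠ 0 := fun h => hb (hi (by rw [hBdef, h, map_zero]))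
  have hAp : A ^ p = A := by rw [← hAdef]; exact hfix a
  have hBp : B ^ p = B := by rw [← hBdef]; exact hfix b
  -- get the three roots
  obtain ⟨α, hαr⟩ : ∃ x : K, x ^ 3 + A * x - B = 0 := by
    obtain ⟨x, hx⟩ := IsAlgClosed.exists_root (k := K)
      (Polynomial.X ^ 3 + Polynomial.C A * Polynomial.X - Polynomial.C B) (by
        have hdeg : (Polynomial.X ^ 3 + Polynomial.C A * Polynomial.X
            - Polynomial.C B : Polynomial K).degree = 3 := by
          compute_degree!
        rw [hdeg]; decide)
    refine ⟨x, ?_⟩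
    simpa using hx
  obtain ⟨β, hq⟩ : ∃ t : K, t ^ 2 + α * t + (α ^ 2 + A) = 0 := by
    obtain ⟨x, hx⟩ := IsAlgClosed.exists_root (k := K)
      (Polynomial.X ^ 2 + Polynomial.C α * Polynomial.X + Polynomial.C (α ^ 2 + A)) (by
        have hdeg : (Polynomial.X ^ 2 + Polynomial.C α * Polynomial.X
            + Polynomial.C (α ^ 2 + A) : Polynomial K).degree = 2 := by
          compute_degree!
        rw [hdeg]; decide)
    refine ⟨x, ?_⟩
    simpa using hx
  have hA : A = -(α ^ 2 + α * β + β ^ 2) := by linear_combination hq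
  have hB : B = -(α ^ 2 * β + α * β ^ 2) := by linear_combination (-1 : K) * hαr + α * hA
  obtain ⟨γ, hγ⟩ : ∃ g : K, g = -α - β := ⟨_, rfl⟩
  have hβr : β ^ 3 + A * β - B = 0 := by rw [hA, hB]; ring
  have hγr : γ ^ 3 + A * γ - B = 0 := by rw [hA, hB, hγ]; ring
  have hfact : ∀ x : K, (x - α) * ((x - β) * (x - γ)) = x ^ 3 + A * x - B := by
    intro x; rw [hA, hB, hγ]; ring
  have htri : ∀ x : K, x ^ 3 + A * x - B = 0 → x = α ∨ x = β ∨ x = γ := by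
    intro x hx
    have h0 : (x - α) * ((x - β) * (x - γ)) = 0 := by rw [hfact]; exact hx
    rcases mul_eq_zero.mp h0 with h | h
    · exact Or.inl (sub_eq_zero.mp h)
    · rcases mul_eq_zero.mp h with h | h
      · exact Or.inr (Or.inl (sub_eq_zero.mp h))
      · exact Or.inr (Or.inr (sub_eq_zero.mp h))
  have hfr : ∀ x : K, x ^ 3 + A * x - B = 0 → (x ^ p) ^ 3 + A * (x ^ p) - B = 0 :=
    fun x hx => pow_p_root A B x hAp hBp hx
  have hfinj : ∀ x y : K, x ^ p = y ^ p → x = y := by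
    intro x y h
    have h0 : (x - y) ^ p = 0 := by rw [sub_pow_char, h, sub_self]
    exact sub_eq_zero.mp ((pow_eq_zero_iff hp0).mp h0)
  have hG : ∀ n : ℕ,
      (useqR A B (n + 1) * ((α - β) * ((α - γ) * (β - γ))) =
        α ^ (n + 3) * (β - γ) - β ^ (n + 3) * (α - γ) + γ ^ (n + 3) * (α - β)) ∧
      (useqR A B (n + 2) * ((α - β) * ((α - γ) * (β - γ))) =
        α ^ (n + 4) * (β - γ) - β ^ (n + 4) * (α - γ) + γ ^ (n + 4) * (α - β)) ∧
      (useqR A B (n + 3) * ((α - β) * ((α - γ) * (β - γ))) =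
        α ^ (n + 5) * (β - γ) - β ^ (n + 5) * (α - γ) + γ ^ (n + 5) * (α - β)) := by
    intro n
    induction n with
    | zero =>
      refine ⟨?_, ?_, ?_⟩
      · show useqR A B 1 * _ = _
        simp only [useqR]
        rw [hγ]; ring
      · show useqR A B 2 * _ = _
        simp only [useqR]
        rw [hA, hγ]; ring
      · show useqR A B 3 * _ = _
        simp only [useqR]
        rw [hB, hγ]; ring
    | succ n ih =>
      obtain ⟨ih1, ih2, ih3⟩ := ih
      refine ⟨ih2, ih3, ?_⟩
      have hdef : useqR A B (n + 1 + 3) = B * useqR A B (n + 1) - A * useqR A B (n + 2) := by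
        show useqR A B (n + 4) = _
        simp [useqR]
      rw [hdef]
      linear_combination B * ih1 - A * ih2 - (β - γ) * α ^ (n + 3) * hαr +
        (α - γ) * β ^ (n + 3) * hβr - (α - β) * γ ^ (n + 3) * hγr
  have hGP : useqR A B (p - 2) * ((α - β) * ((α - γ) * (β - γ))) =
      α ^ p * (β - γ) - β ^ p * (α - γ) + γ ^ p * (α - β) := by
    have h1 : p - 3 + 1 = p - 2 := by omega
    have h3 : p - 3 + 3 = p := by omega
    have h := (hG (p - 3)).1
    rw [h1, h3] at h
    exact h
  have hγp : γ ^ p = -α ^ p - β ^ p := by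
    rw [hγ, show (-α - β : K) = -(α + β) by ring, hodd.neg_pow, add_pow_char]
    ring
  have hcond : ((-4 * a ^ 3 - 27 * b ^ 2) * (useqR a b (p - 2)) ^ 2 = 9 * a ^ 2) ↔
      (useqR A B (p - 2) * ((α - β) * ((α - γ) * (β - γ)))) ^ 2 = 9 * A ^ 2 := by
    have hdisc : -4 * A ^ 3 - 27 * B ^ 2 = ((α - β) * ((α - γ) * (β - γ))) ^ 2 := by
      rw [hA, hB, hγ]; ring
    have e1 : i ((-4 * a ^ 3 - 27 * b ^ 2) * (useqR a b (p - 2)) ^ 2) =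
        (useqR A B (p - 2) * ((α - β) * ((α - γ) * (β - γ)))) ^ 2 := by
      rw [map_mul, map_sub, map_mul, map_mul, map_pow, map_pow, map_pow, useqR_map,
        hAdef, hBdef, map_neg, map_ofNat, map_ofNat]
      rw [show ((-4 * A ^ 3 - 27 * B ^ 2) : K) = ((α - β) * ((α - γ) * (β - γ))) ^ 2 from hdisc]
      ring
    have e2 : i (9 * a ^ 2) = 9 * A ^ 2 := by
      rw [map_mul, map_pow, hAdef, map_ofNat]
    constructor
    · intro h
      rw [← e1, ← e2, h]
    · intro h
      exact hi (by rw [e1, e2, h])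
  have hdisc : -4 * A ^ 3 - 27 * B ^ 2 = ((α - β) * ((α - γ) * (β - γ))) ^ 2 := by
    rw [hA, hB, hγ]; ring
  have mk : ∀ x : K, x ^ p = x → x ^ 3 + A * x - B = 0 → 3 * x ^ 2 + A ≠ 0 →
      ∃ r : ZMod p, r ^ 3 + a * r = b ∧ 3 * r ^ 2 + a ≠ 0 := by
    intro x hxp hxr hxd
    obtain ⟨r, hri⟩ := fixed_point_frobenius (p := p) x hxp
    have hri' : i r = x := hri
    refine ⟨r, ?_, ?_⟩
    · apply hi
      rw [map_add, map_mul, map_pow, hri', hAdef, hBdef]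
      linear_combination hxr
    · intro h
      apply hxd
      have h0 := congrArg i h
      rw [map_add, map_mul, map_pow, map_ofNat, map_zero, hri', hAdef] at h0
      exact h0
  by_cases hD : -4 * a ^ 3 - 27 * b ^ 2 = 0
  · -- degenerate discriminant : double root situation
    have h0 : -4 * A ^ 3 - 27 * B ^ 2 = 0 := by
      have h0 := congrArg i hD
      rwa [map_sub, map_mul, map_mul, map_pow, map_pow, hAdef, hBdef, map_neg, map_ofNat,
        map_ofNat, map_zero] at h0
    have hsq : ((α - β) * ((α - γ) * (β - γ))) ^ 2 = 0 := by rw [← hdisc]; exact h0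
    have hΔ0 : (α - β) * ((α - γ) * (β - γ)) = 0 :=
      pow_eq_zero_iff (n := 2) (by norm_num) |>.mp hsq
    have dbl : ∀ r : K, A = -3 * r ^ 2 → B = -2 * r ^ 3 →
        ∃ s : ZMod p, s ^ 3 + a * s = b ∧ 3 * s ^ 2 + a ≠ 0 := by
      intro r hA2 hB2
      have hr0 : r ≠ 0 := by
        intro h; apply hBne; rw [hB2, h]; ring
      have hfact2 : ∀ x : K, (x - r) ^ 2 * (x + 2 * r) = x ^ 3 + A * x - B := by
        intro x; rw [hA2, hB2]; ring
      have hm2 : ((-2 : K)) ^ p = -2 := by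
        have h := hfix (-2)
        rwa [map_neg, map_ofNat] at h
      have hrr : r ^ 3 + A * r - B = 0 := by rw [hA2, hB2]; ring
      have hsroot : (-2 * r) ^ 3 + A * (-2 * r) - B = 0 := by
        rw [← hfact2]; ring
      have hσ : (-2 * r) ^ p = -2 * r := by
        have hrp := hfr r hrr
        have h0' : (r ^ p - r) ^ 2 * (r ^ p + 2 * r) = 0 := by rw [hfact2]; exact hrp
        rcases mul_eq_zero.mp h0' with h | h
        · have h' : r ^ p = r := by
            have h'' := pow_eq_zero_iff (n := 2) (by norm_num) |>.mp h
            exact sub_eq_zero.mp h''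
          rw [mul_pow, hm2, h']
        · exfalso
          have h4 : ((-2 * r : K) ^ p) = 4 * r := by
            rw [mul_pow, hm2]
            have h' : r ^ p = -2 * r := by linear_combination h
            rw [h']; ring
          have hroot4 := hfr _ hsroot
          rw [h4] at hroot4
          have h54 : (4 * r - r) ^ 2 * (4 * r + 2 * r) = 0 := by rw [hfact2]; exact hroot4
          have h54r : (54 : K) * r ^ 3 = 0 := by linear_combination h54
          have h54K : (54 : K) ≠ 0 := by
            rw [show (54 : K) = 2 * 3 ^ 3 by norm_num]
            exact mul_ne_zero h2K (pow_ne_zero _ h3K)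
          exact mul_ne_zero h54K (pow_ne_zero 3 hr0) h54r
      obtain ⟨s, hsi⟩ := fixed_point_frobenius (p := p) (-2 * r : K) hσ
      have hsi' : i s = -2 * r := hsi
      refine ⟨s, ?_, ?_⟩
      · apply hi
        rw [map_add, map_mul, map_pow, hsi', hAdef, hBdef]
        linear_combination hsroot
      · intro h
        have h0' := congrArg i h
        rw [map_add, map_mul, map_pow, map_ofNat, map_zero, hsi', hAdef] at h0'
        have h9r : (9 : K) * r ^ 2 = 0 := by linear_combination h0' - hA2
        exact mul_ne_zero h9K (pow_ne_zero 2 hr0) h9r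
    refine Or.inl ⟨?_, ?_⟩
    · rcases mul_eq_zero.mp hΔ0 with h' | h'
      · have heq : α = β := sub_eq_zero.mp h'
        exact dbl α (by linear_combination hA + (2 * α + β) * heq)
          (by linear_combination hB + α * (2 * α + β) * heq)
      · rcases mul_eq_zero.mp h' with h'' | h''
        · have heq2 : α = -α - β := by rw [← hγ]; exact sub_eq_zero.mp h''
          exact dbl α (by linear_combination hA + (α - β) * heq2)
            (by linear_combination hB + α * (α - β) * heq2)
        · have heq3 : β = -α - β := by rw [← hγ]; exact sub_eq_zero.mp h''
          exact dbl β (by linear_combination hA + (β - α) * heq3)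
            (by linear_combination hB + β * (β - α) * heq3)
    · rw [hD, zero_mul]
      intro h
      exact mul_ne_zero h9F (pow_ne_zero 2 ha) h.symm
  · -- nondegenerate discriminant
    have hΔne : (α - β) * ((α - γ) * (β - γ)) ≠ 0 := by
      intro h0
      apply hD
      apply hi
      rw [map_sub, map_mul, map_mul, map_pow, map_pow, hAdef, hBdef, map_neg, map_ofNat,
        map_ofNat, map_zero, hdisc, h0]
      norm_num
    have hab : α ≠ β := fun h => hΔne (by rw [h]; ring)
    have hac : α ≠ γ := fun h => hΔne (by rw [h]; ring)
    have hbc : β ≠ γ := fun h => hΔne (by rw [h]; ring)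
    have hαtri := htri _ (hfr α hαr)
    have hβtri := htri _ (hfr β hβr)
    rcases hαtri with h1 | h1 | h1 <;> rcases hβtri with h2 | h2 | h2
    · -- α^p = α, β^p = α : impossible
      exact absurd (hfinj α β (h1.trans h2.symm)) hab
    · -- identity: all three roots rational
      have hγfix : γ ^ p = γ := by rw [hγp, h1, h2, hγ]
      refine Or.inl ⟨mk α h1 hαr ?_, ?_⟩
      · rw [show 3 * α ^ 2 + A = (α - β) * (α - γ) from by rw [hA, hγ]; ring]
        exact mul_ne_zero (sub_ne_zero.mpr hab) (sub_ne_zero.mpr hac)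
      · rw [Ne, hcond, hGP, h1, h2, hγfix]
        intro h
        have hE : α * (β - γ) - β * (α - γ) + γ * (α - β) = 0 := by rw [hγ]; ring
        rw [hE] at h
        exact mul_ne_zero h9K (pow_ne_zero 2 hAne) (by linear_combination -h)
    · -- transposition fixing α : α^p = α, β^p = γ
      have hγB : γ ^ p = β := by rw [hγp, h1, h2, hγ]; ring
      refine Or.inl ⟨mk α h1 hαr ?_, ?_⟩
      · rw [show 3 * α ^ 2 + A = (α - β) * (α - γ) from by rw [hA, hγ]; ring]
        exact mul_ne_zero (sub_ne_zero.mpr hab) (sub_ne_zero.mpr hac)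
      · rw [Ne, hcond, hGP, h1, h2, hγB]
        intro h
        have hE : (α * (β - γ) - γ * (α - γ) + β * (α - β)) ^ 2
            = 9 * (α * (β - γ)) ^ 2 := by rw [hγ]; ring
        rw [hE] at h
        have hfac : (α * (β - γ) - A) * (α * (β - γ) + A) = 0 := by
          linear_combination mul_left_cancel₀ h9K h
        have htp : (α * (β - γ)) ^ p = -(α * (β - γ)) := by
          rw [mul_pow, sub_pow_char, h1, h2, hγB]; ring
        have htfix : (α * (β - γ)) ^ p = α * (β - γ) := by
          rcases mul_eq_zero.mp hfac with h' | h'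
          · rw [show α * (β - γ) = A from by linear_combination h', hAp]
          · rw [show α * (β - γ) = -A from by linear_combination h', hodd.neg_pow, hAp]
        have h2t : (2 : K) * (α * (β - γ)) = 0 := by linear_combination htp - htfix
        rcases mul_eq_zero.mp h2t with h' | h'
        · exact h2K h'
        · rcases mul_eq_zero.mp h' with h'' | h''
          · exact hBne (by rw [hB, show α = 0 from h'']; ring)
          · exact (sub_ne_zero.mpr hbc) h''
    · -- transposition fixing γ : α^p = β, β^p = α
      have hγfix : γ ^ p = γ := by rw [hγp, h1, h2, hγ]; ring
      refine Or.inl ⟨mk γ hγfix hγr ?_, ?_⟩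
      · rw [show 3 * γ ^ 2 + A = (γ - α) * (γ - β) from by rw [hA, hγ]; ring]
        exact mul_ne_zero (sub_ne_zero.mpr hac.symm) (sub_ne_zero.mpr hbc.symm)
      · rw [Ne, hcond, hGP, h1, h2, hγfix]
        intro h
        have hE : (β * (β - γ) - α * (α - γ) + γ * (α - β)) ^ 2
            = 9 * (γ * (α - β)) ^ 2 := by rw [hγ]; ring
        rw [hE] at h
        have hfac : (γ * (α - β) - A) * (γ * (α - β) + A) = 0 := by
          linear_combination mul_left_cancel₀ h9K h
        have htp : (γ * (α - β)) ^ p = -(γ * (α - β)) := by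
          rw [mul_pow, sub_pow_char, h1, h2, hγfix]; ring
        have htfix : (γ * (α - β)) ^ p = γ * (α - β) := by
          rcases mul_eq_zero.mp hfac with h' | h'
          · rw [show γ * (α - β) = A from by linear_combination h', hAp]
          · rw [show γ * (α - β) = -A from by linear_combination h', hodd.neg_pow, hAp]
        have h2t : (2 : K) * (γ * (α - β)) = 0 := by linear_combination htp - htfix
        rcases mul_eq_zero.mp h2t with h' | h'
        · exact h2K h'
        · rcases mul_eq_zero.mp h' with h'' | h''
          · refine hBne ?_
            have hβα : β = -α := by rw [hγ] at h''; linear_combination -h''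
            rw [hB, hβα]; ring
          · exact (sub_ne_zero.mpr hab) h''
    · -- α^p = β, β^p = β : impossible
      exact absurd (hfinj α β (h1.trans h2.symm)) hab
    · -- 3-cycle α → β → γ → α : no rational root
      have hγB : γ ^ p = α := by rw [hγp, h1, h2, hγ]; ring
      refine Or.inr ⟨?_, ?_⟩
      · rintro ⟨r, hr⟩
        have hri : (i r) ^ 3 + A * (i r) - B = 0 := by
          have h0 := congrArg i hr
          rw [map_add, map_mul, map_pow, hAdef, hBdef] at h0
          linear_combination h0
        have hfx : (i r) ^ p = i r := hfix r
        rcases htri _ hri with h' | h' | h'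
        · rw [h', h1] at hfx; exact hab hfx.symm
        · rw [h', h2] at hfx; exact hbc hfx.symm
        · rw [h', hγB] at hfx; exact hac hfx
      · rw [hcond, hGP, h1, h2, hγB, hA, hγ]; ring
    · -- α^p = γ, β^p = α : the other 3-cycle
      have hγB : γ ^ p = β := by rw [hγp, h1, h2, hγ]; ring
      refine Or.inr ⟨?_, ?_⟩
      · rintro ⟨r, hr⟩
        have hri : (i r) ^ 3 + A * (i r) - B = 0 := by
          have h0 := congrArg i hr
          rw [map_add, map_mul, map_pow, hAdef, hBdef] at h0
          linear_combination h0
        have hfx : (i r) ^ p = i r := hfix r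
        rcases htri _ hri with h' | h' | h'
        · rw [h', h1] at hfx; exact hac hfx.symm
        · rw [h', h2] at hfx; exact hab hfx
        · rw [h', hγB] at hfx; exact hbc hfx
      · rw [hcond, hGP, h1, h2, hγB, hA, hγ]; ring
    · -- transposition fixing β : α^p = γ, β^p = β
      have hγB : γ ^ p = α := by rw [hγp, h1, h2, hγ]; ring
      refine Or.inl ⟨mk β h2 hβr ?_, ?_⟩
      · rw [show 3 * β ^ 2 + A = (β - α) * (β - γ) from by rw [hA, hγ]; ring]
        exact mul_ne_zero (sub_ne_zero.mpr hab.symm) (sub_ne_zero.mpr hbc)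
      · rw [Ne, hcond, hGP, h1, h2, hγB]
        intro h
        have hE : (γ * (β - γ) - β * (α - γ) + α * (α - β)) ^ 2
            = 9 * (β * (γ - α)) ^ 2 := by rw [hγ]; ring
        rw [hE] at h
        have hfac : (β * (γ - α) - A) * (β * (γ - α) + A) = 0 := by
          linear_combination mul_left_cancel₀ h9K h
        have htp : (β * (γ - α)) ^ p = -(β * (γ - α)) := by
          rw [mul_pow, sub_pow_char, h1, h2, hγB]; ring
        have htfix : (β * (γ - α)) ^ p = β * (γ - α) := by
          rcases mul_eq_zero.mp hfac with h' | h'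
          · rw [show β * (γ - α) = A from by linear_combination h', hAp]
          · rw [show β * (γ - α) = -A from by linear_combination h', hodd.neg_pow, hAp]
        have h2t : (2 : K) * (β * (γ - α)) = 0 := by linear_combination htp - htfix
        rcases mul_eq_zero.mp h2t with h' | h'
        · exact h2K h'
        · rcases mul_eq_zero.mp h' with h'' | h''
          · exact hBne (by rw [hB, show β = 0 from h'']; ring)
          · exact (sub_ne_zero.mpr hac.symm) (by linear_combination h'')
    · -- α^p = γ, β^p = γ : impossible
      exact absurd (hfinj α β (h1.trans h2.symm)) hab

set_option maxHeartbeats 1000000 in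
theorem cubic_unit_solvable_iff_of_eq_one (p : ℕ) [Fact p.Prime] (hp : 3 < p)
    (a b : ℚ_[p]) (ha : a ≠ 0) (hb : b ≠ 0)
    (ha1 : ‖a‖ = 1) (hb1 : ‖b‖ = 1)
    (a0 b0 : ℤ) (ha0 : isFirstDigit p a a0) (hb0 : isFirstDigit p b b0) :
    (∃ x : ℚ_[p], ‖x‖ = 1 ∧ x ^ 3 + a * x = b) ↔
      ¬ Int.ModEq (p : ℤ)
        ((-4 * a0 ^ 3 - 27 * b0 ^ 2) * useq a0 b0 (p - 2) ^ 2) (9 * a0 ^ 2) := by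
  have hprime : p.Prime := Fact.out
  have hp0' : (0 : ℝ) < (p : ℝ) := by exact_mod_cast hprime.pos
  have hp1' : ((p : ℝ)) ≠ 1 := by exact_mod_cast hprime.ne_one
  -- unit part is just the number itself
  have hunit : ∀ x : ℚ_[p], x ≠ 0 → ‖x‖ = 1 → (p : ℚ_[p]) ^ (-x.valuation) = 1 := by
    intro x hx hx1
    have h := Padic.norm_eq_zpow_neg_valuation hx
    rw [hx1] at h
    have h0 : (p : ℝ) ^ (-x.valuation) = (p : ℝ) ^ (0 : ℤ) := by rw [zpow_zero]; exact h.symm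
    have hv : -x.valuation = 0 := (zpow_right_inj₀ hp0' hp1').mp h0
    rw [hv, zpow_zero]
  have ha0' : ‖a - (a0 : ℚ_[p])‖ < 1 := by
    have h := ha0.2.2
    rwa [hunit a ha ha1, mul_one] at h
  have hb0' : ‖b - (b0 : ℚ_[p])‖ < 1 := by
    have h := hb0.2.2
    rwa [hunit b hb hb1, mul_one] at h
  set A : ℤ_[p] := ⟨a, le_of_eq ha1⟩ with hAdef
  set B : ℤ_[p] := ⟨b, le_of_eq hb1⟩ with hBdef
  have hres : ∀ y : ℤ_[p], PadicInt.toZMod y = 0 ↔ ‖y‖ < 1 := by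
    intro y
    rw [← RingHom.mem_ker, PadicInt.ker_toZMod, PadicInt.maximalIdeal_eq_span_p,
      Ideal.mem_span_singleton, ← PadicInt.norm_lt_one_iff_dvd]
  have hAres : PadicInt.toZMod A = ((a0 : ℤ) : ZMod p) := by
    have h1 : PadicInt.toZMod (A - ((a0 : ℤ) : ℤ_[p])) = 0 := by
      rw [hres, PadicInt.norm_def]
      exact ha0'
    have h2 : PadicInt.toZMod A - PadicInt.toZMod ((a0 : ℤ) : ℤ_[p]) = 0 := by
      rw [← map_sub]; exact h1
    have h3 : PadicInt.toZMod ((a0 : ℤ) : ℤ_[p]) = ((a0 : ℤ) : ZMod p) := map_intCast _ _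
    rw [h3] at h2
    exact sub_eq_zero.mp h2
  have hBres : PadicInt.toZMod B = ((b0 : ℤ) : ZMod p) := by
    have h1 : PadicInt.toZMod (B - ((b0 : ℤ) : ℤ_[p])) = 0 := by
      rw [hres, PadicInt.norm_def]
      exact hb0'
    have h2 : PadicInt.toZMod B - PadicInt.toZMod ((b0 : ℤ) : ℤ_[p]) = 0 := by
      rw [← map_sub]; exact h1
    have h3 : PadicInt.toZMod ((b0 : ℤ) : ℤ_[p]) = ((b0 : ℤ) : ZMod p) := map_intCast _ _
    rw [h3] at h2
    exact sub_eq_zero.mp h2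
  have ha0ne : ((a0 : ℤ) : ZMod p) ≠ 0 := by
    rw [Ne, ZMod.intCast_zmod_eq_zero_iff_dvd]
    intro h
    have h1 := Int.le_of_dvd (by linarith [ha0.1]) h
    have h2 := ha0.2.1
    omega
  have hb0ne : ((b0 : ℤ) : ZMod p) ≠ 0 := by
    rw [Ne, ZMod.intCast_zmod_eq_zero_iff_dvd]
    intro h
    have h1 := Int.le_of_dvd (by linarith [hb0.1]) h
    have h2 := hb0.2.1
    omega
  have H := ff_main hp ((a0 : ℤ) : ZMod p) ((b0 : ℤ) : ZMod p) ha0ne hb0ne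
  -- translate the congruence condition
  have hu' : ((useq a0 b0 (p - 2) : ℤ) : ZMod p)
      = useqR ((a0 : ℤ) : ZMod p) ((b0 : ℤ) : ZMod p) (p - 2) := by
    simpa using useq_map (Int.castRingHom (ZMod p)) a0 b0 (p - 2)
  rw [← ZMod.intCast_eq_intCast_iff]
  have hcast1 : (((-4 * a0 ^ 3 - 27 * b0 ^ 2) * useq a0 b0 (p - 2) ^ 2 : ℤ) : ZMod p)
      = (-4 * ((a0 : ℤ) : ZMod p) ^ 3 - 27 * ((b0 : ℤ) : ZMod p) ^ 2) *
        (useqR ((a0 : ℤ) : ZMod p) ((b0 : ℤ) : ZMod p) (p - 2)) ^ 2 := by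
    push_cast [hu']
    ring
  have hcast2 : ((9 * a0 ^ 2 : ℤ) : ZMod p) = 9 * ((a0 : ℤ) : ZMod p) ^ 2 := by
    push_cast
    ring
  rw [hcast1, hcast2]
  constructor
  · rintro ⟨x, hx1, hx2⟩
    set X : ℤ_[p] := ⟨x, le_of_eq hx1⟩ with hXdef
    have hXeq : X ^ 3 + A * X = B := Subtype.ext hx2
    have hroot : (PadicInt.toZMod X) ^ 3 + ((a0 : ℤ) : ZMod p) * (PadicInt.toZMod X)
        = ((b0 : ℤ) : ZMod p) := by
      have h := congrArg PadicInt.toZMod hXeq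
      rwa [map_add, map_mul, map_pow, hAres, hBres] at h
    rcases H with ⟨_, hcondne⟩ | ⟨hnoroot, _⟩
    · exact hcondne
    · exact absurd ⟨PadicInt.toZMod X, hroot⟩ hnoroot
  · intro hcond
    rcases H with ⟨⟨r, hroot, hder⟩, _⟩ | ⟨_, hcondeq⟩
    swap
    · exact absurd hcondeq hcond
    have hrne : r ≠ 0 := by
      intro h
      apply hb0ne
      rw [← hroot, h]; ring
    set F : Polynomial ℤ_[p] := Polynomial.X ^ 3 + Polynomial.C A * Polynomial.X
      - Polynomial.C B with hFdef
    have hevalF : ∀ z : ℤ_[p], F.eval z = z ^ 3 + A * z - B := by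
      intro z; simp [hFdef]
    have hderF : ∀ z : ℤ_[p], F.derivative.eval z = 3 * z ^ 2 + A := by
      intro z
      have : F.derivative = Polynomial.C 3 * Polynomial.X ^ 2 + Polynomial.C A := by
        rw [hFdef]
        simp [Polynomial.derivative_X_pow]
        try ring
        rw [← Polynomial.C_1, ← Polynomial.C_add]; norm_num
      rw [this]
      simp
    set z0 : ℤ_[p] := ((r.val : ℕ) : ℤ_[p]) with hz0def
    have hz0res : PadicInt.toZMod z0 = r := by
      rw [hz0def, map_natCast]
      exact ZMod.natCast_rightInverse r
    have hFz0 : PadicInt.toZMod (F.eval z0) = 0 := by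
      rw [hevalF, map_sub, map_add, map_mul, map_pow, hz0res, hAres, hBres, sub_eq_zero]
      exact hroot
    have hFz0norm : ‖F.eval z0‖ < 1 := (hres _).mp hFz0
    have hdz0 : PadicInt.toZMod (F.derivative.eval z0) = 3 * r ^ 2 + ((a0 : ℤ) : ZMod p) := by
      rw [hderF, map_add, map_mul, map_pow, hz0res, hAres, map_ofNat]
    have hdnorm : ‖F.derivative.eval z0‖ = 1 := by
      rcases lt_or_eq_of_le (PadicInt.norm_le_one (F.derivative.eval z0)) with h | h
      · exfalso
        apply hder
        rw [← hdz0]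
        exact (hres _).mpr h
      · exact h
    have hhensel : ‖F.eval z0‖ < ‖F.derivative.eval z0‖ ^ 2 := by
      rw [hdnorm]; simpa using hFz0norm
    obtain ⟨z, hzeval, hzdist, _, _⟩ := hensels_lemma hhensel
    have hzres : PadicInt.toZMod z = r := by
      have h1 : PadicInt.toZMod (z - z0) = 0 := by
        rw [hres]
        rw [Polynomial.coe_aeval_eq_eval, hdnorm] at hzdist
        exact hzdist
      rw [map_sub] at h1
      have h2 := sub_eq_zero.mp h1
      rw [hz0res] at h2
      exact h2
    have hznorm : ‖z‖ = 1 := by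
      rcases lt_or_eq_of_le (PadicInt.norm_le_one z) with h | h
      · exfalso
        apply hrne
        rw [← hzres]
        exact (hres _).mpr h
      · exact h
    refine ⟨(z : ℚ_[p]), ?_, ?_⟩
    · rw [← PadicInt.norm_def]; exact hznorm
    · have hz3 : z ^ 3 + A * z - B = 0 := by
        rw [← hevalF]; exact hzeval
      have hc : ((z ^ 3 + A * z - B : ℤ_[p]) : ℚ_[p]) = ((0 : ℤ_[p]) : ℚ_[p]) :=
        congrArg _ hz3
      push_cast at hc
      exact sub_eq_zero.mp hc
end

section
/- Let p > 3 be a prime and let a, b ∈ ℚ_p be nonzero with |a|_p³ = |b|_p² ≤ 1. Then the equation x³ + ax = b has a solution x ∈ ℤ_p if and only if D_0·u_{p−2}² ≢ 9·a_0² (mod p), where a_0, b_0 are the first digits of a and b, D_0 = −4a_0³ − 27b_0², and (u_n) is the integer sequence defined by u_1 = 0, u_2 = −a_0, u_3 = b_0, and u_{n+3} = b_0·u_n − a_0·u_{n+1}. -/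
set_option maxHeartbeats 1000000

lemma useq_key {R : Type*} [CommRing R] (a0 b0 : ℤ) (α β γ : R)
    (h1 : α + β + γ = 0) (ha : (a0 : R) = α*β + α*γ + β*γ) (hb : (b0 : R) = α*β*γ) :
    ∀ n : ℕ, (useq a0 b0 (n+1) : R) * ((α-β)*(α-γ)*(β-γ)) =
      α^(n+3)*(β-γ) - β^(n+3)*(α-γ) + γ^(n+3)*(α-β) := by
  have hα : α^3 = (b0:R) - (a0:R)*α := by linear_combination α^2*h1 + α*ha - hb
  have hβ : β^3 = (b0:R) - (a0:R)*β := by linear_combination β^2*h1 + β*ha - hb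
  have hγ : γ^3 = (b0:R) - (a0:R)*γ := by linear_combination γ^2*h1 + γ*ha - hb
  intro n
  induction n using Nat.strong_induction_on with
  | _ n ih =>
    match n with
    | 0 =>
      show ((useq a0 b0 1 : ℤ) : R) * _ = _
      norm_num [useq]
      linear_combination (β*γ^2 - β^2*γ - α*γ^2 + α*β^2 + α^2*γ - α^2*β)*h1
    | 1 =>
      show ((useq a0 b0 2 : ℤ) : R) * _ = _
      norm_num [useq]
      linear_combination (β*γ^3 - β^3*γ - α*γ^3 + α*β^3 + α^3*γ - α^3*β)*h1 -
        ((α-β)*(α-γ)*(β-γ))*ha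
    | 2 =>
      show ((useq a0 b0 3 : ℤ) : R) * _ = _
      norm_num [useq]
      linear_combination (β*γ^4 - β^2*γ^3 + β^3*γ^2 - β^4*γ - α*γ^4 + α*β^4 + α^2*γ^3
        - α^2*β^3 - α^3*γ^2 + α^3*β^2 + α^4*γ - α^4*β)*h1 +
        ((α-β)*(α-γ)*(β-γ))*hb
    | (m+3) =>
      have ih1 := ih m (by omega)
      have ih2 := ih (m+1) (by omega)
      show ((useq a0 b0 (m+4) : ℤ) : R) * _ = _
      have hdef : useq a0 b0 (m+4) = b0 * useq a0 b0 (m+1) - a0 * useq a0 b0 (m+2) := rfl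
      rw [hdef]
      push_cast
      linear_combination (b0:R)*ih1 - (a0:R)*ih2 - (α^(m+3)*(β-γ))*hα +
        (β^(m+3)*(α-γ))*hβ - (γ^(m+3)*(α-β))*hγ

lemma frob_fixed {p : ℕ} [Fact p.Prime] {L : Type*} [Field L] [Algebra (ZMod p) L]
    {x : L} (hx : x ^ p = x) : ∃ c : ZMod p, algebraMap (ZMod p) L c = x := by
  classical
  by_contra hc
  push_neg at hc
  have hinj : Function.Injective (algebraMap (ZMod p) L) := (algebraMap (ZMod p) L).injective
  set S : Finset L := Finset.univ.image (algebraMap (ZMod p) L) with hS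
  have hxS : x ∉ S := by
    simp only [hS, Finset.mem_image, Finset.mem_univ, true_and]
    rintro ⟨c, hcx⟩
    exact hc c hcx
  have hpp : 1 < p := (Fact.out : p.Prime).one_lt
  have hcard : (insert x S).card = p + 1 := by
    rw [Finset.card_insert_of_notMem hxS, Finset.card_image_of_injective _ hinj,
      Finset.card_univ, ZMod.card]
  set g : Polynomial L := Polynomial.X ^ p - Polynomial.X with hg
  have hdeg : g.natDegree = p := by
    rw [hg]
    compute_degree!
    · rw [if_neg (by omega : ¬ 1 = p)]
      norm_num
    · omega
  have hg0 : g ≠ 0 := by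
    intro h
    rw [h, Polynomial.natDegree_zero] at hdeg
    omega
  have hsub : insert x S ⊆ g.roots.toFinset := by
    intro y hy
    have hyp : y ^ p = y := by
      rcases Finset.mem_insert.mp hy with h | h
      · rw [h]; exact hx
      · simp only [hS, Finset.mem_image, Finset.mem_univ, true_and] at h
        obtain ⟨c, rfl⟩ := h
        rw [← map_pow, ZMod.pow_card]
    rw [Multiset.mem_toFinset, Polynomial.mem_roots hg0]
    simp [Polynomial.IsRoot, hg, hyp]
  have h1 := Finset.card_le_card hsub
  have h2 : g.roots.toFinset.card ≤ Multiset.card g.roots := g.roots.toFinset_card_le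
  have h3 : Multiset.card g.roots ≤ p := by
    have := g.card_roots' 
    omega
  omega

lemma no_double_root {p : ℕ} {L : Type*} [Field L]
    (h3 : (3:L) ≠ 0) (h2 : (2:L) ≠ 0) (hm2 : ((-2 : L)) ^ p = -2)
    {aL bL : L} (hbne : bL ≠ 0)
    (hfrob : ∀ t : L, t^3 + aL*t = bL → (t^p)^3 + aL*(t^p) = bL)
    (hnr : ∀ t : L, t^p = t → t^3 + aL*t ≠ bL)
    (t s : L) (h1 : t + t + s = 0) (ha : aL = t*t + t*s + t*s) (hb : bL = t*t*s) : False := by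
  have hs : s = (-2)*t := by linear_combination h1
  subst hs
  have hroot : t^3 + aL*t = bL := by linear_combination t*ha - hb
  have hfact : ∀ x : L, x^3 + aL*x - bL = (x-t)*(x-t)*(x+2*t) := by
    intro x; linear_combination x*ha - hb
  have h6 : (t^p - t)*(t^p - t)*(t^p + 2*t) = 0 := by
    rw [← hfact (t^p)]; linear_combination hfrob t hroot
  have ht0 : t = 0 := by
    rcases mul_eq_zero.mp h6 with h | h
    · have htp : t^p = t := by
        rcases mul_eq_zero.mp h with h' | h' <;> linear_combination h'
      exact absurd hroot (hnr t htp)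
    · have htp : t^p = (-2)*t := by linear_combination h
      have hsr : ((-2)*t)^3 + aL*((-2)*t) = bL := by linear_combination ((-2)*t)*ha - hb
      have hsp := hfrob _ hsr
      have hval : (((-2)*t : L))^p = 4*t := by rw [mul_pow, hm2, htp]; ring
      rw [hval] at hsp
      have h8 : (4*t - t)*(4*t - t)*(4*t + 2*t) = 0 := by
        rw [← hfact (4*t)]; linear_combination hsp
      rcases mul_eq_zero.mp h8 with h' | h'
      · have h9 : (3:L)*t = 0 := by
          rcases mul_eq_zero.mp h' with h'' | h'' <;> linear_combination h''
        rcases mul_eq_zero.mp h9 with h'' | h''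
        · exact absurd h'' h3
        · exact h''
      · have h9 : (2:L)*((3:L)*t) = 0 := by linear_combination h'
        rcases mul_eq_zero.mp h9 with h'' | h''
        · exact absurd h'' h2
        · rcases mul_eq_zero.mp h'' with h3' | h3'
          · exact absurd h3' h3
          · exact h3'
  apply hbne
  rw [hb, ht0]; ring

lemma zmod_crit (p : ℕ) [Fact p.Prime] (hp : 3 < p) (a0 b0 : ℤ)
    (han : (a0 : ZMod p) ≠ 0) (hbn : (b0 : ZMod p) ≠ 0) :
    (∃ r : ZMod p, r^3 + (a0 : ZMod p)*r = (b0 : ZMod p)) ↔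
      ¬ (((-4*a0^3 - 27*b0^2) * useq a0 b0 (p-2)^2 : ℤ) : ZMod p) = ((9*a0^2 : ℤ) : ZMod p) := by
  have hpp : p.Prime := Fact.out
  set L := AlgebraicClosure (ZMod p) with hLdef
  have hinj : Function.Injective (algebraMap (ZMod p) L) := (algebraMap (ZMod p) L).injective
  haveI hchar : CharP L p := charP_of_injective_algebraMap hinj p
  haveI : ExpChar L p := ExpChar.prime hpp
  have hpodd : Odd p := hpp.odd_of_ne_two (by omega)
  have hmapa : algebraMap (ZMod p) L ((a0 : ZMod p)) = ((a0 : ℤ) : L) := map_intCast _ a0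
  have hmapb : algebraMap (ZMod p) L ((b0 : ZMod p)) = ((b0 : ℤ) : L) := map_intCast _ b0
  have haLne : ((a0 : ℤ) : L) ≠ 0 := by
    rw [← hmapa]
    exact fun h => han (hinj (by rw [h, map_zero]))
  have hbLne : ((b0 : ℤ) : L) ≠ 0 := by
    rw [← hmapb]
    exact fun h => hbn (hinj (by rw [h, map_zero]))
  have h3L : (3:L) ≠ 0 := by
    intro h
    have h' : ((3:ℕ) : L) = 0 := by exact_mod_cast h
    have := (CharP.cast_eq_zero_iff L p 3).mp h'
    have := Nat.le_of_dvd (by norm_num) this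
    omega
  have h2L : (2:L) ≠ 0 := by
    intro h
    have h' : ((2:ℕ) : L) = 0 := by exact_mod_cast h
    have := (CharP.cast_eq_zero_iff L p 2).mp h'
    have := Nat.le_of_dvd (by norm_num) this
    omega
  have h9L : (9:L) ≠ 0 := by
    intro h
    have h' : (3:L)*3 = 0 := by linear_combination h
    rcases mul_eq_zero.mp h' with h'' | h'' <;> exact h3L h''
  have haF : ((a0 : ℤ) : L) ^ p = ((a0 : ℤ) : L) := by
    rw [← hmapa, ← map_pow, ZMod.pow_card]
  have hbF : ((b0 : ℤ) : L) ^ p = ((b0 : ℤ) : L) := by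
    rw [← hmapb, ← map_pow, ZMod.pow_card]
  have hm2 : ((-2 : L)) ^ p = -2 := by
    rw [show ((-2:L)) = (((-2:ℤ) : ℤ) : L) by norm_num,
      ← map_intCast (algebraMap (ZMod p) L) (-2), ← map_pow, ZMod.pow_card]
  have hfrob : ∀ t : L, t^3 + ((a0 : ℤ):L)*t = ((b0 : ℤ):L) →
      (t^p)^3 + ((a0 : ℤ):L)*(t^p) = ((b0 : ℤ):L) := by
    intro t ht
    have h := congrArg (fun y : L => y ^ p) ht
    rw [add_pow_char, mul_pow, haF, hbF, ← pow_mul, mul_comm 3 p, pow_mul] at h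
    exact h
  -- roots of the cubic
  obtain ⟨α, hαr⟩ : ∃ α : L, (Polynomial.X^3 + Polynomial.C ((a0:ℤ):L) * Polynomial.X
      - Polynomial.C ((b0:ℤ):L)).IsRoot α := by
    apply IsAlgClosed.exists_root
    have : (Polynomial.X^3 + Polynomial.C ((a0:ℤ):L) * Polynomial.X
        - Polynomial.C ((b0:ℤ):L)).degree = 3 := by
      compute_degree!
    rw [this]
    norm_num
  have hα : α^3 + ((a0:ℤ):L)*α - ((b0:ℤ):L) = 0 := by
    simpa using hαr
  obtain ⟨β, hβr⟩ : ∃ β : L, (Polynomial.X^2 + Polynomial.C α * Polynomial.X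
      + Polynomial.C (α^2 + ((a0:ℤ):L))).IsRoot β := by
    apply IsAlgClosed.exists_root
    have : (Polynomial.X^2 + Polynomial.C α * Polynomial.X
        + Polynomial.C (α^2 + ((a0:ℤ):L))).degree = 2 := by
      compute_degree!
    rw [this]
    norm_num
  have hβ : β^2 + α*β + (α^2 + ((a0:ℤ):L)) = 0 := by
    simpa using hβr
  set γ : L := -α - β with hγdef
  have he1 : α + β + γ = 0 := by rw [hγdef]; ring
  have he2 : ((a0:ℤ):L) = α*β + α*γ + β*γ := by rw [hγdef]; linear_combination hβ
  have he3 : ((b0:ℤ):L) = α*β*γ := by rw [hγdef]; linear_combination -hα + α*hβ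
  have hfact : ∀ x : L, x^3 + ((a0:ℤ):L)*x - ((b0:ℤ):L) = (x-α)*(x-β)*(x-γ) := by
    intro x; linear_combination x^2*he1 + x*he2 - he3
  have hαroot : α^3 + ((a0:ℤ):L)*α = ((b0:ℤ):L) := by linear_combination hα
  have hβroot : β^3 + ((a0:ℤ):L)*β = ((b0:ℤ):L) := by linear_combination hfact β
  have hγroot : γ^3 + ((a0:ℤ):L)*γ = ((b0:ℤ):L) := by linear_combination hfact γ
  have hγp : γ^p = -(α^p) - β^p := by
    rw [hγdef, show (-α-β : L) = -(α+β) by ring, Odd.neg_pow hpodd, add_pow_char]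
    ring
  have hkey : ((useq a0 b0 (p-2) : ℤ) : L) * ((α-β)*(α-γ)*(β-γ)) =
      α^p*(β-γ) - β^p*(α-γ) + γ^p*(α-β) := by
    have h := useq_key a0 b0 α β γ he1 he2 he3 (p-3)
    rw [show p-3+1 = p-2 by omega, show p-3+3 = p by omega] at h
    exact h
  have hD : -4*((a0:ℤ):L)^3 - 27*((b0:ℤ):L)^2 = ((α-β)*(α-γ)*(β-γ))^2 := by
    linear_combination (-4*(((a0:ℤ):L)^2 + ((a0:ℤ):L)*(α*β+α*γ+β*γ) + (α*β+α*γ+β*γ)^2))*he2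
      - (27*(((b0:ℤ):L) + α*β*γ))*he3 + ((-1)*β^2*γ^3 + (-1)*β^3*γ^2 + 2*α*β*γ^3
        + (-15)*α*β^2*γ^2 + 2*α*β^3*γ + (-1)*α^2*γ^3 + (-15)*α^2*β*γ^2 + (-15)*α^2*β^2*γ
        + (-1)*α^2*β^3 + (-1)*α^3*γ^2 + 2*α^3*β*γ + (-1)*α^3*β^2)*he1
  -- frobenius injectivity on L
  have hfinj : ∀ x y : L, x^p = y^p → x = y := by
    intro x y hxy
    have := frobenius_inj L p (a₁ := x) (a₂ := y)
    simp only [frobenius_def] at this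
    exact this hxy
  -- the criterion equality transferred to L
  have hiffEq : ((((-4*a0^3 - 27*b0^2) * useq a0 b0 (p-2)^2 : ℤ) : ZMod p) = ((9*a0^2 : ℤ) : ZMod p))
      ↔ (-4*((a0:ℤ):L)^3 - 27*((b0:ℤ):L)^2) * ((useq a0 b0 (p-2) : ℤ) : L)^2
        = 9*((a0:ℤ):L)^2 := by
    rw [← hinj.eq_iff, map_intCast, map_intCast]
    push_cast
    constructor <;> intro h <;> linear_combination h
  rw [hiffEq]
  constructor
  · -- a root exists: criterion equality fails
    rintro ⟨r, hr⟩
    intro hEqL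
    by_cases hdeg0 : (α-β)*(α-γ)*(β-γ) = 0
    · rw [hD, hdeg0] at hEqL
      have h9a : (9:L)*((a0:ℤ):L)^2 ≠ 0 := mul_ne_zero h9L (pow_ne_zero _ haLne)
      exact h9a (by linear_combination -hEqL)
    · have hαβ : α ≠ β := fun h => hdeg0 (by rw [h]; ring)
      have hαγ : α ≠ γ := fun h => hdeg0 (by rw [h]; ring)
      have hβγ : β ≠ γ := fun h => hdeg0 (by rw [h]; ring)
      have hβne : β ≠ 0 := by
        intro h; apply hbLne; rw [he3, h]; ring
      have hγne : γ ≠ 0 := by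
        intro h; apply hbLne; rw [he3, h]; ring
      have hαne : α ≠ 0 := by
        intro h; apply hbLne; rw [he3, h]; ring
      set t : L := algebraMap (ZMod p) L r with htdef
      have htf : t^p = t := by rw [htdef, ← map_pow, ZMod.pow_card]
      have htr : t^3 + ((a0:ℤ):L)*t = ((b0:ℤ):L) := by
        have := congrArg (algebraMap (ZMod p) L) hr
        rw [map_add, map_pow, map_mul, hmapa, hmapb] at this
        exact this
      have hft : (t-α)*(t-β)*(t-γ) = 0 := by
        rw [← hfact t]; linear_combination htr
      have hsq : (((useq a0 b0 (p-2) : ℤ) : L) * ((α-β)*(α-γ)*(β-γ)))^2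
          = 9*((a0:ℤ):L)^2 := by
        rw [hD] at hEqL; linear_combination hEqL
      -- helper: all roots fixed is impossible
      have hallfix : α^p = α → β^p = β → γ^p = γ → False := by
        intro ha' hb' hc'
        rw [ha', hb', hc'] at hkey
        have hV0 : α*(β-γ) - β*(α-γ) + γ*(α-β) = 0 := by ring
        rw [hV0] at hkey
        have hu0 : ((useq a0 b0 (p-2) : ℤ) : L) = 0 :=
          (mul_eq_zero.mp hkey).resolve_right hdeg0
        rw [hu0] at hEqL
        have h9a : (9:L)*((a0:ℤ):L)^2 ≠ 0 := mul_ne_zero h9L (pow_ne_zero _ haLne)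
        exact h9a (by linear_combination -hEqL)
      rcases mul_eq_zero.mp hft with hft' | hft'
      · rcases mul_eq_zero.mp hft' with hft'' | hft''
        · -- t = α : α is fixed
          have hfixα : α^p = α := by
            have : t = α := by linear_combination hft''
            rw [← this, htf, this]
          have hβroots : (β^p-α)*(β^p-β)*(β^p-γ) = 0 := by
            rw [← hfact (β^p)]; linear_combination hfrob β hβroot
          rcases mul_eq_zero.mp hβroots with h' | h'
          · rcases mul_eq_zero.mp h' with h'' | h''
            · -- β^p = α = α^p impossible
              have : β = α := hfinj β α (by rw [hfixα]; linear_combination h'')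
              exact hαβ this.symm
            · -- β^p = β, so γ^p = γ : all fixed
              have hfixβ : β^p = β := by linear_combination h''
              have hfixγ : γ^p = γ := by rw [hγp, hfixα, hfixβ, hγdef]
              exact hallfix hfixα hfixβ hfixγ
          · -- β^p = γ : transposition T1
            have hc2 : β^p = γ := by linear_combination h'
            have hc3 : γ^p = β := by rw [hγp, hfixα, hc2, hγdef]; ring
            rw [hfixα, hc2, hc3] at hkey
            rw [hkey] at hsq
            have hfac : (-3*γ*(α-γ)) * (3*β*(α-β)) = 0 := by
              linear_combination hsq + (9*(((a0:ℤ):L) + (α*β+α*γ+β*γ)))*he2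
                + ((-1)*γ^3 + β*γ^2 + β^2*γ + (-1)*β^3 + 5*α*γ^2 + 17*α*β*γ + 5*α*β^2)*he1
            rcases mul_eq_zero.mp hfac with h'' | h''
            · rcases mul_eq_zero.mp h'' with h3' | h3'
              · rcases mul_eq_zero.mp h3' with h4 | h4
                · exact h3L (by linear_combination -h4)
                · exact hγne h4
              · exact hαγ (sub_eq_zero.mp h3')
            · rcases mul_eq_zero.mp h'' with h3' | h3'
              · rcases mul_eq_zero.mp h3' with h4 | h4
                · exact h3L h4
                · exact hβne h4
              · exact hαβ (sub_eq_zero.mp h3')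
        · -- t = β : β is fixed
          have hfixβ : β^p = β := by
            have : t = β := by linear_combination hft''
            rw [← this, htf, this]
          have hαroots : (α^p-α)*(α^p-β)*(α^p-γ) = 0 := by
            rw [← hfact (α^p)]; linear_combination hfrob α hαroot
          rcases mul_eq_zero.mp hαroots with h' | h'
          · rcases mul_eq_zero.mp h' with h'' | h''
            · -- α^p = α : all fixed
              have hfixα : α^p = α := by linear_combination h''
              have hfixγ : γ^p = γ := by rw [hγp, hfixα, hfixβ, hγdef]
              exact hallfix hfixα hfixβ hfixγ
            · -- α^p = β = β^p impossible
              have : α = β := hfinj α β (by rw [hfixβ]; linear_combination h'')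
              exact hαβ this
          · -- α^p = γ : transposition T2
            have hc1 : α^p = γ := by linear_combination h'
            have hc3 : γ^p = α := by rw [hγp, hc1, hfixβ, hγdef]; ring
            rw [hc1, hfixβ, hc3] at hkey
            rw [hkey] at hsq
            have hfac : (-3*α*(β-α)) * (3*γ*(β-γ)) = 0 := by
              linear_combination hsq + (9*(((a0:ℤ):L) + (α*β+α*γ+β*γ)))*he2
                + ((-1)*γ^3 + 5*β*γ^2 + α*γ^2 + 17*α*β*γ + α^2*γ + 5*α^2*β + (-1)*α^3)*he1
            rcases mul_eq_zero.mp hfac with h'' | h''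
            · rcases mul_eq_zero.mp h'' with h3' | h3'
              · rcases mul_eq_zero.mp h3' with h4 | h4
                · exact h3L (by linear_combination -h4)
                · exact hαne h4
              · exact hαβ (sub_eq_zero.mp h3').symm
            · rcases mul_eq_zero.mp h'' with h3' | h3'
              · rcases mul_eq_zero.mp h3' with h4 | h4
                · exact h3L h4
                · exact hγne h4
              · exact hβγ (sub_eq_zero.mp h3')
      · -- t = γ : γ is fixed
        have hfixγ : γ^p = γ := by
          have : t = γ := by linear_combination hft'
          rw [← this, htf, this]
        have hαroots : (α^p-α)*(α^p-β)*(α^p-γ) = 0 := by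
          rw [← hfact (α^p)]; linear_combination hfrob α hαroot
        rcases mul_eq_zero.mp hαroots with h' | h'
        · rcases mul_eq_zero.mp h' with h'' | h''
          · -- α^p = α : all fixed
            have hfixα : α^p = α := by linear_combination h''
            have hfixβ : β^p = β := by
              have h5 : β = -α - γ := by linear_combination he1
              rw [h5, show (-α-γ : L) = -(α+γ) by ring, Odd.neg_pow hpodd, add_pow_char,
                hfixα, hfixγ]
            exact hallfix hfixα hfixβ hfixγ
          · -- α^p = β : transposition T3
            have hc1 : α^p = β := by linear_combination h''
            have hc2 : β^p = α := by
              have h5 : β = -α - γ := by linear_combination he1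
              rw [h5, show (-α-γ : L) = -(α+γ) by ring, Odd.neg_pow hpodd, add_pow_char,
                hc1, hfixγ]
              linear_combination -he1
            rw [hc1, hc2, hfixγ] at hkey
            rw [hkey] at hsq
            have hfac : (-3*β*(γ-β)) * (3*α*(γ-α)) = 0 := by
              linear_combination hsq + (9*(((a0:ℤ):L) + (α*β+α*γ+β*γ)))*he2
                + (5*β^2*γ + (-1)*β^3 + 17*α*β*γ + α*β^2 + 5*α^2*γ + α^2*β + (-1)*α^3)*he1
            rcases mul_eq_zero.mp hfac with h'' | h''
            · rcases mul_eq_zero.mp h'' with h3' | h3'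
              · rcases mul_eq_zero.mp h3' with h4 | h4
                · exact h3L (by linear_combination -h4)
                · exact hβne h4
              · exact hβγ (sub_eq_zero.mp h3').symm
            · rcases mul_eq_zero.mp h'' with h3' | h3'
              · rcases mul_eq_zero.mp h3' with h4 | h4
                · exact h3L h4
                · exact hαne h4
              · exact hαγ (sub_eq_zero.mp h3').symm
        · -- α^p = γ = γ^p impossible
          have : α = γ := hfinj α γ (by rw [hfixγ]; linear_combination h')
          exact hαγ this
  · -- no root: criterion equality holds (contrapositive)
    intro hne
    by_contra hnoroot
    push_neg at hnoroot
    apply hne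
    have hnr : ∀ s : L, s^p = s → s^3 + ((a0:ℤ):L)*s ≠ ((b0:ℤ):L) := by
      intro s hsf hsr
      obtain ⟨c, rfl⟩ := frob_fixed hsf
      apply hnoroot c
      apply hinj
      rw [map_add, map_pow, map_mul, hmapa, hmapb]
      exact hsr
    have hαβ : α ≠ β := by
      intro h
      exact no_double_root h3L h2L hm2 hbLne hfrob hnr α γ
        (by linear_combination he1 + h) (by linear_combination he2 - (α+γ)*h)
        (by linear_combination he3 - α*γ*h)
    have hαγ : α ≠ γ := by
      intro h
      exact no_double_root h3L h2L hm2 hbLne hfrob hnr α β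
        (by linear_combination he1 + h) (by linear_combination he2 - (α+β)*h)
        (by linear_combination he3 - α*β*h)
    have hβγ : β ≠ γ := by
      intro h
      exact no_double_root h3L h2L hm2 hbLne hfrob hnr β α
        (by linear_combination he1 + h) (by linear_combination he2 - (α+β)*h)
        (by linear_combination he3 - α*β*h)
    have hdeg0 : (α-β)*(α-γ)*(β-γ) ≠ 0 :=
      mul_ne_zero (mul_ne_zero (sub_ne_zero.mpr hαβ) (sub_ne_zero.mpr hαγ))
        (sub_ne_zero.mpr hβγ)
    have hαroots : (α^p-α)*(α^p-β)*(α^p-γ) = 0 := by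
      rw [← hfact (α^p)]; linear_combination hfrob α hαroot
    have hβroots : (β^p-α)*(β^p-β)*(β^p-γ) = 0 := by
      rw [← hfact (β^p)]; linear_combination hfrob β hβroot
    have hαpne : α^p ≠ α := fun h => hnr α h hαroot
    have hβpne : β^p ≠ β := fun h => hnr β h hβroot
    have hγpne : γ^p ≠ γ := fun h => hnr γ h hγroot
    have hVsq : ∀ V : L, ((useq a0 b0 (p-2) : ℤ) : L) * ((α-β)*(α-γ)*(β-γ)) = V →
        V^2 = 9*((a0:ℤ):L)^2 →
        (-4*((a0:ℤ):L)^3 - 27*((b0:ℤ):L)^2) * ((useq a0 b0 (p-2) : ℤ) : L)^2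
          = 9*((a0:ℤ):L)^2 := by
      intro V hV hV2
      rw [hD]
      calc ((α-β)*(α-γ)*(β-γ))^2 * ((useq a0 b0 (p-2) : ℤ) : L)^2
          = (((useq a0 b0 (p-2) : ℤ) : L) * ((α-β)*(α-γ)*(β-γ)))^2 := by ring
        _ = V^2 := by rw [hV]
        _ = 9*((a0:ℤ):L)^2 := hV2
    rcases mul_eq_zero.mp hαroots with h' | h'
    · rcases mul_eq_zero.mp h' with h'' | h''
      · exact absurd (by linear_combination h'' : α^p = α) hαpne
      · -- α^p = β : cycle α→β→γ→α
        have hc1 : α^p = β := by linear_combination h''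
        have hc2 : β^p = γ := by
          rcases mul_eq_zero.mp hβroots with h3' | h3'
          · rcases mul_eq_zero.mp h3' with h4 | h4
            · -- β^p = α : then γ^p = γ, contradiction
              exfalso
              apply hγpne
              rw [hγp, hc1, show β^p = α by linear_combination h4, hγdef]
              ring
            · exact absurd (by linear_combination h4 : β^p = β) hβpne
          · linear_combination h3'
        have hc3 : γ^p = α := by rw [hγp, hc1, hc2, hγdef]; ring
        rw [hc1, hc2, hc3] at hkey
        apply hVsq _ hkey
        have hV : β*(β-γ) - γ*(α-γ) + α*(α-β) = -3*((a0:ℤ):L) := by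
          linear_combination (α+β+γ)*he1 + 3*he2
        rw [hV]; ring
    · -- α^p = γ : cycle α→γ→β→α
      have hc1 : α^p = γ := by linear_combination h'
      have hc2 : β^p = α := by
        rcases mul_eq_zero.mp hβroots with h3' | h3'
        · rcases mul_eq_zero.mp h3' with h4 | h4
          · linear_combination h4
          · exact absurd (by linear_combination h4 : β^p = β) hβpne
        · -- β^p = γ = α^p impossible
          exfalso
          exact hαβ (hfinj α β (by rw [hc1]; linear_combination -h3'))
      have hc3 : γ^p = β := by rw [hγp, hc1, hc2, hγdef]; ring
      rw [hc1, hc2, hc3] at hkey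
      apply hVsq _ hkey
      have hV : γ*(β-γ) - α*(α-γ) + β*(α-β) = 3*((a0:ℤ):L) := by
        linear_combination (-(α+β+γ))*he1 - 3*he2
      rw [hV]; ring

lemma exists_nondeg_root (p : ℕ) [Fact p.Prime] (hp : 3 < p) (A B : ZMod p) (hA : A ≠ 0)
    (h : ∃ r : ZMod p, r^3 + A*r = B) :
    ∃ r : ZMod p, r^3 + A*r = B ∧ 3*r^2 + A ≠ 0 := by
  have h3 : (3 : ZMod p) ≠ 0 := by
    intro h
    have h' : ((3:ℕ) : ZMod p) = 0 := by exact_mod_cast h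
    rw [ZMod.natCast_eq_zero_iff] at h'
    have := Nat.le_of_dvd (by norm_num) h'
    omega
  obtain ⟨r, hr⟩ := h
  by_cases hd : 3*r^2 + A = 0
  · refine ⟨-2*r, by linear_combination hr - 3*r*hd, ?_⟩
    intro h9
    have hr0 : r ≠ 0 := by
      intro h0
      apply hA
      rw [h0] at hd
      linear_combination hd
    have h99 : (3:ZMod p)*((3:ZMod p)*(r*r)) = 0 := by linear_combination h9 - hd
    rcases mul_eq_zero.mp h99 with h' | h'
    · exact h3 h'
    · rcases mul_eq_zero.mp h' with h'' | h''
      · exact h3 h''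
      · rcases mul_eq_zero.mp h'' with h''' | h''' <;> exact hr0 h'''
  · exact ⟨r, hr, hd⟩

lemma unit_cubic (p : ℕ) [Fact p.Prime] (hp : 3 < p) (A B : ℤ_[p])
    (hA : PadicInt.toZMod A ≠ 0) :
    (∃ z : ℤ_[p], z^3 + A*z = B) ↔
      ∃ r : ZMod p, r^3 + (PadicInt.toZMod A)*r = PadicInt.toZMod B := by
  have hker : ∀ x : ℤ_[p], PadicInt.toZMod x = 0 ↔ ‖x‖ < 1 := by
    intro x
    rw [PadicInt.norm_lt_one_iff_dvd, ← Ideal.mem_span_singleton,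
      ← PadicInt.maximalIdeal_eq_span_p, ← PadicInt.ker_toZMod, RingHom.mem_ker]
  constructor
  · rintro ⟨z, hz⟩
    exact ⟨PadicInt.toZMod z, by rw [← map_pow, ← map_mul, ← map_add, hz]⟩
  · intro h
    obtain ⟨r, hr, hd⟩ := exists_nondeg_root p hp _ _ hA h
    set F : Polynomial ℤ_[p] :=
      Polynomial.X^3 + Polynomial.C A * Polynomial.X - Polynomial.C B with hF
    set z₀ : ℤ_[p] := ((r.val : ℕ) : ℤ_[p]) with hz₀
    have htz : PadicInt.toZMod z₀ = r := by
      rw [hz₀, map_natCast]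
      exact ZMod.natCast_rightInverse r
    have hFeval : ∀ z : ℤ_[p], F.eval z = z^3 + A*z - B := by
      intro z
      rw [hF]
      simp
    have hFderiv : F.derivative.eval z₀ = 3*z₀^2 + A := by
      rw [hF]
      simp [Polynomial.derivative_sub, Polynomial.derivative_add, Polynomial.derivative_mul]
      norm_num
    have hnormd : ‖F.derivative.eval z₀‖ = 1 := by
      rcases lt_or_eq_of_le (PadicInt.norm_le_one (F.derivative.eval z₀)) with h' | h'
      · exfalso
        apply hd
        have := (hker _).mpr h'
        rw [hFderiv] at this
        have h2 : PadicInt.toZMod (3*z₀^2 + A) = 3*r^2 + PadicInt.toZMod A := by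
          rw [map_add, map_mul, map_pow, htz, map_ofNat]
        rw [← h2]
        exact this
      · exact h'
    have hnorm : ‖F.eval z₀‖ < ‖F.derivative.eval z₀‖^2 := by
      rw [hnormd, one_pow]
      rw [← hker]
      rw [hFeval, map_sub, map_add, map_mul, map_pow, htz]
      rw [sub_eq_zero]
      exact hr
    obtain ⟨z, hz, -⟩ := hensels_lemma hnorm
    refine ⟨z, ?_⟩
    rw [Polynomial.coe_aeval_eq_eval, hFeval] at hz
    linear_combination hz

theorem cubic_int_solvable_iff_of_eq (p : ℕ) [Fact p.Prime] (hp : 3 < p)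
    (a b : ℚ_[p]) (ha : a ≠ 0) (hb : b ≠ 0)
    (hab : ‖a‖ ^ 3 = ‖b‖ ^ 2) (hb1 : ‖b‖ ^ 2 ≤ 1)
    (a0 b0 : ℤ) (ha0 : isFirstDigit p a a0) (hb0 : isFirstDigit p b b0) :
    (∃ x : ℚ_[p], ‖x‖ ≤ 1 ∧ x ^ 3 + a * x = b) ↔
      ¬ Int.ModEq (p : ℤ)
        ((-4 * a0 ^ 3 - 27 * b0 ^ 2) * useq a0 b0 (p - 2) ^ 2) (9 * a0 ^ 2) := by
  obtain ⟨ha01, ha02, ha03⟩ := ha0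
  obtain ⟨hb01, hb02, hb03⟩ := hb0
  have hpp : p.Prime := Fact.out
  have hp1R : (1:ℝ) < (p:ℝ) := by exact_mod_cast hpp.one_lt
  have hp0R : (0:ℝ) < (p:ℝ) := by positivity
  have hpQ : (p : ℚ_[p]) ≠ 0 := by
    have : ((p:ℕ) : ℚ_[p]) ≠ 0 := Nat.cast_ne_zero.mpr hpp.ne_zero
    exact_mod_cast this
  have hna : ‖a‖ = (p:ℝ)^(-a.valuation) := Padic.norm_eq_zpow_neg_valuation ha
  have hnb : ‖b‖ = (p:ℝ)^(-b.valuation) := Padic.norm_eq_zpow_neg_valuation hb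
  have hval : 3 * a.valuation = 2 * b.valuation := by
    rw [hna, hnb, ← zpow_natCast _ 3, ← zpow_natCast _ 2, ← zpow_mul, ← zpow_mul] at hab
    have h := (zpow_right_inj₀ hp0R (ne_of_gt hp1R)).mp hab
    push_cast at h
    omega
  have hble : ‖b‖ ≤ 1 := by nlinarith [norm_nonneg b]
  have hvb0 : 0 ≤ b.valuation := (Padic.norm_le_one_iff_val_nonneg b).mp hble
  set k : ℤ := b.valuation - a.valuation with hk
  have hva : a.valuation = 2*k := by omega
  have hvb : b.valuation = 3*k := by omega
  have hk0 : 0 ≤ k := by omega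
  set g : ℚ_[p] := (p : ℚ_[p])^k with hg
  have hgne : g ≠ 0 := zpow_ne_zero _ hpQ
  have hgnorm : ‖g‖ = (p:ℝ)^(-k) := Padic.norm_p_zpow k
  set A : ℚ_[p] := a * (p : ℚ_[p])^(-a.valuation) with hA
  set B : ℚ_[p] := b * (p : ℚ_[p])^(-b.valuation) with hB
  have hAg : A * g^2 = a := by
    rw [hA, hg, hva, ← zpow_natCast _ 2, ← zpow_mul, mul_assoc,
      ← zpow_add₀ hpQ, show -(2*k) + k*(2:ℕ) = 0 by push_cast; ring, zpow_zero, mul_one]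
  have hBg : B * g^3 = b := by
    rw [hB, hg, hvb, ← zpow_natCast _ 3, ← zpow_mul, mul_assoc,
      ← zpow_add₀ hpQ, show -(3*k) + k*(3:ℕ) = 0 by push_cast; ring, zpow_zero, mul_one]
  have hAnorm : ‖A‖ = 1 := by
    rw [hA, norm_mul, hna, Padic.norm_p_zpow, ← zpow_add₀ (ne_of_gt hp0R)]
    simp
  have hBnorm : ‖B‖ = 1 := by
    rw [hB, norm_mul, hnb, Padic.norm_p_zpow, ← zpow_add₀ (ne_of_gt hp0R)]
    simp
  have hAle : ‖A‖ ≤ 1 := le_of_eq hAnorm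
  have hBle : ‖B‖ ≤ 1 := le_of_eq hBnorm
  have step1 : (∃ x : ℚ_[p], ‖x‖ ≤ 1 ∧ x ^ 3 + a * x = b) ↔
      (∃ y : ℚ_[p], ‖y‖ ≤ 1 ∧ y ^ 3 + A * y = B) := by
    constructor
    · rintro ⟨x, hx1, hx2⟩
      have hpk0 : (0:ℝ) < (p:ℝ)^(-k) := by positivity
      have hxk : ‖x‖ ≤ (p:ℝ)^(-k) := by
        by_contra hgt
        push_neg at hgt
        have hx0 : (0:ℝ) < ‖x‖ := lt_trans hpk0 hgt
        have hexp2 : (p:ℝ)^(-(2*k)) = ((p:ℝ)^(-k))^2 := by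
          rw [← zpow_natCast _ 2, ← zpow_mul]; congr 1; push_cast; ring
        have hexp3 : (p:ℝ)^(-(3*k)) = ((p:ℝ)^(-k))^3 := by
          rw [← zpow_natCast _ 3, ← zpow_mul]; congr 1; push_cast; ring
        have h1 : (p:ℝ)^(-(2*k)) * ‖x‖ < ‖x‖^3 := by
          rw [hexp2]
          nlinarith [mul_pos (mul_pos hx0 (sub_pos.mpr hgt)) (add_pos hx0 hpk0)]
        have hne : ‖x^3‖ ≠ ‖a*x‖ := by
          rw [norm_pow, norm_mul, hna, hva]
          exact (ne_of_lt h1).symm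
        have hmax := Padic.add_eq_max_of_ne hne
        rw [hx2] at hmax
        have hblt : ‖x‖^3 ≤ ‖b‖ := by
          rw [hmax, norm_pow]
          exact le_max_left _ _
        have hbv : ‖b‖ = (p:ℝ)^(-(3*k)) := by rw [hnb, hvb]
        rw [hbv, hexp3] at hblt
        nlinarith
      refine ⟨x * g⁻¹, ?_, ?_⟩
      · rw [norm_mul, norm_inv, hgnorm]
        calc ‖x‖ * ((p:ℝ)^(-k))⁻¹ ≤ (p:ℝ)^(-k) * ((p:ℝ)^(-k))⁻¹ :=
              mul_le_mul_of_nonneg_right hxk (by positivity)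
          _ = 1 := mul_inv_cancel₀ (ne_of_gt hpk0)
      · have hgoal : ((x*g⁻¹)^3 + A*(x*g⁻¹)) * g^3 = B * g^3 := by
          have hginv : g * g⁻¹ = 1 := mul_inv_cancel₀ hgne
          calc ((x*g⁻¹)^3 + A*(x*g⁻¹)) * g^3
              = x^3*(g*g⁻¹)^3 + (A*g^2)*x*(g*g⁻¹) := by ring
            _ = x^3 + a*x := by rw [hginv, hAg]; ring
            _ = b := hx2
            _ = B * g^3 := by rw [hBg]
        exact mul_right_cancel₀ (pow_ne_zero 3 hgne) hgoal
    · rintro ⟨y, hy1, hy2⟩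
      refine ⟨y * g, ?_, ?_⟩
      · rw [norm_mul, hgnorm]
        have hle1 : (p:ℝ)^(-k) ≤ 1 := zpow_le_one_of_nonpos₀ (le_of_lt hp1R) (by omega)
        nlinarith [norm_nonneg y, (by positivity : (0:ℝ) ≤ (p:ℝ)^(-k))]
      · have : (y*g)^3 + a*(y*g) = (y^3 + A*y) * g^3 := by
          linear_combination (-(y*g))*hAg
        rw [this, hy2, hBg]
  have hker : ∀ x : ℤ_[p], PadicInt.toZMod x = 0 ↔ ‖x‖ < 1 := by
    intro x
    rw [PadicInt.norm_lt_one_iff_dvd, ← Ideal.mem_span_singleton,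
      ← PadicInt.maximalIdeal_eq_span_p, ← PadicInt.ker_toZMod, RingHom.mem_ker]
  obtain ⟨A', hA'⟩ : ∃ z : ℤ_[p], (z : ℚ_[p]) = A := ⟨⟨A, hAle⟩, rfl⟩
  obtain ⟨B', hB'⟩ : ∃ z : ℤ_[p], (z : ℚ_[p]) = B := ⟨⟨B, hBle⟩, rfl⟩
  have step2 : (∃ y : ℚ_[p], ‖y‖ ≤ 1 ∧ y ^ 3 + A * y = B) ↔
      (∃ z : ℤ_[p], z^3 + A'*z = B') := by
    constructor
    · rintro ⟨y, hy1, hy2⟩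
      refine ⟨⟨y, hy1⟩, ?_⟩
      apply PadicInt.ext
      push_cast
      show y ^ 3 + (A' : ℚ_[p]) * y = B'
      rw [hA', hB']
      exact hy2
    · rintro ⟨z, hz⟩
      refine ⟨(z : ℚ_[p]), z.2, ?_⟩
      have h := congrArg (fun w : ℤ_[p] => (w : ℚ_[p])) hz
      push_cast at h
      rw [hA', hB'] at h
      exact h
  have han : ((a0:ℤ) : ZMod p) ≠ 0 := by
    intro hh
    rw [ZMod.intCast_zmod_eq_zero_iff_dvd] at hh
    have := Int.le_of_dvd (by omega) hh
    omega
  have hbn : ((b0:ℤ) : ZMod p) ≠ 0 := by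
    intro hh
    rw [ZMod.intCast_zmod_eq_zero_iff_dvd] at hh
    have := Int.le_of_dvd (by omega) hh
    omega
  have htzA : PadicInt.toZMod A' = ((a0 : ℤ) : ZMod p) := by
    have hsub : PadicInt.toZMod (A' - (a0 : ℤ_[p])) = 0 := by
      rw [hker]
      rw [PadicInt.norm_def]
      push_cast
      rw [hA']
      exact ha03
    rw [map_sub, map_intCast, sub_eq_zero] at hsub
    exact hsub
  have htzB : PadicInt.toZMod B' = ((b0 : ℤ) : ZMod p) := by
    have hsub : PadicInt.toZMod (B' - (b0 : ℤ_[p])) = 0 := by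
      rw [hker]
      rw [PadicInt.norm_def]
      push_cast
      rw [hB']
      exact hb03
    rw [map_sub, map_intCast, sub_eq_zero] at hsub
    exact hsub
  rw [step1, step2, unit_cubic p hp _ _ (by rw [htzA]; exact han), htzA, htzB,
    zmod_crit p hp a0 b0 han hbn, ← ZMod.intCast_eq_intCast_iff]
end

section
/- Let p > 3 be a prime and let a, b ∈ ℚ_p be nonzero with |a|_p³ > |b|_p². Then the equation x³ + ax = b has a solution x ∈ ℤ_p if and only if |a|_p ≥ |b|_p. -/
theorem cubic_int_solvable_iff_of_gt (p : ℕ) [Fact p.Prime] (hp : 3 < p)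
    (a b : ℚ_[p]) (ha : a ≠ 0) (hb : b ≠ 0)
    (hab : ‖b‖ ^ 2 < ‖a‖ ^ 3) :
    (∃ x : ℚ_[p], ‖x‖ ≤ 1 ∧ x ^ 3 + a * x = b) ↔ ‖b‖ ≤ ‖a‖ := by
  have hapos : 0 < ‖a‖ := norm_pos_iff.mpr ha
  have hbpos : 0 < ‖b‖ := norm_pos_iff.mpr hb
  constructor
  · rintro ⟨x, hx1, hx⟩
    by_contra hba
    push_neg at hba
    have h1 : ‖b‖ ≤ max (‖x‖ ^ 3) (‖a‖ * ‖x‖) := by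
      calc ‖b‖ = ‖x ^ 3 + a * x‖ := by rw [hx]
        _ ≤ max ‖x ^ 3‖ ‖a * x‖ := Padic.nonarchimedean _ _
        _ = max (‖x‖ ^ 3) (‖a‖ * ‖x‖) := by rw [norm_pow, norm_mul]
    have hax : ‖a‖ * ‖x‖ ≤ ‖a‖ := by
      nlinarith [norm_nonneg x]
    have hx3 : ‖b‖ ≤ ‖x‖ ^ 3 := by
      rcases le_max_iff.mp h1 with h | h
      · exact h
      · linarith
    have hble : ‖b‖ ≤ 1 := le_trans hx3 (pow_le_one₀ (norm_nonneg x) hx1)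
    have ha1 : ‖a‖ ≤ 1 := le_trans hba.le hble
    have h2 : ‖a‖ ^ 3 ≤ ‖a‖ ^ 2 := by nlinarith
    have h3 : ‖a‖ ^ 2 < ‖b‖ ^ 2 := by nlinarith
    linarith
  · intro hba
    set t : ℚ_[p] := b ^ 2 / a ^ 3 with ht_def
    have htnorm : ‖t‖ < 1 := by
      rw [ht_def, norm_div, norm_pow, norm_pow, div_lt_one (by positivity)]
      exact hab
    set T : ℤ_[p] := ⟨t, htnorm.le⟩ with hT_def
    have hTnorm : ‖T‖ < 1 := htnorm
    set F : Polynomial ℤ_[p] :=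
      Polynomial.C T * Polynomial.X ^ 3 + Polynomial.X - 1 with hF_def
    have hevalF : F.eval 1 = T := by simp [hF_def]
    have hderivF : F.derivative.eval 1 = 3 * T + 1 := by
      simp [hF_def]; ring
    have h3T : ‖(3 : ℤ_[p]) * T‖ < 1 := by
      calc ‖(3 : ℤ_[p]) * T‖ = ‖(3 : ℤ_[p])‖ * ‖T‖ := norm_mul _ _
        _ ≤ 1 * ‖T‖ := by gcongr; exact PadicInt.norm_le_one _
        _ = ‖T‖ := one_mul _
        _ < 1 := hTnorm
    have hderivnorm : ‖F.derivative.eval 1‖ = 1 := by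
      rw [hderivF]
      refine le_antisymm (PadicInt.norm_le_one _) ?_
      have key : (1 : ℝ) ≤ max ‖3 * T + 1‖ ‖-(3 * T)‖ := by
        calc (1 : ℝ) = ‖(1 : ℤ_[p])‖ := by simp
          _ = ‖(3 * T + 1) + (-(3 * T))‖ := by ring_nf
          _ ≤ max ‖3 * T + 1‖ ‖-(3 * T)‖ := PadicInt.nonarchimedean _ _
      rcases le_max_iff.mp key with h | h
      · exact h
      · rw [norm_neg] at h; linarith
    have hnorm : ‖F.eval 1‖ < ‖F.derivative.eval 1‖ ^ 2 := by
      rw [hevalF, hderivnorm]; simpa using hTnorm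
    obtain ⟨z, hz, hz1, -, -⟩ := hensels_lemma hnorm
    -- the equation T z^3 + z - 1 = 0 in ℤ_p
    have hzeq : T * z ^ 3 + z - 1 = 0 := by
      have := hz
      simpa [hF_def] using this
    -- coerce to ℚ_p
    set w : ℚ_[p] := (z : ℚ_[p]) with hw_def
    have hweq : t * w ^ 3 + w - 1 = 0 := by
      have : ((T * z ^ 3 + z - 1 : ℤ_[p]) : ℚ_[p]) = (0 : ℚ_[p]) := by
        rw [hzeq]; simp
      push_cast at this
      simpa [hw_def] using this
    have hwnorm : ‖w‖ ≤ 1 := PadicInt.norm_le_one z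
    refine ⟨b / a * w, ?_, ?_⟩
    · rw [norm_mul, norm_div]
      calc ‖b‖ / ‖a‖ * ‖w‖
          ≤ 1 * 1 := by
            apply mul_le_mul _ hwnorm (norm_nonneg _) zero_le_one
            rw [div_le_one hapos]; exact hba
        _ = 1 := one_mul 1
    · have ha3 : a ^ 3 ≠ 0 := pow_ne_zero _ ha
      have key : b ^ 2 / a ^ 3 * w ^ 3 + w = 1 := by
        rw [← ht_def]; linear_combination hweq
      field_simp at key ⊢
      linear_combination key
end

section
/- Let p > 3 be a prime and let a, b ∈ ℚ_p be nonzero with |a|_p³ < |b|_p². Then the equation x³ + ax = b has a solution x ∈ ℚ_p if and only if 3 divides the p-adic valuation v_p(b) and b_0^{(p−1)/gcd(3,p−1)} ≡ 1 (mod p), where b_0 is the first digit of b. -/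
open Subgroup in
lemma aux_cyclic_pow {G : Type*} [Group G] [Fintype G] [IsCyclic G] {k : ℕ} (hk : 0 < k)
    (u : G) : (∃ t : G, t ^ k = u) ↔
      u ^ (Fintype.card G / Nat.gcd k (Fintype.card G)) = 1 := by
  set n := Fintype.card G with hn
  set d := Nat.gcd k n with hdd
  have hnpos : 0 < n := Fintype.card_pos
  have hdpos : 0 < d := Nat.gcd_pos_of_pos_left n hk
  have hdk : d ∣ k := Nat.gcd_dvd_left k n
  have hdn : d ∣ n := Nat.gcd_dvd_right k n
  constructor
  · rintro ⟨t, ht⟩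
    obtain ⟨k', hk'⟩ := hdk
    obtain ⟨n', hn'⟩ := hdn
    have h1 : k * (n / d) = k' * n := by
      rw [hk', hn', Nat.mul_div_cancel_left _ hdpos]; ring
    rw [← ht, ← pow_mul, h1, mul_comm, pow_mul, pow_card_eq_one, one_pow]
  · intro h
    obtain ⟨g, hg⟩ := IsCyclic.exists_generator (α := G)
    obtain ⟨j, hj⟩ := (mem_powers_iff_mem_zpowers).2 (hg u)
    simp only [] at hj
    have horder : orderOf g = n := (orderOf_eq_card_of_forall_mem_zpowers hg).trans Nat.card_eq_fintype_card
    have hnd : 0 < n / d := Nat.div_pos (Nat.le_of_dvd hnpos hdn) hdpos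
    have hdvd : n ∣ j * (n / d) := by
      have := orderOf_dvd_of_pow_eq_one (x := g) (n := j * (n / d)) (by rw [pow_mul, hj, h])
      rwa [horder] at this
    obtain ⟨c, hc⟩ : d ∣ j := by
      obtain ⟨c, hc⟩ := hdvd
      have hnc : n = d * (n / d) := (Nat.mul_div_cancel' hdn).symm
      refine ⟨c, ?_⟩
      have : j * (n / d) = (d * c) * (n / d) := by rw [hc]; nth_rewrite 1 [hnc]; ring
      exact Nat.eq_of_mul_eq_mul_right hnd this
    -- Bezout
    have hbez : (d : ℤ) = k * Nat.gcdA k n + n * Nat.gcdB k n := Nat.gcd_eq_gcd_ab k n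
    refine ⟨g ^ (Nat.gcdA k n * c), ?_⟩
    rw [← hj, ← zpow_natCast _ k, ← zpow_mul, ← zpow_natCast _ j]
    have hexp : Nat.gcdA k n * c * k =
        (j : ℤ) + (n : ℤ) * (-(Nat.gcdB k n * c)) := by
      have hjc : (j : ℤ) = d * c := by exact_mod_cast hc
      linear_combination (-(c : ℤ)) * hbez - hjc
    rw [hexp, zpow_add, zpow_mul, hn]
    simp [zpow_natCast, pow_card_eq_one]

lemma aux_zmod_cube (p : ℕ) [Fact p.Prime] (u : ZMod p) (hu : u ≠ 0) :
    (∃ t : ZMod p, t ≠ 0 ∧ t ^ 3 = u) ↔ u ^ ((p - 1) / Nat.gcd 3 (p - 1)) = 1 := by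
  have hcard : Fintype.card (ZMod p)ˣ = p - 1 := ZMod.card_units p
  lift u to (ZMod p)ˣ using hu.isUnit with U hU
  have := aux_cyclic_pow (G := (ZMod p)ˣ) (k := 3) (by norm_num) U
  rw [hcard] at this
  constructor
  · rintro ⟨t, ht0, ht3⟩
    have hTU : ∃ T : (ZMod p)ˣ, T ^ 3 = U := by
      lift t to (ZMod p)ˣ using ht0.isUnit with T hT
      exact ⟨T, Units.ext (by push_cast [ht3] ; rfl)⟩
    have h1 := this.1 hTU
    rw [← Units.val_pow_eq_pow_val, h1, Units.val_one]
  · intro h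
    have hU1 : U ^ ((p-1)/Nat.gcd 3 (p-1)) = 1 := by
      apply Units.ext; rw [Units.val_pow_eq_pow_val, h, Units.val_one]
    obtain ⟨T, hT⟩ := this.2 hU1
    exact ⟨(T : ZMod p), T.ne_zero, by rw [← hT]; push_cast; rfl⟩

lemma aux_toZMod_eq_zero {p : ℕ} [Fact p.Prime] (z : ℤ_[p]) :
    PadicInt.toZMod z = 0 ↔ ‖z‖ < 1 := by
  rw [PadicInt.norm_lt_one_iff_dvd, ← Ideal.mem_span_singleton,
    ← PadicInt.maximalIdeal_eq_span_p, ← PadicInt.ker_toZMod, RingHom.mem_ker]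

theorem cubic_solvable_iff_of_lt (p : ℕ) [Fact p.Prime] (hp : 3 < p)
    (a b : ℚ_[p]) (ha : a ≠ 0) (hb : b ≠ 0)
    (hab : ‖a‖ ^ 3 < ‖b‖ ^ 2)
    (b0 : ℤ) (hb0 : isFirstDigit p b b0) :
    (∃ x : ℚ_[p], x ^ 3 + a * x = b) ↔
      ((3 : ℤ) ∣ b.valuation ∧
        Int.ModEq (p : ℤ) (b0 ^ ((p - 1) / Nat.gcd 3 (p - 1))) 1) := by
  obtain ⟨hb01, hb02, hb03⟩ := hb0
  have hppos : (0:ℝ) < (p:ℝ) := by exact_mod_cast (by omega : 0 < p)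
  have hp1 : (1:ℝ) < (p:ℝ) := by exact_mod_cast (by omega : 1 < p)
  have hpq : (p:ℚ_[p]) ≠ 0 := by
    exact_mod_cast (Nat.cast_ne_zero (R := ℚ_[p])).2 (by omega)
  set e : ℕ := (p - 1) / Nat.gcd 3 (p - 1) with he
  set U : ℚ_[p] := b * (p:ℚ_[p])^(-b.valuation) with hUdef
  have hU1 : ‖U‖ = 1 := by
    rw [hUdef, norm_mul, Padic.norm_p_zpow, Padic.norm_eq_zpow_neg_valuation hb, neg_neg,
      ← zpow_add₀ hppos.ne', neg_add_cancel, zpow_zero]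
  set UZ : ℤ_[p] := ⟨U, hU1.le⟩ with hUZdef
  have hres : PadicInt.toZMod UZ = ((b0 : ℤ) : ZMod p) := by
    have hlt : ‖UZ - ((b0:ℤ) : ℤ_[p])‖ < 1 := by
      rw [PadicInt.norm_def]
      push_cast
      exact hb03
    have h0 := (aux_toZMod_eq_zero _).2 hlt
    rwa [map_sub, map_intCast, sub_eq_zero] at h0
  have hb0ne : ((b0:ℤ) : ZMod p) ≠ 0 := by
    rw [Ne, ZMod.intCast_zmod_eq_zero_iff_dvd]
    intro hdvd
    have := Int.le_of_dvd (by omega) hdvd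
    omega
  have hmod : Int.ModEq (p:ℤ) (b0 ^ e) 1 ↔ ((b0:ℤ) : ZMod p) ^ e = 1 := by
    rw [← ZMod.intCast_eq_intCast_iff]
    push_cast
    rfl
  constructor
  · rintro ⟨x, hx⟩
    have hx0 : x ≠ 0 := by
      rintro rfl
      apply hb
      rw [← hx]; ring
    have hxpos : (0:ℝ) < ‖x‖ := norm_pos_iff.2 hx0
    have hxa : ‖a‖ < ‖x‖^2 := by
      by_contra hle
      push_neg at hle
      have hmax : ‖b‖ ≤ max (‖x‖^3) (‖a‖ * ‖x‖) := by
        rw [← hx]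
        calc ‖x^3 + a*x‖ ≤ max ‖x^3‖ ‖a*x‖ := Padic.nonarchimedean _ _
        _ = max (‖x‖^3) (‖a‖*‖x‖) := by rw [norm_pow, norm_mul]
      have h1 : ‖x‖^3 < ‖b‖ := by
        refine lt_of_pow_lt_pow_left₀ 2 (norm_nonneg b) ?_
        calc (‖x‖^3)^2 = (‖x‖^2)^3 := by ring
        _ ≤ ‖a‖^3 := pow_le_pow_left₀ (sq_nonneg _) hle 3
        _ < ‖b‖^2 := hab
      have h2 : ‖a‖ * ‖x‖ < ‖b‖ := by
        refine lt_of_pow_lt_pow_left₀ 2 (norm_nonneg b) ?_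
        calc (‖a‖*‖x‖)^2 = ‖a‖^2 * ‖x‖^2 := by ring
        _ ≤ ‖a‖^2 * ‖a‖ := by
            exact mul_le_mul_of_nonneg_left hle (sq_nonneg _)
        _ = ‖a‖^3 := by ring
        _ < ‖b‖^2 := hab
      have := max_lt h1 h2
      linarith
    have hax : ‖a * x‖ < ‖x ^ 3‖ := by
      rw [norm_mul, norm_pow, pow_succ ‖x‖ 2]
      exact mul_lt_mul_of_pos_right hxa hxpos
    have hbx : ‖b‖ = ‖x‖^3 := by
      rw [← hx, Padic.add_eq_max_of_ne hax.ne', max_eq_left hax.le, norm_pow]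
    have hvb3 : b.valuation = 3 * x.valuation := by
      have h1 : (p:ℝ)^(-b.valuation) = (p:ℝ)^(-(3 * x.valuation)) := by
        rw [← Padic.norm_eq_zpow_neg_valuation hb, hbx, Padic.norm_eq_zpow_neg_valuation hx0,
          ← zpow_natCast ((p:ℝ)^(-x.valuation)) 3, ← zpow_mul]
        congr 1
        ring
      have h2 := zpow_right_injective₀ hppos hp1.ne' h1
      omega
    refine ⟨⟨x.valuation, hvb3⟩, ?_⟩
    -- residue computation
    have hxb : b = x^3 + a*x := hx.symm
    set P : ℚ_[p] := (p:ℚ_[p])^(-b.valuation) with hP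
    set w : ℚ_[p] := x * (p:ℚ_[p])^(-x.valuation) with hw
    have hw1 : ‖w‖ = 1 := by
      rw [hw, norm_mul, Padic.norm_p_zpow, Padic.norm_eq_zpow_neg_valuation hx0, neg_neg,
        ← zpow_add₀ hppos.ne', neg_add_cancel, zpow_zero]
    have hw3 : w^3 = x^3 * P := by
      rw [hw, hP, mul_pow, ← zpow_natCast ((p:ℚ_[p])^(-x.valuation)) 3, ← zpow_mul, hvb3]
      congr 2
      ring
    have hkey : U = w^3 + a * x * P := by
      rw [hUdef, hxb, hw3]
      ring
    have hcnorm : ‖a * x * P‖ < 1 := by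
      rw [norm_mul]
      have hppow : (0:ℝ) < ‖P‖ := by
        rw [hP]
        exact norm_pos_iff.2 (zpow_ne_zero _ hpq)
      calc ‖a*x‖ * ‖P‖
          < ‖x^3‖ * ‖P‖ := mul_lt_mul_of_pos_right hax hppow
      _ = 1 := by
          rw [hP, norm_pow, ← hbx, Padic.norm_eq_zpow_neg_valuation hb, Padic.norm_p_zpow, neg_neg,
            ← zpow_add₀ hppos.ne', neg_add_cancel, zpow_zero]
    set wZ : ℤ_[p] := ⟨w, hw1.le⟩ with hwZ
    set cZ : ℤ_[p] := ⟨a*x*P, hcnorm.le⟩ with hcZ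
    have hUZeq : UZ = wZ^3 + cZ := by
      apply Subtype.ext
      push_cast
      exact hkey
    have htw : PadicInt.toZMod wZ ≠ 0 := by
      rw [Ne, aux_toZMod_eq_zero, PadicInt.norm_def]
      simp only [hwZ]
      rw [hw1]
      norm_num
    have hcube : ((b0:ℤ):ZMod p) = (PadicInt.toZMod wZ)^3 := by
      rw [← hres, hUZeq, map_add, map_pow,
        (aux_toZMod_eq_zero cZ).2 (by rw [PadicInt.norm_def]; exact hcnorm), add_zero]
    rw [hmod, hcube, ← pow_mul]
    have hdpos : 0 < Nat.gcd 3 (p - 1) := Nat.gcd_pos_of_pos_left _ (by norm_num)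
    obtain ⟨c3, hc3⟩ := Nat.gcd_dvd_left 3 (p-1)
    obtain ⟨cp, hcp⟩ := Nat.gcd_dvd_right 3 (p-1)
    have harith : 3 * e = c3 * (p-1) := by
      rw [he]
      nth_rewrite 1 [hcp]
      rw [Nat.mul_div_cancel_left _ hdpos]
      nth_rewrite 1 [hc3]
      nth_rewrite 2 [hcp]
      ring
    rw [harith, mul_comm, pow_mul, ZMod.pow_card_sub_one_eq_one htw, one_pow]
  · rintro ⟨⟨k, hk⟩, hmodeq⟩
    have he1 : ((b0:ℤ):ZMod p)^e = 1 := hmod.1 hmodeq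
    obtain ⟨t, ht0, ht3⟩ := (aux_zmod_cube p _ hb0ne).2 he1
    set t0 : ℤ_[p] := ((t.val : ℕ) : ℤ_[p]) with ht0def
    have htoZ : PadicInt.toZMod t0 = t := by
      rw [ht0def, map_natCast, ZMod.natCast_val, ZMod.cast_id]
    have hbnorm : ‖b‖ = (p:ℝ)^(-(3*k)) := by
      rw [Padic.norm_eq_zpow_neg_valuation hb, hk]
    have ha2k : ‖a * (p:ℚ_[p])^(-(2*k))‖ < 1 := by
      have haval : ‖a‖ < (p:ℝ)^(-(2*k)) := by
        refine lt_of_pow_lt_pow_left₀ 3 (by positivity) ?_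
        calc ‖a‖^3 < ‖b‖^2 := hab
        _ = ((p:ℝ)^(-(2*k)))^3 := by
            rw [hbnorm, ← zpow_natCast ((p:ℝ)^(-(3*k))) 2, ← zpow_mul,
              ← zpow_natCast ((p:ℝ)^(-(2*k))) 3, ← zpow_mul]
            congr 1
            ring
      rw [norm_mul, Padic.norm_p_zpow, neg_neg]
      have hlt := mul_lt_mul_of_pos_right haval (show (0:ℝ) < (p:ℝ)^(2*k) by positivity)
      rwa [← zpow_add₀ hppos.ne', neg_add_cancel, zpow_zero] at hlt
    set A : ℤ_[p] := ⟨a * (p:ℚ_[p])^(-(2*k)), ha2k.le⟩ with hA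
    have hAres : PadicInt.toZMod A = 0 :=
      (aux_toZMod_eq_zero A).2 (by rw [PadicInt.norm_def]; exact ha2k)
    set F : Polynomial ℤ_[p] :=
      Polynomial.X^3 + Polynomial.C A * Polynomial.X - Polynomial.C UZ with hF
    have hFeval : ∀ z : ℤ_[p], F.eval z = z^3 + A*z - UZ := by
      intro z
      simp [hF]
    have hFderiv : ∀ z : ℤ_[p], (Polynomial.derivative F).eval z = 3*z^2 + A := by
      intro z
      simp [hF]
      norm_num
    have h3ne : (3 : ZMod p) ≠ 0 := by
      have h3' : ((3:ℕ) : ZMod p) ≠ 0 := by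
        rw [Ne, ZMod.natCast_eq_zero_iff]
        intro hdvd
        have := Nat.le_of_dvd (by norm_num) hdvd
        omega
      exact_mod_cast h3'
    have hd1 : ‖(Polynomial.derivative F).eval t0‖ = 1 := by
      rw [hFderiv]
      refine le_antisymm (PadicInt.norm_le_one _) (not_lt.1 ?_)
      intro hlt
      have h0 := (aux_toZMod_eq_zero _).2 hlt
      rw [map_add, map_mul, map_pow, htoZ, hAres, add_zero] at h0
      have h30 : PadicInt.toZMod (3 : ℤ_[p]) = (3 : ZMod p) := by
        exact_mod_cast map_natCast (PadicInt.toZMod (p := p)) 3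
      rw [h30] at h0
      exact (mul_ne_zero h3ne (pow_ne_zero 2 ht0)) h0
    have hfe : ‖F.eval t0‖ < 1 := by
      rw [hFeval]
      apply (aux_toZMod_eq_zero _).1
      rw [map_sub, map_add, map_mul, map_pow, htoZ, hAres, hres, ht3, zero_mul, add_zero,
        sub_self]
    obtain ⟨z, hz, -, -, -⟩ := hensels_lemma (F := F) (a := t0)
      (by rw [Polynomial.coe_aeval_eq_eval, hd1, one_pow]; exact hfe)
    rw [Polynomial.coe_aeval_eq_eval, hFeval] at hz
    have hz' : z^3 + A*z = UZ := sub_eq_zero.1 hz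
    have hzq : (z:ℚ_[p])^3 + (a * (p:ℚ_[p])^(-(2*k))) * (z:ℚ_[p]) = U := by
      calc (z:ℚ_[p])^3 + (a * (p:ℚ_[p])^(-(2*k))) * (z:ℚ_[p])
          = ((z^3 + A*z : ℤ_[p]) : ℚ_[p]) := by push_cast; rfl
      _ = (UZ : ℚ_[p]) := by rw [hz']
      _ = U := rfl
    refine ⟨(p:ℚ_[p])^k * (z:ℚ_[p]), ?_⟩
    have hsplit : (p:ℚ_[p])^(3*k) * (p:ℚ_[p])^(-(2*k)) = (p:ℚ_[p])^k := by
      rw [← zpow_add₀ hpq]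
      congr 1
      ring
    have hcube' : ((p:ℚ_[p])^k)^(3:ℕ) = (p:ℚ_[p])^(3*k) := by
      rw [← zpow_natCast ((p:ℚ_[p])^k) 3, ← zpow_mul]
      congr 1
      ring
    calc ((p:ℚ_[p])^k * (z:ℚ_[p]))^3 + a * ((p:ℚ_[p])^k * (z:ℚ_[p]))
        = (p:ℚ_[p])^(3*k) * ((z:ℚ_[p])^3 + (a * (p:ℚ_[p])^(-(2*k))) * (z:ℚ_[p])) := by
          rw [mul_pow, hcube', mul_add]
          congr 1
          symm
          calc (p:ℚ_[p])^(3*k) * ((a * (p:ℚ_[p])^(-(2*k))) * (z:ℚ_[p]))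
              = a * ((p:ℚ_[p])^(3*k) * (p:ℚ_[p])^(-(2*k))) * (z:ℚ_[p]) := by ring
          _ = a * ((p:ℚ_[p])^k * (z:ℚ_[p])) := by rw [hsplit]; ring
    _ = (p:ℚ_[p])^(3*k) * U := by rw [hzq]
    _ = b := by
        rw [hUdef, hk, mul_comm b, ← mul_assoc, ← zpow_add₀ hpq, add_neg_cancel, zpow_zero,
          one_mul]
end

section
/- Let p > 3 be a prime and let a, b ∈ ℚ_p be nonzero with |a|_p³ = |b|_p². Then the equation x³ + ax = b has a solution x ∈ ℚ_p if and only if D_0·u_{p−2}² ≢ 9·a_0² (mod p), where a_0, b_0 are the first digits of a and b, D_0 = −4a_0³ − 27b_0², and (u_n) is the integer sequence defined by u_1 = 0, u_2 = −a_0, u_3 = b_0, and u_{n+3} = b_0·u_n − a_0·u_{n+1}. -/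
open Polynomial in
lemma exists_zmod_of_pow_card (p : ℕ) [Fact p.Prime] {K : Type*} [Field K] [Algebra (ZMod p) K]
    {θ : K} (h : θ ^ p = θ) : ∃ r : ZMod p, algebraMap (ZMod p) K r = θ := by
  classical
  by_contra hc
  push_neg at hc
  have hp1 : 1 < p := (Fact.out : p.Prime).one_lt
  have hg0 : (X ^ p - X : K[X]) ≠ 0 := FiniteField.X_pow_card_sub_X_ne_zero K hp1
  set s : Finset K := Finset.univ.image (algebraMap (ZMod p) K) ∪ {θ} with hs
  have hsub : s ⊆ (X ^ p - X : K[X]).roots.toFinset := by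
    intro y hy
    simp only [hs, Finset.mem_union, Finset.mem_image, Finset.mem_singleton, Finset.mem_univ,
      true_and] at hy
    rw [Multiset.mem_toFinset, mem_roots hg0]
    rcases hy with ⟨r, rfl⟩ | rfl
    · simp [IsRoot, ← map_pow, ZMod.pow_card]
    · simp [IsRoot, h]
  have hcard : s.card = p + 1 := by
    rw [hs, Finset.card_union_of_disjoint, Finset.card_image_of_injective _
      (algebraMap (ZMod p) K).injective, Finset.card_singleton, Finset.card_univ, ZMod.card]
    simp only [Finset.disjoint_singleton_right, Finset.mem_image]
    rintro ⟨r, _, hr⟩; exact hc r hr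
  have h1 := Finset.card_le_card hsub
  have h2 := (Multiset.toFinset_card_le (X ^ p - X : K[X]).roots).trans
    ((Polynomial.card_roots' _).trans_eq (FiniteField.X_pow_card_sub_X_natDegree_eq K hp1))
  omega

lemma helper_trans {K : Type*} [Field K] {x y z A B : K} (h9 : (9:K) ≠ 0)
    (he1 : x+y+z = 0) (he2 : x*y+x*z+y*z = A) (he3 : x*y*z = B) (hB : B ≠ 0)
    (hxy : x ≠ y) (hxz : x ≠ z) (E : (3*x*(y-z))^2 = 9*A^2) : False := by
  have hyz : y*z ≠ 0 := fun h => hB (by rw [← he3, mul_assoc, h, mul_zero])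
  have E2 : (x*(y-z))^2 = A^2 := by
    apply mul_left_cancel₀ h9; linear_combination E
  have hkey : y*z*(y*z + 2*x^2) = 0 := by
    have hz : z = -x - y := by linear_combination he1
    rw [← he2, hz] at E2
    rw [hz]
    linear_combination -E2
  have h2 : y*z + 2*x^2 = 0 := by
    rcases mul_eq_zero.mp hkey with h|h
    · exact absurd h hyz
    · exact h
  have h3 : (y-x)*(z-x) = 0 := by linear_combination h2 - x*he1
  rcases mul_eq_zero.mp h3 with h|h
  · exact hxy (sub_eq_zero.mp h).symm
  · exact hxz (sub_eq_zero.mp h).symm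

set_option maxHeartbeats 2000000 in
theorem key_zmod (p : ℕ) [Fact p.Prime] (hp : 3 < p) (a0 b0 : ℤ)
    (ha : (a0 : ZMod p) ≠ 0) (hb : (b0 : ZMod p) ≠ 0) :
    (∃ x : ZMod p, x ^ 3 + (a0 : ZMod p) * x = (b0 : ZMod p) ∧ 3 * x ^ 2 + (a0 : ZMod p) ≠ 0) ↔
      (((-4 * a0 ^ 3 - 27 * b0 ^ 2) * useq a0 b0 (p - 2) ^ 2 : ℤ) : ZMod p)
        ≠ ((9 * a0 ^ 2 : ℤ) : ZMod p) := by
  have hprime : p.Prime := Fact.out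
  have h3Z : (3 : ZMod p) ≠ 0 := by
    have h1 : ((3 : ℕ) : ZMod p) ≠ 0 := by
      rw [Ne, ZMod.natCast_eq_zero_iff]
      intro h; have := Nat.le_of_dvd (by norm_num) h; omega
    simpa using h1
  have h2Z : (2 : ZMod p) ≠ 0 := by
    have h1 : ((2 : ℕ) : ZMod p) ≠ 0 := by
      rw [Ne, ZMod.natCast_eq_zero_iff]
      intro h; have := Nat.le_of_dvd (by norm_num) h; omega
    simpa using h1
  have h9Z : (9 : ZMod p) ≠ 0 := by
    have : (9 : ZMod p) = 3 * 3 := by norm_num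
    rw [this]; exact mul_ne_zero h3Z h3Z
  -- abbreviations
  set A : ZMod p := (a0 : ZMod p) with hA
  set B : ZMod p := (b0 : ZMod p) with hB
  have hcast : (((-4 * a0 ^ 3 - 27 * b0 ^ 2) * useq a0 b0 (p - 2) ^ 2 : ℤ) : ZMod p)
      = (-4 * A ^ 3 - 27 * B ^ 2) * ((useq a0 b0 (p - 2) : ℤ) : ZMod p) ^ 2 := by
    push_cast; ring
  have hcast9 : ((9 * a0 ^ 2 : ℤ) : ZMod p) = 9 * A ^ 2 := by push_cast; ring
  rw [hcast, hcast9]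
  set u : ZMod p := ((useq a0 b0 (p - 2) : ℤ) : ZMod p) with hu
  set D : ZMod p := -4 * A ^ 3 - 27 * B ^ 2 with hD
  have h9A : 9 * A ^ 2 ≠ 0 := mul_ne_zero h9Z (pow_ne_zero 2 ha)
  -- the simplicity is automatic when D ≠ 0
  have hsimp : D ≠ 0 → ∀ x : ZMod p, x ^ 3 + A * x = B → 3 * x ^ 2 + A ≠ 0 := by
    intro hD0 x hx h
    apply hD0
    have hA2 : A = -3 * x ^ 2 := by linear_combination h
    have hB2 : B = -2 * x ^ 3 := by linear_combination -hx + x * hA2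
    rw [hD, hA2, hB2]; ring
  by_cases hD0 : D = 0
  · -- both sides true
    rw [hD0, zero_mul]
    have hAi : A ≠ 0 := ha
    refine iff_of_true ?_ (Ne.symm h9A)
    refine ⟨-3 * B * A⁻¹, ?_, ?_⟩
    · have hD0' : -4*A^3-27*B^2 = 0 := by rw [← hD]; exact hD0
      field_simp
      linear_combination hD0'
    · have hD0' : -4*A^3-27*B^2 = 0 := by rw [← hD]; exact hD0
      intro h
      field_simp at h
      have h30 : (3 : ZMod p) * A ^ 3 = 0 := by linear_combination -h - hD0'
      rcases mul_eq_zero.mp h30 with h'|h'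
      · exact h3Z h'
      · exact ha (pow_eq_zero_iff (by norm_num) |>.mp h')
  · -- main case: D ≠ 0, work in the algebraic closure
    classical
    set K := AlgebraicClosure (ZMod p) with hK
    let φ := algebraMap (ZMod p) K
    have hφ : Function.Injective φ := (algebraMap (ZMod p) K).injective
    set A' : K := ((a0 : ℤ) : K) with hA'
    set B' : K := ((b0 : ℤ) : K) with hB'
    have hφA : φ A = A' := by rw [hA, hA']; exact map_intCast φ a0
    have hφB : φ B = B' := by rw [hB, hB']; exact map_intCast φ b0
    have hA'0 : A' ≠ 0 := by rw [← hφA]; simpa using fun h => ha (hφ (by simpa using h))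
    have hB'0 : B' ≠ 0 := by rw [← hφB]; simpa using fun h => hb (hφ (by simpa using h))
    have h9K : (9 : K) ≠ 0 := by
      have : φ (9 : ZMod p) = (9 : K) := map_ofNat φ 9
      rw [← this]
      simpa using fun h => h9Z (hφ (by simpa using h))
    -- construct the roots
    open Polynomial in
    obtain ⟨θ1, hr1⟩ : ∃ θ : K, θ ^ 3 + A' * θ - B' = 0 := by
      obtain ⟨z, hz⟩ := IsAlgClosed.exists_root (k := K) (X ^ 3 + C A' * X - C B')
        (by intro hdeg
            have : (X ^ 3 + C A' * X - C B' : K[X]).degree = 3 := by compute_degree!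
            rw [this] at hdeg; exact (by norm_num : (3 : WithBot ℕ) ≠ 0) hdeg)
      refine ⟨z, ?_⟩
      simpa [Polynomial.IsRoot] using hz
    obtain ⟨θ2, hr2⟩ : ∃ θ : K, θ ^ 2 + θ1 * θ + (θ1 ^ 2 + A') = 0 := by
      obtain ⟨z, hz⟩ := IsAlgClosed.exists_root (k := K) (X ^ 2 + C θ1 * X + C (θ1 ^ 2 + A'))
        (by intro hdeg
            have : (X ^ 2 + C θ1 * X + C (θ1 ^ 2 + A') : K[X]).degree = 2 := by compute_degree!
            rw [this] at hdeg; exact (by norm_num : (2 : WithBot ℕ) ≠ 0) hdeg)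
      refine ⟨z, ?_⟩
      simpa [Polynomial.IsRoot] using hz
    set θ3 : K := -θ1 - θ2 with hθ3
    have he1 : θ1 + θ2 + θ3 = 0 := by rw [hθ3]; ring
    have he2 : θ1*θ2 + θ1*θ3 + θ2*θ3 = A' := by rw [hθ3]; linear_combination -hr2
    have he3 : θ1*θ2*θ3 = B' := by rw [hθ3]; linear_combination hr1 - θ1*hr2
    have hc1 : θ1 ^ 3 + A' * θ1 - B' = 0 := hr1
    have hc2 : θ2 ^ 3 + A' * θ2 - B' = 0 := by linear_combination (θ2 - θ1) * hr2 + hr1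
    have hc3 : θ3 ^ 3 + A' * θ3 - B' = 0 := by
      rw [hθ3]; linear_combination (-θ1 - θ2 - θ1) * hr2 + hr1
    haveI : ExpChar K p := by infer_instance
    -- discriminant
    set δ : K := (θ1 - θ2) * (θ2 - θ3) * (θ3 - θ1) with hδ
    have hδ2 : δ ^ 2 = -4 * A' ^ 3 - 27 * B' ^ 2 := by
      rw [hδ, ← he2, ← he3, hθ3]; ring
    have hφD : φ D = -4 * A' ^ 3 - 27 * B' ^ 2 := by
      rw [hD]
      simp only [map_sub, map_mul, map_pow, map_neg, map_ofNat, hφA, hφB]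
    have hδ0 : δ ≠ 0 := by
      intro h
      apply hD0
      apply hφ
      rw [map_zero, hφD, ← hδ2, h]; ring
    have f12 : θ1 - θ2 ≠ 0 := by intro h; apply hδ0; rw [hδ, h]; ring
    have f23 : θ2 - θ3 ≠ 0 := by intro h; apply hδ0; rw [hδ, h]; ring
    have f31 : θ3 - θ1 ≠ 0 := by intro h; apply hδ0; rw [hδ, h]; ring
    have h12 : θ1 ≠ θ2 := sub_ne_zero.mp f12
    have h23 : θ2 ≠ θ3 := sub_ne_zero.mp f23
    have h13 : θ1 ≠ θ3 := (sub_ne_zero.mp f31).symm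
    -- the sequence identity
    have hallu : ∀ n : ℕ, ((useq a0 b0 (n+1) : ℤ) : K) * δ =
        -(θ1^(n+3)*(θ2-θ3) + θ2^(n+3)*(θ3-θ1) + θ3^(n+3)*(θ1-θ2)) := by
      intro n
      induction n using Nat.strong_induction_on with
      | _ n ih =>
        match n, ih with
        | 0, _ =>
          have h0 : useq a0 b0 1 = 0 := rfl
          rw [h0]
          push_cast
          linear_combination (θ3-θ2)*hc1 + (θ1-θ3)*hc2 + (θ2-θ1)*hc3
        | 1, _ =>
          have h0 : useq a0 b0 2 = -a0 := rfl
          rw [h0]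
          push_cast
          rw [← hA', hδ]
          linear_combination θ1*(θ2-θ3)*hc1 + θ2*(θ3-θ1)*hc2 + θ3*(θ1-θ2)*hc3
        | 2, _ =>
          have h0 : useq a0 b0 3 = b0 := rfl
          rw [h0]
          push_cast
          rw [← hB', hδ]
          linear_combination (θ1^2-A')*(θ2-θ3)*hc1 + (θ2^2-A')*(θ3-θ1)*hc2
            + (θ3^2-A')*(θ1-θ2)*hc3
        | (m+3), ih =>
          have i1 := ih m (by omega)
          have i2 := ih (m+1) (by omega)
          have e : useq a0 b0 (m+3+1) = b0 * useq a0 b0 (m+1) - a0 * useq a0 b0 (m+2) := rfl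
          rw [e]
          push_cast
          erw [Int.cast_mul, Int.cast_mul]
          rw [← hA', ← hB']
          linear_combination B'*i1 - A'*i2 + θ1^(m+3)*(θ2-θ3)*hc1 + θ2^(m+3)*(θ3-θ1)*hc2
            + θ3^(m+3)*(θ1-θ2)*hc3
    have ep1 : p - 3 + 1 = p - 2 := by omega
    have ep2 : p - 3 + 3 = p := by omega
    have hup := hallu (p - 3)
    rw [ep1, ep2] at hup
    set W : K := θ1^p*(θ2-θ3) + θ2^p*(θ3-θ1) + θ3^p*(θ1-θ2) with hW
    -- hup : castu * δ = -W
    have hφu : φ u = ((useq a0 b0 (p-2) : ℤ) : K) := by rw [hu]; exact map_intCast φ _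
    have hφcrit : φ (D * u ^ 2) = W ^ 2 := by
      rw [map_mul, map_pow, hφD, hφu, ← hδ2]
      linear_combination (((useq a0 b0 (p-2) : ℤ) : K) * δ - W) * hup
    have hφ9 : φ (9 * A ^ 2) = 9 * A' ^ 2 := by
      rw [map_mul, map_pow, map_ofNat, hφA]
    have hne : (D * u ^ 2 ≠ 9 * A ^ 2) ↔ (W ^ 2 ≠ 9 * A' ^ 2) := by
      rw [Ne, Ne, ← hφcrit, ← hφ9, hφ.eq_iff]
    rw [hne]
    have h9A' : 9 * A' ^ 2 ≠ 0 := mul_ne_zero h9K (pow_ne_zero 2 hA'0)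
    -- frobenius facts
    have hinj : ∀ x y : K, x ^ p = y ^ p → x = y := by
      intro x y h
      exact frobenius_inj K p (by simpa [frobenius_def] using h)
    have hfr : ∀ θ : K, θ ^ 3 + A' * θ - B' = 0 → (θ^p) ^ 3 + A' * (θ^p) - B' = 0 := by
      intro θ hθ
      have hAp : A' ^ p = A' := by rw [← hφA, ← map_pow, ZMod.pow_card]
      have hBp : B' ^ p = B' := by rw [← hφB, ← map_pow, ZMod.pow_card]
      have h' : θ ^ 3 + A' * θ = B' := by linear_combination hθ
      have h2 : (θ ^ 3) ^ p + (A' * θ) ^ p = B' ^ p := by rw [← add_pow_char, h']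
      rw [mul_pow, hAp, hBp, pow_right_comm] at h2
      linear_combination h2
    have hmem : ∀ θ : K, θ ^ 3 + A' * θ - B' = 0 → θ = θ1 ∨ θ = θ2 ∨ θ = θ3 := by
      intro θ hθ
      have hfac : (θ - θ1) * ((θ - θ2) * (θ - θ3)) = 0 := by
        linear_combination hθ - θ^2*he1 + θ*he2 - he3
      rcases mul_eq_zero.mp hfac with h|h
      · exact Or.inl (sub_eq_zero.mp h)
      · rcases mul_eq_zero.mp h with h'|h'
        · exact Or.inr (Or.inl (sub_eq_zero.mp h'))
        · exact Or.inr (Or.inr (sub_eq_zero.mp h'))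
    have hex : (∃ x : ZMod p, x ^ 3 + A * x = B ∧ 3 * x ^ 2 + A ≠ 0) ↔
        (θ1 ^ p = θ1 ∨ θ2 ^ p = θ2 ∨ θ3 ^ p = θ3) := by
      constructor
      · rintro ⟨x, hx, -⟩
        have hθx : (φ x) ^ 3 + A' * (φ x) - B' = 0 := by
          have h0 : x ^ 3 + A * x - B = 0 := by linear_combination hx
          have h1 := congrArg φ h0
          rw [map_sub, map_add, map_mul, map_pow, hφA, hφB, map_zero] at h1
          exact h1
        have hfix : (φ x) ^ p = φ x := by rw [← map_pow, ZMod.pow_card]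
        rcases hmem _ hθx with h|h|h
        · exact Or.inl (by rw [← h]; exact hfix)
        · exact Or.inr (Or.inl (by rw [← h]; exact hfix))
        · exact Or.inr (Or.inr (by rw [← h]; exact hfix))
      · intro hd
        have hex2 : ∃ θ : K, θ ^ p = θ ∧ θ ^ 3 + A' * θ - B' = 0 := by
          rcases hd with h|h|h
          exacts [⟨θ1, h, hc1⟩, ⟨θ2, h, hc2⟩, ⟨θ3, h, hc3⟩]
        obtain ⟨θ, hfix, hroot⟩ := hex2
        obtain ⟨r, hr⟩ := exists_zmod_of_pow_card p hfix
        have hre : r ^ 3 + A * r = B := by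
          apply hφ
          rw [map_add, map_mul, map_pow, hφA, hφB, hr]
          linear_combination hroot
        exact ⟨r, hre, hsimp hD0 r hre⟩
    rw [hex]
    have m1 := hmem _ (hfr θ1 hc1)
    have m2 := hmem _ (hfr θ2 hc2)
    have m3 := hmem _ (hfr θ3 hc3)
    clear hex hne hφcrit hup hallu
    rcases m1 with e1|e1|e1 <;> rcases m2 with e2|e2|e2 <;> rcases m3 with e3|e3|e3 <;>
      first
      | exact absurd (hinj _ _ (e1.trans e2.symm)) h12
      | exact absurd (hinj _ _ (e1.trans e3.symm)) h13
      | exact absurd (hinj _ _ (e2.trans e3.symm)) h23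
      | skip
    -- 6 remaining cases
    · -- identity
      refine iff_of_true (Or.inl e1) ?_
      have hW0 : W = 0 := by rw [hW, e1, e2, e3]; ring
      rw [hW0]
      intro hcon
      exact h9A' (by linear_combination -hcon)
    · -- transposition fixing θ1
      refine iff_of_true (Or.inl e1) ?_
      intro E
      have hW3 : W = 3*θ1*(θ2-θ3) := by rw [hW, e1, e2, e3]; linear_combination (θ3-θ2)*he1
      rw [hW3] at E
      exact helper_trans h9K he1 he2 he3 hB'0 h12 h13 E
    · -- transposition fixing θ3
      refine iff_of_true (Or.inr (Or.inr e3)) ?_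
      intro E
      have hW3 : W = 3*θ3*(θ1-θ2) := by rw [hW, e1, e2, e3]; linear_combination (θ2-θ1)*he1
      rw [hW3] at E
      have he1' : θ3 + θ1 + θ2 = 0 := by linear_combination he1
      have he2' : θ3*θ1 + θ3*θ2 + θ1*θ2 = A' := by linear_combination he2
      have he3' : θ3*θ1*θ2 = B' := by linear_combination he3
      exact helper_trans h9K he1' he2' he3' hB'0 (Ne.symm h13) (Ne.symm h23) E
    · -- 3-cycle θ1→θ2→θ3→θ1
      refine iff_of_false ?_ ?_
      · rintro (h|h|h)
        · exact h12 (e1.symm.trans h).symm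
        · exact h23 (e2.symm.trans h).symm
        · exact h13 (e3.symm.trans h)
      · have hWc : W = -(3*A') := by
          rw [hW, e1, e2, e3, ← he2]; linear_combination (θ1+θ2+θ3)*he1
        exact not_not_intro (by rw [hWc]; ring)
    · -- 3-cycle θ1→θ3→θ2→θ1
      refine iff_of_false ?_ ?_
      · rintro (h|h|h)
        · exact h13 (e1.symm.trans h).symm
        · exact h12 (e2.symm.trans h)
        · exact h23 (e3.symm.trans h)
      · have hWc : W = 3*A' := by
          rw [hW, e1, e2, e3, ← he2]; linear_combination -(θ1+θ2+θ3)*he1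
        exact not_not_intro (by rw [hWc]; ring)
    · -- transposition fixing θ2
      refine iff_of_true (Or.inr (Or.inl e2)) ?_
      intro E
      have hW3 : W = 3*θ2*(θ3-θ1) := by rw [hW, e1, e2, e3]; linear_combination (θ1-θ3)*he1
      rw [hW3] at E
      have he1' : θ2 + θ3 + θ1 = 0 := by linear_combination he1
      have he2' : θ2*θ3 + θ2*θ1 + θ3*θ1 = A' := by linear_combination he2
      have he3' : θ2*θ3*θ1 = B' := by linear_combination he3
      exact helper_trans h9K he1' he2' he3' hB'0 h23 (Ne.symm h12) E



variable {p : ℕ} [Fact p.Prime]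

lemma toZMod_eq_zero_iff_norm_lt (z : ℤ_[p]) : PadicInt.toZMod z = 0 ↔ ‖z‖ < 1 := by
  rw [← RingHom.mem_ker, PadicInt.ker_toZMod, PadicInt.maximalIdeal_eq_span_p,
    Ideal.mem_span_singleton, ← PadicInt.norm_lt_one_iff_dvd]

lemma toZMod_ne_zero_iff_norm_eq (z : ℤ_[p]) : PadicInt.toZMod z ≠ 0 ↔ ‖z‖ = 1 := by
  rw [Ne, toZMod_eq_zero_iff_norm_lt, not_lt]
  exact ⟨fun h => le_antisymm z.norm_le_one h, fun h => h.ge⟩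

open Polynomial in
lemma int_solvable_of_zmod_root (A B : ℤ_[p]) (x : ZMod p)
    (hroot : x ^ 3 + PadicInt.toZMod A * x = PadicInt.toZMod B)
    (hsimple : 3 * x ^ 2 + PadicInt.toZMod A ≠ 0) :
    ∃ z : ℤ_[p], z ^ 3 + A * z = B := by
  set F : Polynomial ℤ_[p] := X ^ 3 + C A * X - C B with hF
  set z0 : ℤ_[p] := (x.val : ℤ_[p]) with hz0
  have hz0m : PadicInt.toZMod z0 = x := by
    rw [hz0, map_natCast, ZMod.natCast_val, ZMod.cast_id]
  have hFeval : F.eval z0 = z0 ^ 3 + A * z0 - B := by simp [hF]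
  have hFder : F.derivative.eval z0 = 3 * z0 ^ 2 + A := by
    have hd : F.derivative = C 3 * X ^ 2 + C A := by
      rw [hF]
      simp [derivative_X_pow]
      rw [← C_1, ← C_add]; norm_num
    rw [hd]
    simp
  have h1 : ‖F.eval z0‖ < 1 := by
    rw [← toZMod_eq_zero_iff_norm_lt, hFeval, map_sub, map_add, map_mul, map_pow, hz0m]
    linear_combination hroot
  have h2 : ‖F.derivative.eval z0‖ = 1 := by
    rw [← toZMod_ne_zero_iff_norm_eq, hFder]
    intro hcon
    apply hsimple
    have he : PadicInt.toZMod (3 * z0 ^ 2 + A) = 3 * x ^ 2 + PadicInt.toZMod A := by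
      rw [map_add, map_mul, map_pow, map_ofNat, hz0m]
    rw [← he, hcon]
  obtain ⟨z, hz, -⟩ := hensels_lemma (F := F) (a := z0) (by simp only [coe_aeval_eq_eval]; rw [h2]; simpa using h1)
  refine ⟨z, ?_⟩
  have he : F.eval z = z ^ 3 + A * z - B := by simp [hF]
  rw [coe_aeval_eq_eval, he] at hz
  linear_combination hz

lemma qp_int_iff (A B : ℤ_[p]) :
    (∃ y : ℚ_[p], y ^ 3 + (A : ℚ_[p]) * y = (B : ℚ_[p])) ↔ ∃ z : ℤ_[p], z ^ 3 + A * z = B := by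
  constructor
  · rintro ⟨y, hy⟩
    have hy1 : ‖y‖ ≤ 1 := by
      by_contra hgt
      push_neg at hgt
      have hy3 : ‖y ^ 3‖ = ‖y‖ ^ 3 := norm_pow y 3
      have hAy : ‖(A : ℚ_[p]) * y‖ < ‖y ^ 3‖ := by
        rw [norm_mul, hy3]
        have hA1 : ‖(A : ℚ_[p])‖ ≤ 1 := by
          rw [PadicInt.padic_norm_e_of_padicInt]; exact A.norm_le_one
        have hyy : ‖y‖ < ‖y‖ ^ 3 := by
          nlinarith [mul_pos (mul_pos (lt_trans zero_lt_one hgt) (sub_pos.mpr hgt))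
            (show (0:ℝ) < ‖y‖ + 1 by positivity)]
        have hA2 : ‖(A : ℚ_[p])‖ * ‖y‖ ≤ ‖y‖ := by nlinarith [norm_nonneg y]
        linarith
      have hmax : ‖y ^ 3 + (A : ℚ_[p]) * y‖ = ‖y ^ 3‖ := by
        rw [Padic.add_eq_max_of_ne (ne_of_gt hAy)]
        exact max_eq_left hAy.le
      rw [hy] at hmax
      have hB1 : ‖(B : ℚ_[p])‖ ≤ 1 := by
        rw [PadicInt.padic_norm_e_of_padicInt]; exact B.norm_le_one
      rw [hy3] at hmax
      nlinarith [mul_pos (sub_pos.mpr hgt) (show (0:ℝ) < ‖y‖^2 + ‖y‖ + 1 by positivity)]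
    refine ⟨⟨y, hy1⟩, Subtype.ext ?_⟩
    push_cast
    exact hy
  · rintro ⟨z, hz⟩
    refine ⟨(z : ℚ_[p]), ?_⟩
    have h2 := congrArg (fun t : ℤ_[p] => (t : ℚ_[p])) hz
    push_cast at h2
    exact h2

lemma firstDigit_unit {x : ℚ_[p]} (hp : 3 < p) (hx : x ≠ 0) {x0 : ℤ} (h : isFirstDigit p x x0) :
    ∃ X : ℤ_[p], (X : ℚ_[p]) = x * (p : ℚ_[p]) ^ (-x.valuation) ∧
      PadicInt.toZMod X = (x0 : ZMod p) ∧ (x0 : ZMod p) ≠ 0 := by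
  obtain ⟨h1, h2, h3⟩ := h
  have hprime : p.Prime := Fact.out
  have hp0R : ((p : ℝ)) ≠ 0 := by positivity
  have hnorm : ‖x * (p : ℚ_[p]) ^ (-x.valuation)‖ = 1 := by
    rw [norm_mul, Padic.norm_eq_zpow_neg_valuation hx, Padic.norm_p_zpow, neg_neg,
      ← zpow_add₀ hp0R]
    simp
  set X : ℤ_[p] := ⟨x * (p : ℚ_[p]) ^ (-x.valuation), hnorm.le⟩ with hX
  refine ⟨X, rfl, ?_, ?_⟩
  · have hlt : ‖X - (x0 : ℤ_[p])‖ < 1 := by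
      rw [PadicInt.norm_def]
      push_cast
      exact h3
    have h0 := (toZMod_eq_zero_iff_norm_lt _).mpr hlt
    rw [map_sub, map_intCast, sub_eq_zero] at h0
    exact h0
  · rw [Ne, ZMod.intCast_zmod_eq_zero_iff_dvd]
    intro hdvd
    have hle := Int.le_of_dvd (by omega) hdvd
    omega


set_option maxHeartbeats 1000000 in
theorem cubic_solvable_iff_of_eq (p : ℕ) [Fact p.Prime] (hp : 3 < p)
    (a b : ℚ_[p]) (ha : a ≠ 0) (hb : b ≠ 0)
    (hab : ‖a‖ ^ 3 = ‖b‖ ^ 2)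
    (a0 b0 : ℤ) (ha0 : isFirstDigit p a a0) (hb0 : isFirstDigit p b b0) :
    (∃ x : ℚ_[p], x ^ 3 + a * x = b) ↔
      ¬ Int.ModEq (p : ℤ)
        ((-4 * a0 ^ 3 - 27 * b0 ^ 2) * useq a0 b0 (p - 2) ^ 2) (9 * a0 ^ 2) := by
  have hprime : p.Prime := Fact.out
  have hp0R : ((p : ℝ)) ≠ 0 := by
    have := hprime.pos; positivity
  have hp1R : (1 : ℝ) < (p : ℝ) := by exact_mod_cast hprime.one_lt
  have hp0 : (p : ℚ_[p]) ≠ 0 := Nat.cast_ne_zero.mpr hprime.ne_zero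
  -- valuation bookkeeping
  rw [Padic.norm_eq_zpow_neg_valuation ha, Padic.norm_eq_zpow_neg_valuation hb] at hab
  have hab' : (p : ℝ) ^ (-a.valuation + -a.valuation + -a.valuation)
      = (p : ℝ) ^ (-b.valuation + -b.valuation) := by
    rw [zpow_add₀ hp0R, zpow_add₀ hp0R, zpow_add₀ hp0R]
    linear_combination hab
  have hvv : 3 * a.valuation = 2 * b.valuation := by
    have hinj := zpow_right_injective₀ (a := (p : ℝ)) (by positivity) (ne_of_gt hp1R)
    have := hinj hab'
    omega
  obtain ⟨A, hAcoe, hAz, ha0z⟩ := firstDigit_unit hp ha ha0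
  obtain ⟨B, hBcoe, hBz, hb0z⟩ := firstDigit_unit hp hb hb0
  set c : ℚ_[p] := (p : ℚ_[p]) ^ (-(b.valuation - a.valuation)) with hc
  have hc0 : c ≠ 0 := zpow_ne_zero _ hp0
  have hc2 : c ^ 2 = (p : ℚ_[p]) ^ (-a.valuation) := by
    rw [hc, pow_two, ← zpow_add₀ hp0]
    congr 1
    omega
  have hc3 : c ^ 3 = (p : ℚ_[p]) ^ (-b.valuation) := by
    rw [hc, pow_succ, pow_two, ← zpow_add₀ hp0, ← zpow_add₀ hp0]
    congr 1
    omega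
  have hscale : (∃ x : ℚ_[p], x ^ 3 + a * x = b) ↔
      (∃ y : ℚ_[p], y ^ 3 + (A : ℚ_[p]) * y = (B : ℚ_[p])) := by
    rw [hAcoe, hBcoe, ← hc2, ← hc3]
    constructor
    · rintro ⟨x, hx⟩
      exact ⟨x * c, by linear_combination c ^ 3 * hx⟩
    · rintro ⟨y, hy⟩
      have hcc : c * c⁻¹ = 1 := mul_inv_cancel₀ hc0
      refine ⟨y * c⁻¹, ?_⟩
      linear_combination (c⁻¹) ^ 3 * hy +
        (b * (1 + c * c⁻¹ + (c * c⁻¹) ^ 2) - a * (y * c⁻¹) * (1 + c * c⁻¹)) * hcc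
  have hL : (((-4 * a0 ^ 3 - 27 * b0 ^ 2) * useq a0 b0 (p - 2) ^ 2 : ℤ) : ZMod p)
      = (-4 * (a0 : ZMod p) ^ 3 - 27 * (b0 : ZMod p) ^ 2) *
        ((useq a0 b0 (p - 2) : ℤ) : ZMod p) ^ 2 := by push_cast; ring
  have hR : ((9 * a0 ^ 2 : ℤ) : ZMod p) = 9 * (a0 : ZMod p) ^ 2 := by push_cast; ring
  have h9Z : (9 : ZMod p) ≠ 0 := by
    have h1 : ((9 : ℕ) : ZMod p) ≠ 0 := by
      rw [Ne, ZMod.natCast_eq_zero_iff]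
      intro h
      have h' : p ∣ 3 ^ 2 := by norm_num; exact h
      have h3 := hprime.dvd_of_dvd_pow h'
      have := Nat.le_of_dvd (by norm_num) h3
      omega
    simpa using h1
  have hiff2 : (∃ z : ℤ_[p], z ^ 3 + A * z = B) ↔
      (((-4 * a0 ^ 3 - 27 * b0 ^ 2) * useq a0 b0 (p - 2) ^ 2 : ℤ) : ZMod p)
        ≠ ((9 * a0 ^ 2 : ℤ) : ZMod p) := by
    constructor
    · rintro ⟨z, hz⟩
      rw [Ne, hL, hR]
      have hx : (PadicInt.toZMod z) ^ 3 + (a0 : ZMod p) * (PadicInt.toZMod z) = (b0 : ZMod p) := by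
        have h1 := congrArg PadicInt.toZMod hz
        rw [map_add, map_mul, map_pow, hAz, hBz] at h1
        exact h1
      by_cases hDb : (-4 * (a0 : ZMod p) ^ 3 - 27 * (b0 : ZMod p) ^ 2) = 0
      · rw [hDb, zero_mul]
        exact (mul_ne_zero h9Z (pow_ne_zero 2 ha0z)).symm
      · have hsimple : 3 * (PadicInt.toZMod z) ^ 2 + (a0 : ZMod p) ≠ 0 := by
          intro h
          apply hDb
          have hA2 : (a0 : ZMod p) = -3 * (PadicInt.toZMod z) ^ 2 := by linear_combination h
          have hB2 : (b0 : ZMod p) = -2 * (PadicInt.toZMod z) ^ 3 := by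
            linear_combination -hx + (PadicInt.toZMod z) * hA2
          rw [hA2, hB2]; ring
        have hC := (key_zmod p hp a0 b0 ha0z hb0z).mp ⟨PadicInt.toZMod z, hx, hsimple⟩
        rw [Ne, hL, hR] at hC
        exact hC
    · intro hC
      obtain ⟨x, hx, hs⟩ := (key_zmod p hp a0 b0 ha0z hb0z).mpr hC
      exact int_solvable_of_zmod_root A B x (by rw [hAz, hBz]; exact hx) (by rw [hAz]; exact hs)
  rw [hscale, qp_int_iff, hiff2]
  exact not_congr (ZMod.intCast_eq_intCast_iff _ _ _)
end

section
/- Let p > 3 be a prime and let a, b ∈ ℚ_p be nonzero with |a|_p³ > |b|_p². Then the equation x³ + ax = b has a solution x ∈ ℚ_p. -/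
theorem cubic_solvable_of_gt (p : ℕ) [Fact p.Prime] (hp : 3 < p)
    (a b : ℚ_[p]) (ha : a ≠ 0) (hb : b ≠ 0)
    (hab : ‖b‖ ^ 2 < ‖a‖ ^ 3) :
    ∃ x : ℚ_[p], x ^ 3 + a * x = b := by
  -- Let c = b²/a³; then ‖c‖ < 1.
  set c : ℚ_[p] := b ^ 2 / a ^ 3 with hc_def
  have ha3 : (0:ℝ) < ‖a‖ ^ 3 := pow_pos (norm_pos_iff.mpr ha) 3
  have hc1 : ‖c‖ < 1 := by
    rw [hc_def, norm_div, norm_pow, norm_pow, div_lt_one ha3]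
    exact hab
  set C : ℤ_[p] := ⟨c, hc1.le⟩ with hC_def
  have hCnorm : ‖C‖ < 1 := hc1
  -- Hensel's lemma for F = C·X³ + X − 1 at the point 1.
  set F : Polynomial ℤ_[p] :=
    Polynomial.C C * Polynomial.X ^ 3 + Polynomial.X - 1 with hF_def
  have hev : F.eval 1 = C := by simp [hF_def]
  have hder : (Polynomial.derivative F).eval 1 = 3 * C + 1 := by
    simp [hF_def]; ring
  have hdnorm : ‖(Polynomial.derivative F).eval 1‖ = 1 := by
    rw [hder]
    have h3C : ‖(3:ℤ_[p]) * C‖ < 1 :=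
      lt_of_le_of_lt (by
        calc ‖(3:ℤ_[p]) * C‖ = ‖(3:ℤ_[p])‖ * ‖C‖ := norm_mul _ _
        _ ≤ 1 * ‖C‖ := by gcongr; exact PadicInt.norm_le_one _) (by simpa using hCnorm)
    have hne : ‖(3:ℤ_[p]) * C‖ ≠ ‖(1:ℤ_[p])‖ := by
      rw [norm_one]; exact ne_of_lt h3C
    rw [PadicInt.norm_add_eq_max_of_ne hne, norm_one]
    exact max_eq_right h3C.le
  have hnorm : ‖F.eval 1‖ < ‖(Polynomial.derivative F).eval 1‖ ^ 2 := by
    rw [hev, hdnorm]; simpa using hCnorm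
  obtain ⟨z, hz, -⟩ := hensels_lemma hnorm
  -- z satisfies C z³ + z − 1 = 0 in ℤ_p.
  have hzeq : C * z ^ 3 + z - 1 = 0 := by
    simpa [hF_def] using hz
  -- Push to ℚ_p.
  have hzQ : c * (z : ℚ_[p]) ^ 3 + (z : ℚ_[p]) - 1 = 0 := by
    have := congrArg (PadicInt.Coe.ringHom (p := p)) hzeq
    push_cast at this
    have h2 : ∀ w : ℤ_[p], PadicInt.Coe.ringHom w = (w : ℚ_[p]) := fun _ => rfl
    have h3 : ((C * z ^ 3 : ℤ_[p]) : ℚ_[p]) = c * (z : ℚ_[p]) ^ 3 := by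
      rw [PadicInt.coe_mul, PadicInt.coe_pow]
    simpa [h2, h3] using this
  refine ⟨b / a * (z : ℚ_[p]), ?_⟩
  have key : c * (z : ℚ_[p]) ^ 3 + (z : ℚ_[p]) = 1 := by linear_combination hzQ
  have : (b / a * (z : ℚ_[p])) ^ 3 + a * (b / a * (z : ℚ_[p]))
      = b * (c * (z : ℚ_[p]) ^ 3 + (z : ℚ_[p])) := by
    rw [hc_def]; field_simp
  rw [this, key, mul_one]
end

section
/- Let p > 3 be a prime with p ≡ 1 (mod 3), and let a, b ∈ ℚ_p be nonzero with |a|_p < |b|_p = 1 and b_0^{(p−1)/3} ≡ 1 (mod p), where b_0 is the first digit of b. Then the equation x³ + ax = b has exactly 3 solutions x in ℤ_p^*, i.e. the set {x ∈ ℚ_p : |x|_p = 1 and x³ + ax = b} has exactly 3 elements. -/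
lemma cube_root_exists {p : ℕ} [Fact p.Prime] (hp : 3 < p) (hp3 : p % 3 = 1)
    {β : ZMod p} (hβ : β ≠ 0) (hres : β ^ ((p - 1) / 3) = 1) :
    ∃ r ω : ZMod p, r ^ 3 = β ∧ r ≠ 0 ∧ ω ^ 3 = 1 ∧ ω ≠ 1 ∧ ω ^ 2 ≠ 1 := by
  obtain ⟨g, hg⟩ := IsCyclic.exists_generator (α := (ZMod p)ˣ)
  have hcard : Nat.card (ZMod p)ˣ = p - 1 := by
    rw [Nat.card_eq_fintype_card, ZMod.card_units_eq_totient, Nat.totient_prime (Fact.out)]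
  have hord : orderOf g = p - 1 := by
    rw [orderOf_eq_card_of_forall_mem_zpowers hg, hcard]
  set m := (p - 1) / 3 with hm
  have h3m : p - 1 = 3 * m := by omega
  have hm0 : 0 < m := by omega
  set u := Units.mk0 β hβ with hu
  have hum : u ^ m = 1 := by
    ext
    push_cast [hu]
    exact hres
  obtain ⟨k, hk⟩ := Subgroup.mem_zpowers_iff.mp (hg u)
  have hdvd : ((p - 1 : ℕ) : ℤ) ∣ k * m := by
    rw [← hord, orderOf_dvd_iff_zpow_eq_one, zpow_mul, hk]
    norm_cast
  have h3k : (3 : ℤ) ∣ k := by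
    have h2 : (3 * m : ℤ) ∣ k * m := by
      convert hdvd using 2
      push_cast [h3m]; ring
    rcases h2 with ⟨c, hc⟩
    refine ⟨c, ?_⟩
    have hmz : (m : ℤ) ≠ 0 := by positivity
    have : k * m = 3 * c * m := by rw [hc]; ring
    exact mul_right_cancel₀ hmz this
  obtain ⟨j, hj⟩ := h3k
  have hr : (g ^ j) ^ (3 : ℤ) = u := by
    rw [← hk, hj, ← zpow_mul, mul_comm]
  have hr' : (g ^ j) ^ (3 : ℕ) = u := by rw [← hr]; norm_cast
  have hw : (g ^ m) ^ (3 : ℕ) = 1 := by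
    rw [← pow_mul, mul_comm, ← h3m, ← hord, pow_orderOf_eq_one]
  refine ⟨((g ^ j : (ZMod p)ˣ) : ZMod p), ((g ^ m : (ZMod p)ˣ) : ZMod p), ?_, Units.ne_zero _, ?_, ?_, ?_⟩
  · rw [← Units.val_pow_eq_pow_val, hr', hu, Units.val_mk0]
  · rw [← Units.val_pow_eq_pow_val, hw, Units.val_one]
  · intro h
    have h1 : g ^ m = 1 := Units.ext h
    have h2 := orderOf_dvd_of_pow_eq_one h1
    rw [hord] at h2
    have := Nat.le_of_dvd hm0 h2
    omega
  · intro h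
    have h1 : g ^ (2 * m) = 1 := by
      rw [mul_comm, pow_mul]
      exact Units.ext (by rw [Units.val_pow_eq_pow_val]; exact h)
    have h2 := orderOf_dvd_of_pow_eq_one h1
    rw [hord] at h2
    have := Nat.le_of_dvd (by omega) h2
    omega

open Polynomial

lemma lift_cube_root {p : ℕ} [hpp : Fact p.Prime] (hp : 3 < p)
    (a' b' : ℤ_[p]) (ha1 : ‖a'‖ < 1)
    (s : ZMod p) (hs : s ≠ 0) (hcb : ‖((s.val : ℤ_[p])) ^ 3 - b'‖ < 1) :
    ∃ z : ℤ_[p], z ^ 3 + a' * z - b' = 0 ∧ ‖z‖ = 1 ∧ ‖z - (s.val : ℤ_[p])‖ < 1 := by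
  set c : ℤ_[p] := (s.val : ℤ_[p]) with hc
  have hc1 : ‖c‖ = 1 := by
    rcases lt_or_eq_of_le (PadicInt.norm_le_one c) with h | h
    · exfalso
      have h1 : (p : ℤ) ∣ (s.val : ℤ) := by
        rw [← PadicInt.norm_int_lt_one_iff_dvd]
        rw [hc] at h
        exact_mod_cast h
      have hdvd : p ∣ s.val := by exact_mod_cast h1
      have h2 : (s.val : ZMod p) = 0 := (ZMod.natCast_eq_zero_iff _ _).mpr hdvd
      rw [ZMod.natCast_val, ZMod.cast_id] at h2
      exact hs h2
    · exact h
  set F : Polynomial ℤ_[p] := X ^ 3 + C a' * X - C b' with hF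
  have hFeval : ∀ t : ℤ_[p], F.eval t = t ^ 3 + a' * t - b' := by
    intro t; simp [hF]
  have hFderiv : F.derivative = C 3 * X ^ 2 + C a' := by
    simp [hF]
    rw [← C_1, ← C_add]; norm_num
  have hFdeval : ∀ t : ℤ_[p], F.derivative.eval t = 3 * t ^ 2 + a' := by
    intro t; rw [hFderiv]; simp
  have h3 : ‖(3 : ℤ_[p])‖ = 1 := by
    rcases lt_or_eq_of_le (PadicInt.norm_le_one (3 : ℤ_[p])) with h | h
    · exfalso
      have h1 : (p : ℤ) ∣ (3 : ℤ) := by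
        rw [← PadicInt.norm_int_lt_one_iff_dvd]
        exact_mod_cast h
      have := Int.le_of_dvd (by norm_num) h1
      omega
    · exact h
  have hd1 : ‖F.derivative.eval c‖ = 1 := by
    rw [hFdeval]
    have h3c : ‖3 * c ^ 2‖ = 1 := by
      rw [norm_mul, h3, norm_pow, hc1]; norm_num
    rw [PadicInt.norm_add_eq_max_of_ne (by rw [h3c]; exact ne_of_gt ha1), h3c]
    exact max_eq_left ha1.le
  have hnorm : ‖F.eval c‖ < ‖F.derivative.eval c‖ ^ 2 := by
    rw [hFeval, hd1, one_pow]
    have : c ^ 3 + a' * c - b' = (c ^ 3 - b') + a' * c := by ring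
    rw [this]
    refine lt_of_le_of_lt (PadicInt.nonarchimedean _ _) ?_
    apply max_lt hcb
    calc ‖a' * c‖ = ‖a'‖ := by rw [norm_mul, hc1, mul_one]
    _ < 1 := ha1
  obtain ⟨z, hz0, hz1, -, -⟩ := hensels_lemma hnorm
  refine ⟨z, by rw [← hFeval]; exact hz0, ?_, by rwa [coe_aeval_eq_eval, hd1] at hz1⟩
  have hzc : ‖z - c‖ < 1 := by rwa [coe_aeval_eq_eval, hd1] at hz1
  have : z = c + (z - c) := by ring
  rw [this, PadicInt.norm_add_eq_max_of_ne (by rw [hc1]; exact ne_of_gt hzc), hc1]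
  exact max_eq_left hzc.le

open Polynomial in
theorem cubic_three_unit_solutions_of_lt (p : ℕ) [Fact p.Prime] (hp : 3 < p)
    (hp3 : p % 3 = 1)
    (a b : ℚ_[p]) (ha : a ≠ 0) (hb : b ≠ 0)
    (hab : ‖a‖ < ‖b‖) (hb1 : ‖b‖ = 1)
    (b0 : ℤ) (hb0 : isFirstDigit p b b0)
    (hres : Int.ModEq (p : ℤ) (b0 ^ ((p - 1) / 3)) 1) :
    {x : ℚ_[p] | ‖x‖ = 1 ∧ x ^ 3 + a * x = b}.ncard = 3 := by
  classical
  have hpI : (1 : ℝ) < p := by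
    exact_mod_cast (Fact.out (p := p.Prime)).one_lt
  have ha1 : ‖a‖ < 1 := by rwa [hb1] at hab
  set a' : ℤ_[p] := ⟨a, ha1.le⟩ with ha'def
  set b' : ℤ_[p] := ⟨b, hb1.le⟩ with hb'def
  have ha1' : ‖a'‖ < 1 := by rw [PadicInt.norm_def]; exact ha1
  have hval : b.valuation = 0 := by
    have h := Padic.norm_eq_zpow_neg_valuation hb
    rw [hb1] at h
    have h2 : (p : ℝ) ^ (-b.valuation) = (p : ℝ) ^ (0 : ℤ) := by
      rw [← h]; norm_num
    have h3 := zpow_right_injective₀ (by positivity) (ne_of_gt hpI) h2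
    omega
  obtain ⟨hb0a, hb0b, hb0c⟩ := hb0
  have hbb0 : ‖b - (b0 : ℚ_[p])‖ < 1 := by
    rw [hval] at hb0c
    simpa using hb0c
  have hβ : ((b0 : ZMod p)) ≠ 0 := by
    intro h
    have h1 := (ZMod.intCast_zmod_eq_zero_iff_dvd _ _).mp h
    have := Int.le_of_dvd (by omega) h1
    omega
  have hresβ : ((b0 : ZMod p)) ^ ((p - 1) / 3) = 1 := by
    have h := (ZMod.intCast_eq_intCast_iff _ _ _).mpr hres
    push_cast at h
    exact h
  obtain ⟨r, ω, hr3, hr0, hw3, hw1, hw2⟩ := cube_root_exists hp hp3 hβ hresβ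
  have hw0 : ω ≠ 0 := by
    intro h; rw [h] at hw3; simp at hw3
  -- the three residues
  have key : ∀ s : ZMod p, s ^ 3 = (b0 : ZMod p) → ‖((s.val : ℤ_[p])) ^ 3 - b'‖ < 1 := by
    intro s hs3
    have h1 : (p : ℤ) ∣ (s.val : ℤ) ^ 3 - b0 := by
      rw [← ZMod.intCast_zmod_eq_zero_iff_dvd]
      push_cast
      rw [ZMod.natCast_val, ZMod.cast_id, hs3]
      ring
    have h2 : ‖((s.val : ℤ_[p])) ^ 3 - (b0 : ℤ_[p])‖ < 1 := by
      have h := (PadicInt.norm_int_lt_one_iff_dvd ((s.val : ℤ) ^ 3 - b0)).mpr h1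
      convert h using 2
      push_cast
      ring
    have h3 : ‖(b0 : ℤ_[p]) - b'‖ < 1 := by
      rw [PadicInt.norm_def, ← norm_neg]
      have hx : -(((b0 : ℤ_[p]) - b' : ℤ_[p]) : ℚ_[p]) = b - (b0 : ℚ_[p]) := by
        push_cast
        ring
      rw [hx]
      exact hbb0
    have hsplit : (s.val : ℤ_[p]) ^ 3 - b' = ((s.val : ℤ_[p]) ^ 3 - (b0 : ℤ_[p])) + ((b0 : ℤ_[p]) - b') := by
      ring
    rw [hsplit]
    exact lt_of_le_of_lt (PadicInt.nonarchimedean _ _) (max_lt h2 h3)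
  -- distinctness of lifted roots
  have hzdist : ∀ s t : ZMod p, s ≠ t → ∀ z w : ℤ_[p],
      ‖z - (s.val : ℤ_[p])‖ < 1 → ‖w - (t.val : ℤ_[p])‖ < 1 → z ≠ w := by
    intro s t hst z w hz hw hzw
    subst hzw
    have h1 : ‖(s.val : ℤ_[p]) - (t.val : ℤ_[p])‖ < 1 := by
      have heq : (s.val : ℤ_[p]) - (t.val : ℤ_[p]) = (z - (t.val : ℤ_[p])) + (-(z - (s.val : ℤ_[p]))) := by
        ring
      rw [heq]
      refine lt_of_le_of_lt (PadicInt.nonarchimedean _ _) (max_lt hw ?_)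
      rwa [norm_neg]
    have h2 : (p : ℤ) ∣ (s.val : ℤ) - (t.val : ℤ) := by
      rw [← PadicInt.norm_int_lt_one_iff_dvd]
      convert h1 using 2
      push_cast
      ring
    have h3 : ((s.val : ℤ) : ZMod p) = ((t.val : ℤ) : ZMod p) := by
      rw [ZMod.intCast_eq_intCast_iff, Int.modEq_iff_dvd]
      have h4 := dvd_neg.mpr h2
      rwa [neg_sub] at h4
    push_cast at h3
    rw [ZMod.natCast_val, ZMod.cast_id, ZMod.natCast_val, ZMod.cast_id] at h3
    exact hst h3
  -- lift the three roots
  have hs1 : r ^ 3 = (b0 : ZMod p) := hr3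
  have hs2 : (ω * r) ^ 3 = (b0 : ZMod p) := by rw [mul_pow, hw3, one_mul, hr3]
  have hs3 : (ω ^ 2 * r) ^ 3 = (b0 : ZMod p) := by
    rw [mul_pow, ← pow_mul, show 2 * 3 = 3 * 2 by ring, pow_mul, hw3, one_pow, one_mul, hr3]
  have hne12 : r ≠ ω * r := fun h => hw1 (mul_right_cancel₀ hr0 (by rw [← h, one_mul]))
  have hne13 : r ≠ ω ^ 2 * r := fun h => hw2 (mul_right_cancel₀ hr0 (by rw [← h, one_mul]))
  have hne23 : ω * r ≠ ω ^ 2 * r := by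
    intro h
    have h1 : ω = ω ^ 2 := mul_right_cancel₀ hr0 h
    have h2 : 1 * ω = ω * ω := by rw [one_mul, ← sq]; exact h1
    exact hw1 (mul_right_cancel₀ hw0 h2).symm
  have hr0' : r ≠ 0 := hr0
  have hwr0 : ω * r ≠ 0 := mul_ne_zero hw0 hr0
  have hw2r0 : ω ^ 2 * r ≠ 0 := mul_ne_zero (pow_ne_zero 2 hw0) hr0
  obtain ⟨z₁, hz₁, hn₁, hd₁⟩ := lift_cube_root hp a' b' ha1' r hr0' (key r hs1)
  obtain ⟨z₂, hz₂, hn₂, hd₂⟩ := lift_cube_root hp a' b' ha1' (ω * r) hwr0 (key _ hs2)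
  obtain ⟨z₃, hz₃, hn₃, hd₃⟩ := lift_cube_root hp a' b' ha1' (ω ^ 2 * r) hw2r0 (key _ hs3)
  have hz12 : z₁ ≠ z₂ := hzdist _ _ hne12 _ _ hd₁ hd₂
  have hz13 : z₁ ≠ z₃ := hzdist _ _ hne13 _ _ hd₁ hd₃
  have hz23 : z₂ ≠ z₃ := hzdist _ _ hne23 _ _ hd₂ hd₃
  -- pass to ℚ_[p]
  set S : Set ℚ_[p] := {x : ℚ_[p] | ‖x‖ = 1 ∧ x ^ 3 + a * x = b} with hS
  have hmem : ∀ z : ℤ_[p], z ^ 3 + a' * z - b' = 0 → ‖z‖ = 1 → ((z : ℚ_[p]) ∈ S) := by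
    intro z h0 h1
    constructor
    · rw [← PadicInt.norm_def]; exact h1
    · have := congrArg (fun t : ℤ_[p] => (t : ℚ_[p])) h0
      push_cast at this
      linear_combination this
  have hm1 := hmem z₁ hz₁ hn₁
  have hm2 := hmem z₂ hz₂ hn₂
  have hm3 := hmem z₃ hz₃ hn₃
  have hx12 : (z₁ : ℚ_[p]) ≠ (z₂ : ℚ_[p]) := fun h => hz12 (Subtype.ext h)
  have hx13 : (z₁ : ℚ_[p]) ≠ (z₃ : ℚ_[p]) := fun h => hz13 (Subtype.ext h)
  have hx23 : (z₂ : ℚ_[p]) ≠ (z₃ : ℚ_[p]) := fun h => hz23 (Subtype.ext h)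
  -- upper bound via polynomial roots
  set f : Polynomial ℚ_[p] := X ^ 3 + C a * X - C b with hf
  have hfmonic : f.Monic := by
    have : f = X ^ 3 + (C a * X - C b) := by rw [hf]; ring
    rw [this]
    apply monic_X_pow_add
    refine lt_of_le_of_lt (degree_sub_le _ _) ?_
    apply max_lt
    · exact lt_of_le_of_lt (degree_C_mul_X_le _) (by norm_num)
    · exact lt_of_le_of_lt degree_C_le (by norm_num)
  have hfne : f ≠ 0 := hfmonic.ne_zero
  have hfdeg : f.natDegree = 3 := by
    rw [hf]
    compute_degree!
  have hsub : S ⊆ (f.roots.toFinset : Set ℚ_[p]) := by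
    intro x hx
    obtain ⟨-, hx2⟩ := hx
    simp only [Multiset.mem_toFinset, Finset.coe_sort_coe, Finset.mem_coe]
    rw [mem_roots hfne]
    rw [IsRoot.def, hf]
    simp only [eval_add, eval_sub, eval_pow, eval_mul, eval_C, eval_X]
    linear_combination hx2
  have hfin : S.Finite := Set.Finite.subset (f.roots.toFinset.finite_toSet) hsub
  have hle : S.ncard ≤ 3 := by
    refine le_trans (Set.ncard_le_ncard hsub (f.roots.toFinset.finite_toSet)) ?_
    rw [Set.ncard_coe_finset]
    refine le_trans (Multiset.toFinset_card_le _) ?_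
    refine le_trans (Polynomial.card_roots' f) ?_
    rw [hfdeg]
  have hge : 3 ≤ S.ncard := by
    have hsub2 : ({(z₁ : ℚ_[p]), (z₂ : ℚ_[p]), (z₃ : ℚ_[p])} : Set ℚ_[p]) ⊆ S := by
      intro x hx
      rcases hx with h | h | h
      · rw [h]; exact hm1
      · rw [h]; exact hm2
      · rw [h]; exact hm3
    have h3 : ({(z₁ : ℚ_[p]), (z₂ : ℚ_[p]), (z₃ : ℚ_[p])} : Set ℚ_[p]).ncard = 3 :=
      Set.ncard_eq_three.mpr ⟨_, _, _, hx12, hx13, hx23, rfl⟩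
    rw [← h3]
    exact Set.ncard_le_ncard hsub2 hfin
  omega
end

section
/- Let p > 3 be a prime and let a, b ∈ ℚ_p be nonzero with |b|_p < |a|_p = 1 and (−a_0)^{(p−1)/2} ≡ 1 (mod p), where a_0 is the first digit of a. Then the equation x³ + ax = b has exactly 2 solutions x in ℤ_p^*, i.e. the set {x ∈ ℚ_p : |x|_p = 1 and x³ + ax = b} has exactly 2 elements. -/
open PadicInt Polynomial

private lemma toZMod_eq_iff' {p : ℕ} [Fact p.Prime] (x y : ℤ_[p]) :
    toZMod x = toZMod y ↔ ‖x - y‖ < 1 := by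
  rw [← sub_eq_zero, ← map_sub, ← RingHom.mem_ker, ker_toZMod,
    IsLocalRing.mem_maximalIdeal, mem_nonunits]

private lemma norm_one_of_toZMod_ne {p : ℕ} [Fact p.Prime] (z : ℤ_[p]) (h : toZMod z ≠ 0) :
    ‖z‖ = 1 := by
  rcases lt_or_eq_of_le z.norm_le_one with h' | h'
  · exact absurd (by
      rwa [← RingHom.mem_ker, ker_toZMod, IsLocalRing.mem_maximalIdeal, mem_nonunits]) h
  · exact h'

/-- Hensel step: for each square root w of -ā mod p there is a unique unit root with that
reduction. -/
private lemma hensel_step {p : ℕ} [Fact p.Prime] (hp : 3 < p) (A B : ℤ_[p])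
    (hB : toZMod B = 0) (w : ZMod p) (hw : w * w = -(toZMod A)) (hw0 : w ≠ 0) :
    ∃ z : ℤ_[p], (toZMod z = w ∧ z ^ 3 + A * z = B) ∧
      ∀ z' : ℤ_[p], z' ^ 3 + A * z' = B → toZMod z' = w → z' = z := by
  set F : ℤ_[p][X] := X ^ 3 + C A * X - C B with hF
  set c : ℤ_[p] := ((w.val : ℕ) : ℤ_[p]) with hc
  have hcw : toZMod c = w := by rw [hc, map_natCast, ZMod.natCast_val, ZMod.cast_id]
  have hevalF : ∀ z : ℤ_[p], F.eval z = z ^ 3 + A * z - B := by intro z; simp [hF]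
  have hevalF' : ∀ z : ℤ_[p], F.derivative.eval z = 3 * z ^ 2 + A := by
    intro z; simp [hF, derivative_pow]
  have h2 : (2 : ZMod p) ≠ 0 := by
    intro h
    have h' := (ZMod.natCast_eq_zero_iff 2 p).mp (by exact_mod_cast h)
    have := Nat.le_of_dvd (by norm_num) h'
    omega
  have h3 : (3 : ZMod p) ≠ 0 := by
    intro h
    have := (ZMod.natCast_eq_zero_iff 3 p).mp (by exact_mod_cast h)
    have := Nat.le_of_dvd (by norm_num) this
    omega
  have hA0 : toZMod A ≠ 0 := by
    intro h
    apply hw0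
    have : w * w = 0 := by rw [hw, h, neg_zero]
    exact (mul_self_eq_zero).mp this
  -- derivative has norm 1 at c
  have hder : toZMod (F.derivative.eval c) = -(2 * toZMod A) := by
    rw [hevalF']
    push_cast [map_add, map_mul, map_pow, map_ofNat, hcw]
    rw [show w ^ 2 = w * w by ring, hw]; ring
  have hderne : toZMod (F.derivative.eval c) ≠ 0 := by
    rw [hder]
    simp only [ne_eq, neg_eq_zero, mul_eq_zero, not_or]
    exact ⟨h2, hA0⟩
  have hdnorm : ‖F.derivative.eval c‖ = 1 := norm_one_of_toZMod_ne _ hderne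
  have hFc : toZMod (F.eval c) = 0 := by
    rw [hevalF]
    rw [map_sub, map_add, map_mul, map_pow, hcw, hB, sub_zero]
    have : w ^ 3 = w * (w * w) := by ring
    rw [this, hw]; ring
  have hnorm : ‖F.eval c‖ < ‖F.derivative.eval c‖ ^ 2 := by
    rw [hdnorm, one_pow]
    rcases lt_or_eq_of_le (F.eval c).norm_le_one with h' | h'
    · exact h'
    · exfalso
      have : ‖F.eval c‖ < 1 := by
        rw [← RingHom.mem_ker, ker_toZMod, IsLocalRing.mem_maximalIdeal, mem_nonunits] at hFc
        exact hFc
      rw [h'] at this; exact lt_irrefl _ this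
  obtain ⟨z, hz0, hzc, _, huniq⟩ := hensels_lemma hnorm
  simp only [coe_aeval_eq_eval] at hz0 hzc huniq
  refine ⟨z, ⟨?_, ?_⟩, ?_⟩
  · rw [← hcw, toZMod_eq_iff' z c]
    rwa [hdnorm] at hzc
  · have h := hevalF z; rw [hz0] at h
    exact sub_eq_zero.mp h.symm
  · intro z' hz' hz'w
    apply huniq
    · rw [hevalF, hz', sub_self]
    · rw [hdnorm, ← toZMod_eq_iff' z' c, hcw]; exact hz'w


theorem cubic_two_unit_solutions_of_gt (p : ℕ) [Fact p.Prime] (hp : 3 < p)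
    (a b : ℚ_[p]) (ha : a ≠ 0) (hb : b ≠ 0)
    (hab : ‖b‖ < ‖a‖) (ha1 : ‖a‖ = 1)
    (a0 : ℤ) (ha0 : isFirstDigit p a a0)
    (hres : Int.ModEq (p : ℤ) ((-a0) ^ ((p - 1) / 2)) 1) :
    {x : ℚ_[p] | ‖x‖ = 1 ∧ x ^ 3 + a * x = b}.ncard = 2 := by
  have hppos : (0:ℝ) < p := by positivity
  have hpprime : p.Prime := Fact.out
  -- valuation of a is 0
  have hval : a.valuation = 0 := by
    have h := Padic.norm_eq_zpow_neg_valuation ha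
    rw [ha1] at h
    have hgt : (1:ℝ) < (p:ℝ) := by exact_mod_cast hpprime.one_lt
    have := zpow_right_injective₀ (by positivity) (ne_of_gt hgt)
      (h.symm.trans (zpow_zero (p:ℝ)).symm)
    omega
  obtain ⟨ha01, ha02, ha03⟩ := ha0
  rw [hval, neg_zero, zpow_zero, mul_one] at ha03
  -- pass to integers
  have hble : ‖b‖ ≤ 1 := le_of_lt (ha1 ▸ hab)
  set A : ℤ_[p] := ⟨a, ha1.le⟩ with hA
  set B : ℤ_[p] := ⟨b, hble⟩ with hB
  have hBnorm : ‖B‖ < 1 := by rw [PadicInt.norm_def]; exact hab.trans_eq ha1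
  have hB0 : PadicInt.toZMod B = 0 := by
    rw [← RingHom.mem_ker, PadicInt.ker_toZMod, IsLocalRing.mem_maximalIdeal, mem_nonunits]
    exact hBnorm
  have hAred : PadicInt.toZMod A = (a0 : ZMod p) := by
    have : PadicInt.toZMod A = PadicInt.toZMod ((a0 : ℤ) : ℤ_[p]) := by
      rw [toZMod_eq_iff']
      rw [PadicInt.norm_def]
      push_cast
      exact ha03
    rwa [map_intCast] at this
  -- residue is a nonzero square
  have hodd : p % 2 = 1 := Nat.odd_iff.mp (hpprime.odd_of_ne_two (by omega))
  have hdiv : (p - 1) / 2 = p / 2 := by omega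
  have hresz : (-(a0 : ZMod p)) ^ (p / 2) = 1 := by
    have := (ZMod.intCast_eq_intCast_iff _ _ _).mpr hres
    push_cast at this
    rwa [hdiv] at this
  have hk : 0 < p / 2 := by omega
  have hne : -(a0 : ZMod p) ≠ 0 := by
    intro h
    rw [h, zero_pow (by omega)] at hresz
    exact zero_ne_one hresz
  obtain ⟨u, hu⟩ := (ZMod.euler_criterion p hne).mpr hresz
  have hu0 : u ≠ 0 := by
    intro h; rw [h, mul_zero] at hu; exact hne hu
  have huu : u * u = -(PadicInt.toZMod A) := by rw [hAred, ← hu]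
  have h2 : (2 : ZMod p) ≠ 0 := by
    intro h
    have h' := (ZMod.natCast_eq_zero_iff 2 p).mp (by exact_mod_cast h)
    have := Nat.le_of_dvd (by norm_num) h'
    omega
  have hneq : u ≠ -u := by
    intro h
    apply hu0
    have : (2:ZMod p) * u = 0 := by rw [two_mul]; nth_rewrite 2 [h]; ring
    exact (mul_eq_zero.mp this).resolve_left h2
  obtain ⟨z₁, ⟨hz₁w, hz₁e⟩, hz₁u⟩ := hensel_step hp A B hB0 u huu hu0
  obtain ⟨z₂, ⟨hz₂w, hz₂e⟩, hz₂u⟩ := hensel_step hp A B hB0 (-u)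
    (by rw [neg_mul_neg]; exact huu) (neg_ne_zero.mpr hu0)
  have hz₁n : ‖z₁‖ = 1 := norm_one_of_toZMod_ne _ (by rw [hz₁w]; exact hu0)
  have hz₂n : ‖z₂‖ = 1 := norm_one_of_toZMod_ne _ (by rw [hz₂w]; exact neg_ne_zero.mpr hu0)
  have hz12 : z₁ ≠ z₂ := by
    intro h; rw [h, hz₂w] at hz₁w; exact hneq hz₁w.symm
  -- the set equals {z₁, z₂}
  have hset : {x : ℚ_[p] | ‖x‖ = 1 ∧ x ^ 3 + a * x = b} =
      {(z₁ : ℚ_[p]), (z₂ : ℚ_[p])} := by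
    ext x
    simp only [Set.mem_setOf_eq, Set.mem_insert_iff, Set.mem_singleton_iff]
    constructor
    · rintro ⟨hx1, hx2⟩
      set Z : ℤ_[p] := ⟨x, hx1.le⟩ with hZ
      have hZe : Z ^ 3 + A * Z = B := by
        apply Subtype.coe_injective
        push_cast
        exact hx2
      have hZn : PadicInt.toZMod Z ≠ 0 := by
        intro h
        rw [← RingHom.mem_ker, PadicInt.ker_toZMod, IsLocalRing.mem_maximalIdeal,
          mem_nonunits, PadicInt.norm_def] at h
        rw [hx1] at h; exact lt_irrefl _ h
      set t := PadicInt.toZMod Z with ht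
      have hteq : t * (t * t + PadicInt.toZMod A) = 0 := by
        have := congrArg PadicInt.toZMod hZe
        rw [map_add, map_mul, map_pow, hB0] at this
        rw [← this]; ring
      have ht2 : t * t = -(PadicInt.toZMod A) := by
        exact eq_neg_of_add_eq_zero_left ((mul_eq_zero.mp hteq).resolve_left hZn)
      have : (t - u) * (t + u) = 0 := by
        rw [sub_mul, mul_add, mul_add, ht2, ← huu]; ring
      rcases mul_eq_zero.mp this with h | h
      · left
        have : Z = z₁ := hz₁u Z hZe (by rw [← ht, sub_eq_zero.mp h])
        rw [← this]
      · right
        have : Z = z₂ := hz₂u Z hZe (by rw [← ht, eq_neg_of_add_eq_zero_left h])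
        rw [← this]
    · rintro (h | h) <;> subst h
      · refine ⟨hz₁n, ?_⟩
        have := congrArg (Subtype.val : ℤ_[p] → ℚ_[p]) hz₁e
        push_cast at this
        convert this using 2 <;> rw [hA]
      · refine ⟨hz₂n, ?_⟩
        have := congrArg (Subtype.val : ℤ_[p] → ℚ_[p]) hz₂e
        push_cast at this
        convert this using 2 <;> rw [hA]
  rw [hset]
  exact Set.ncard_pair (fun h => hz12 (Subtype.coe_injective h))
end

section
/- Let p > 3 be a prime and let a, b ∈ ℚ_p be nonzero with |a|_p = |b|_p = 1. Set D = −4a³ − 27b² and suppose 0 < |D|_p < 1, the p-adic valuation v_p(D) is even, and d_0^{(p−1)/2} ≡ 1 (mod p), where d_0 is the first digit of D. Then the equation x³ + ax = b has exactly 3 solutions x in ℤ_p^*, i.e. the set {x ∈ ℚ_p : |x|_p = 1 and x³ + ax = b} has exactly 3 elements. -/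
open Polynomial in
private lemma aux_cubic_root {p : ℕ} [Fact p.Prime] {a b c : ℚ_[p]}
    (ha : ‖a‖ ≤ 1) (hb : ‖b‖ ≤ 1) (hc : ‖c‖ ≤ 1)
    (h : ‖c ^ 3 + a * c - b‖ < ‖3 * c ^ 2 + a‖ ^ 2) :
    ∃ z : ℚ_[p], ‖z‖ ≤ 1 ∧ z ^ 3 + a * z = b ∧ ‖z - c‖ < ‖3 * c ^ 2 + a‖ := by
  set A : ℤ_[p] := ⟨a, ha⟩
  set B : ℤ_[p] := ⟨b, hb⟩
  set C0 : ℤ_[p] := ⟨c, hc⟩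
  set F : Polynomial ℤ_[p] := X ^ 3 + C A * X - C B with hF
  have hev : F.eval C0 = C0 ^ 3 + A * C0 - B := by simp [hF]
  have hdev : F.derivative.eval C0 = 3 * C0 ^ 2 + A := by
    simp [hF]; norm_num
  have hcoe1 : ((C0 ^ 3 + A * C0 - B : ℤ_[p]) : ℚ_[p]) = c ^ 3 + a * c - b := by
    push_cast; rfl
  have hcoe2 : ((3 * C0 ^ 2 + A : ℤ_[p]) : ℚ_[p]) = 3 * c ^ 2 + a := by
    push_cast; rfl
  have hnorm : ‖F.eval C0‖ < ‖F.derivative.eval C0‖ ^ 2 := by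
    rw [hev, hdev, PadicInt.norm_def, PadicInt.norm_def, hcoe1, hcoe2]; exact h
  obtain ⟨z, hz0, hz1, -, -⟩ := hensels_lemma hnorm
  refine ⟨(z : ℚ_[p]), z.2, ?_, ?_⟩
  · have : ((z ^ 3 + A * z - B : ℤ_[p]) : ℚ_[p]) = 0 := by
      rw [show (z ^ 3 + A * z - B : ℤ_[p]) = F.eval z by simp [hF], ← Polynomial.coe_aeval_eq_eval, hz0]; rfl
    push_cast at this
    linear_combination this
  · rw [Polynomial.coe_aeval_eq_eval, hdev] at hz1
    have e1 : ‖(z : ℚ_[p]) - c‖ = ‖z - C0‖ := by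
      rw [PadicInt.norm_def]; push_cast; rfl
    have e2 : ‖(3 : ℤ_[p]) * C0 ^ 2 + A‖ = ‖3 * c ^ 2 + a‖ := by
      rw [PadicInt.norm_def, hcoe2]
    rw [e1, ← e2]; exact hz1


open Polynomial in
private lemma aux_sqrt {p : ℕ} [Fact p.Prime] {u : ℚ_[p]} {t : ℤ}
    (hu : ‖u‖ ≤ 1)
    (h : ‖(t : ℚ_[p]) ^ 2 - u‖ < ‖2 * (t : ℚ_[p])‖ ^ 2) :
    ∃ s : ℚ_[p], s ^ 2 = u := by
  set U : ℤ_[p] := ⟨u, hu⟩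
  set T : ℤ_[p] := (t : ℤ_[p])
  set F : Polynomial ℤ_[p] := X ^ 2 - C U with hF
  have hev : F.eval T = T ^ 2 - U := by simp [hF]
  have hdev : F.derivative.eval T = 2 * T := by simp [hF]; norm_num
  have hcoe1 : ((T ^ 2 - U : ℤ_[p]) : ℚ_[p]) = (t : ℚ_[p]) ^ 2 - u := by push_cast; rfl
  have hcoe2 : ((2 * T : ℤ_[p]) : ℚ_[p]) = 2 * (t : ℚ_[p]) := by push_cast; rfl
  have hnorm : ‖F.eval T‖ < ‖F.derivative.eval T‖ ^ 2 := by
    rw [hev, hdev, PadicInt.norm_def, PadicInt.norm_def, hcoe1, hcoe2]; exact h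
  obtain ⟨z, hz0, -, -, -⟩ := hensels_lemma hnorm
  refine ⟨(z : ℚ_[p]), ?_⟩
  have : ((z ^ 2 - U : ℤ_[p]) : ℚ_[p]) = 0 := by
    rw [show (z ^ 2 - U : ℤ_[p]) = F.eval z by simp [hF], ← Polynomial.coe_aeval_eq_eval, hz0]; rfl
  push_cast at this
  have h2 : (z : ℚ_[p]) ^ 2 - u = 0 := this
  linear_combination h2

private lemma aux_root_norm_one {p : ℕ} [Fact p.Prime] {a b x : ℚ_[p]}
    (ha1 : ‖a‖ = 1) (hb1 : ‖b‖ = 1) (hx : x ^ 3 + a * x = b) : ‖x‖ = 1 := by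
  rcases lt_trichotomy ‖x‖ 1 with h | h | h
  · exfalso
    have h3 : ‖x ^ 3‖ < 1 := by
      rw [norm_pow]
      exact pow_lt_one₀ (norm_nonneg x) h (by norm_num)
    have hax : ‖a * x‖ < 1 := by rw [norm_mul, ha1, one_mul]; exact h
    have : ‖x ^ 3 + a * x‖ < 1 :=
      lt_of_le_of_lt (Padic.nonarchimedean _ _) (max_lt h3 hax)
    rw [hx, hb1] at this; exact lt_irrefl _ this
  · exact h
  · exfalso
    have h3 : ‖a * x‖ < ‖x ^ 3‖ := by
      rw [norm_mul, ha1, one_mul, norm_pow]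
      calc ‖x‖ = ‖x‖ ^ 1 := (pow_one _).symm
      _ < ‖x‖ ^ 3 := by
        exact pow_lt_pow_right₀ h (by norm_num)
    have : ‖x ^ 3 + a * x‖ = ‖x ^ 3‖ := by
      rw [Padic.add_eq_max_of_ne (ne_of_lt h3).symm]
      exact max_eq_left h3.le
    rw [hx, hb1, norm_pow] at this
    have : (1 : ℝ) < 1 := by
      calc (1:ℝ) < ‖x‖ ^ 3 := one_lt_pow₀ h (by norm_num)
      _ = 1 := this.symm
    exact lt_irrefl _ this


theorem cubic_three_unit_solutions_of_small_discriminant (p : ℕ) [Fact p.Prime]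
    (hp : 3 < p) (a b : ℚ_[p]) (ha : a ≠ 0) (hb : b ≠ 0)
    (ha1 : ‖a‖ = 1) (hb1 : ‖b‖ = 1)
    (hD0 : 0 < ‖-4 * a ^ 3 - 27 * b ^ 2‖) (hD1 : ‖-4 * a ^ 3 - 27 * b ^ 2‖ < 1)
    (hDval : (2 : ℤ) ∣ (-4 * a ^ 3 - 27 * b ^ 2 : ℚ_[p]).valuation)
    (d0 : ℤ) (hd0 : isFirstDigit p (-4 * a ^ 3 - 27 * b ^ 2) d0)
    (hres : Int.ModEq (p : ℤ) (d0 ^ ((p - 1) / 2)) 1) :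
    {x : ℚ_[p] | ‖x‖ = 1 ∧ x ^ 3 + a * x = b}.ncard = 3 := by
  have hprime : p.Prime := Fact.out
  have hpQne : (p : ℚ_[p]) ≠ 0 := Nat.cast_ne_zero.mpr hprime.ne_zero
  have hpRne : (p : ℝ) ≠ 0 := Nat.cast_ne_zero.mpr hprime.ne_zero
  set D : ℚ_[p] := -4 * a ^ 3 - 27 * b ^ 2 with hD
  have hDne : D ≠ 0 := by
    intro h; rw [h, norm_zero] at hD0; exact lt_irrefl _ hD0
  obtain ⟨m, hm⟩ := hDval
  obtain ⟨hd1, hd2, hd3⟩ := hd0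
  set u : ℚ_[p] := D * (p : ℚ_[p]) ^ (-D.valuation) with hu
  have hDnorm : ‖D‖ = (p : ℝ) ^ (-D.valuation) := Padic.norm_eq_zpow_neg_valuation hDne
  have hunorm : ‖u‖ = 1 := by
    rw [hu, norm_mul, Padic.norm_p_zpow, hDnorm, neg_neg, ← zpow_add₀ hpRne]
    simp
  -- facts about d0
  have hpd0 : ¬ ((p : ℤ) ∣ d0) := by
    intro hdvd
    have := Int.le_of_dvd (by omega) hdvd
    omega
  have hd0z : (d0 : ZMod p) ≠ 0 := by
    rw [Ne, ZMod.intCast_zmod_eq_zero_iff_dvd]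
    exact hpd0
  have hodd : Odd p := hprime.odd_of_ne_two (by omega)
  have hhalf : (p - 1) / 2 = p / 2 := by
    obtain ⟨k, hk⟩ := hodd; omega
  have heuler : (d0 : ZMod p) ^ (p / 2) = 1 := by
    have h1 : ((d0 ^ ((p - 1) / 2) : ℤ) : ZMod p) = ((1 : ℤ) : ZMod p) :=
      (ZMod.intCast_eq_intCast_iff _ _ _).mpr hres
    push_cast at h1
    rw [← hhalf]
    exact h1
  obtain ⟨y, hy⟩ := (ZMod.euler_criterion p hd0z).mpr heuler
  set t : ℤ := (y.val : ℤ) with ht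
  have hty : ((t : ℤ) : ZMod p) = y := by
    rw [ht]; exact_mod_cast ZMod.natCast_rightInverse y
  have ht2 : (p : ℤ) ∣ t ^ 2 - d0 := by
    rw [← ZMod.intCast_zmod_eq_zero_iff_dvd]
    have hc : ((t ^ 2 - d0 : ℤ) : ZMod p) = ((t : ℤ) : ZMod p) ^ 2 - ((d0 : ℤ) : ZMod p) := by
      push_cast; ring
    rw [hc, hty, hy]; ring
  have htd : ‖(t : ℚ_[p]) ^ 2 - (d0 : ℚ_[p])‖ < 1 := by
    have hcast : ((t ^ 2 - d0 : ℤ) : ℚ_[p]) = (t : ℚ_[p]) ^ 2 - (d0 : ℚ_[p]) := by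
      push_cast; ring
    rw [← hcast, Padic.norm_intCast_lt_one_iff]
    exact ht2
  have hdu : ‖(d0 : ℚ_[p]) - u‖ < 1 := by
    rw [← norm_neg, neg_sub]
    exact hd3
  have htu : ‖(t : ℚ_[p]) ^ 2 - u‖ < 1 := by
    have hsplit : (t : ℚ_[p]) ^ 2 - u = ((t : ℚ_[p]) ^ 2 - (d0 : ℚ_[p])) + ((d0 : ℚ_[p]) - u) := by
      ring
    rw [hsplit]
    exact lt_of_le_of_lt (Padic.nonarchimedean _ _) (max_lt htd hdu)
  have htnorm : ‖(t : ℚ_[p])‖ = 1 := by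
    refine le_antisymm (Padic.norm_int_le_one t) ?_
    by_contra hlt
    push_neg at hlt
    have hdvdt : (p : ℤ) ∣ t := (Padic.norm_intCast_lt_one_iff (k := t)).mp hlt
    have hd : (p : ℤ) ∣ d0 := by
      have h1 : (p : ℤ) ∣ t ^ 2 := dvd_pow hdvdt two_ne_zero
      have := dvd_sub h1 ht2
      simpa using this
    exact hpd0 hd
  have h2norm : ‖(2 : ℚ_[p])‖ = 1 := by
    have hc : ((2 : ℤ) : ℚ_[p]) = 2 := by push_cast; ring
    rw [← hc]
    refine le_antisymm (Padic.norm_int_le_one 2) ?_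
    by_contra hlt
    push_neg at hlt
    have := (Padic.norm_intCast_lt_one_iff (k := 2)).mp hlt
    have := Int.le_of_dvd (by norm_num) this
    omega
  obtain ⟨s, hs⟩ := aux_sqrt hunorm.le
    (by rw [norm_mul, h2norm, htnorm, one_mul, one_pow]; exact htu)
  set σ : ℚ_[p] := s * (p : ℚ_[p]) ^ m with hσ
  have hσ2 : σ ^ 2 = D := by
    have hexp : σ ^ 2 = s ^ 2 * ((p : ℚ_[p]) ^ m * (p : ℚ_[p]) ^ m) := by ring
    rw [hexp, hs, hu, ← zpow_add₀ hpQne, mul_assoc, ← zpow_add₀ hpQne,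
      show -D.valuation + (m + m) = 0 by omega, zpow_zero, mul_one]
  -- the cubic
  have h3norm : ‖(3 : ℚ_[p])‖ = 1 := by
    have hc : ((3 : ℤ) : ℚ_[p]) = 3 := by push_cast; ring
    rw [← hc]
    refine le_antisymm (Padic.norm_int_le_one 3) ?_
    by_contra hlt
    push_neg at hlt
    have := (Padic.norm_intCast_lt_one_iff (k := 3)).mp hlt
    have := Int.le_of_dvd (by norm_num) this
    omega
  set c : ℚ_[p] := -3 * b / a with hc
  have hcnorm : ‖c‖ = 1 := by
    rw [hc, norm_div, norm_mul, hb1, ha1, show (-3 : ℚ_[p]) = -(3) by ring, norm_neg, h3norm]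
    norm_num
  have hfc : c ^ 3 + a * c - b = b * D / a ^ 3 := by
    rw [hc, hD]; field_simp; ring
  have hfcnorm : ‖c ^ 3 + a * c - b‖ = ‖D‖ := by
    rw [hfc, norm_div, norm_mul, hb1, norm_pow, ha1]
    norm_num
  have hfc2 : 3 * c ^ 2 + a = -(D / a ^ 2) + -(3 * a) := by
    rw [hc, hD]; field_simp; ring
  have hdercnorm : ‖3 * c ^ 2 + a‖ = 1 := by
    have hn1 : ‖-(D / a ^ 2)‖ = ‖D‖ := by
      rw [norm_neg, norm_div, norm_pow, ha1]; norm_num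
    have hn2 : ‖-(3 * a)‖ = 1 := by
      rw [norm_neg, norm_mul, h3norm, ha1, one_mul]
    rw [hfc2, Padic.add_eq_max_of_ne (by rw [hn1, hn2]; exact ne_of_lt hD1), hn1, hn2]
    exact max_eq_right (le_of_lt hD1)
  obtain ⟨z, hznorm, hz, hzc⟩ := aux_cubic_root ha1.le hb1.le hcnorm.le
    (by rw [hfcnorm, hdercnorm, one_pow]; exact hD1)
  have hkey : (-3 * z ^ 2 - 4 * a) * (3 * z ^ 2 + a) ^ 2 = D := by
    rw [hD]; linear_combination (-27 * (b + z ^ 3 + a * z)) * hz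
  have hfz : 3 * z ^ 2 + a ≠ 0 := by
    intro h0
    apply hDne
    rw [← hkey, h0]; ring
  set e : ℚ_[p] := σ / (3 * z ^ 2 + a) with he'
  have he : e ^ 2 = -3 * z ^ 2 - 4 * a := by
    rw [he', div_pow, hσ2, ← hkey]
    field_simp
  have he0 : e ≠ 0 := by
    intro h0
    apply hDne
    rw [← hkey, ← he, h0]; ring
  set r1 : ℚ_[p] := (-z + e) / 2 with hr1'
  set r2 : ℚ_[p] := (-z - e) / 2 with hr2'
  have hr1 : r1 ^ 3 + a * r1 = b := by
    rw [hr1']; linear_combination ((-3 * z + e) / 8) * he + hz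
  have hr2 : r2 ^ 3 + a * r2 = b := by
    rw [hr2']; linear_combination ((-3 * z - e) / 8) * he + hz
  have hzr1 : z ≠ r1 := by
    intro h
    have h3z : e = 3 * z := by rw [hr1'] at h; linear_combination (-2 : ℚ_[p]) * h
    exact hfz (by linear_combination he / 4 - ((e + 3 * z) / 4) * h3z)
  have hzr2 : z ≠ r2 := by
    intro h
    have h3z : e = -3 * z := by rw [hr2'] at h; linear_combination (2 : ℚ_[p]) * h
    exact hfz (by linear_combination he / 4 - ((e - 3 * z) / 4) * h3z)
  have hr12 : r1 ≠ r2 := by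
    intro h
    rw [hr1', hr2'] at h
    exact he0 (by linear_combination h)
  have hSeq : {x : ℚ_[p] | ‖x‖ = 1 ∧ x ^ 3 + a * x = b} = {z, r1, r2} := by
    ext x
    simp only [Set.mem_setOf_eq, Set.mem_insert_iff, Set.mem_singleton_iff]
    constructor
    · rintro ⟨-, hx⟩
      have hfact : (x - z) * (x ^ 2 + z * x + (z ^ 2 + a)) = 0 := by
        linear_combination hx - hz
      rcases mul_eq_zero.mp hfact with h1 | h2
      · exact Or.inl (sub_eq_zero.mp h1)
      · have hq : (2 * x + z - e) * (2 * x + z + e) = 0 := by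
          linear_combination 4 * h2 - he
        rcases mul_eq_zero.mp hq with h3 | h3
        · refine Or.inr (Or.inl ?_)
          rw [hr1']; linear_combination h3 / 2
        · refine Or.inr (Or.inr ?_)
          rw [hr2']; linear_combination h3 / 2
    · rintro (rfl | rfl | rfl)
      · exact ⟨aux_root_norm_one ha1 hb1 hz, hz⟩
      · exact ⟨aux_root_norm_one ha1 hb1 hr1, hr1⟩
      · exact ⟨aux_root_norm_one ha1 hb1 hr2, hr2⟩
  rw [hSeq]
  exact Set.ncard_eq_three.mpr ⟨z, r1, r2, hzr1, hzr2, hr12, rfl⟩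
end
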